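/- arXiv:math/0610509 — 7 statements merged into one kernel-verified Lean document; each statement's English description precedes it below -/
import Mathlib

section
/- If X is a real random variable with a density (its law is absolutely continuous with respect to Lebesgue measure), then the fractional part {nX} converges in distribution, as n → ∞, to the uniform distribution on [0,1]. -/
open MeasureTheory Filter Set

open scoped Real Topology

namespace FractUniform

/-- Riemann-Lebesgue for the characteristic function of an absolutely continuous
probability measure. -/
lemma charfun_cocompact (μ : Measure ℝ) [IsProbabilityMeasure μ] (hac : μ ≪ volume) :
    Tendsto (fun ξ : ℝ => ∫ x, Complex.exp ((2 * π * ξ * x : ℝ) * Complex.I) ∂μ)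
      (cocompact ℝ) (𝓝 0) := by
  set F : ℝ → ℂ := fun x => ((μ.rnDeriv volume x).toReal : ℂ) with hF
  have key : ∀ ξ : ℝ, ∫ x, Complex.exp ((2 * π * ξ * x : ℝ) * Complex.I) ∂μ
      = FourierTransform.fourier F (-ξ) := by
    intro ξ
    rw [Real.fourier_real_eq_integral_exp_smul]
    rw [← MeasureTheory.integral_rnDeriv_smul hac
      (f := fun x : ℝ => Complex.exp ((2 * π * ξ * x : ℝ) * Complex.I))]
    congr 1
    ext v
    have he : (-2 * π * v * -ξ) = 2 * π * ξ * v := by ring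
    simp only [hF, smul_eq_mul, Complex.real_smul, he]
    ring
  have h1 := Real.zero_at_infty_fourier F
  have hneg : Tendsto (fun ξ : ℝ => -ξ) (cocompact ℝ) (cocompact ℝ) :=
    ((Homeomorph.neg ℝ).map_cocompact).le
  exact Tendsto.congr (fun ξ => (key ξ).symm) (h1.comp hneg)

lemma fourier_mu_tendsto (μ : Measure ℝ) [IsProbabilityMeasure μ] (hac : μ ≪ volume)
    (m : ℤ) (hm : m ≠ 0) :
    Tendsto (fun n : ℕ => ∫ x : ℝ, (fourier m (((n : ℝ) * x : ℝ) : AddCircle (1:ℝ)) : ℂ) ∂μ)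
      atTop (𝓝 0) := by
  have hξ : Tendsto (fun n : ℕ => (m : ℝ) * n) atTop (cocompact ℝ) := by
    rw [cocompact_eq_atBot_atTop]
    rcases lt_or_gt_of_ne (show (m:ℝ) ≠ 0 by exact_mod_cast hm) with h | h
    · exact (tendsto_natCast_atTop_atTop.const_mul_atTop_of_neg h).mono_right le_sup_left
    · exact (tendsto_natCast_atTop_atTop.const_mul_atTop h).mono_right le_sup_right
  have := (charfun_cocompact μ hac).comp hξ
  refine this.congr fun n => ?_
  simp only [Function.comp_apply]
  congr 1
  ext x
  rw [fourier_coe_apply]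
  congr 1
  push_cast
  ring

lemma volume_addCircle_eq : (volume : Measure (AddCircle (1:ℝ))) = AddCircle.haarAddCircle := by
  rw [AddCircle.volume_eq_smul_haarAddCircle]; simp

instance : IsProbabilityMeasure (volume : Measure (AddCircle (1:ℝ))) := by
  rw [volume_addCircle_eq]; infer_instance

lemma integrable_comp_mk (μ : Measure ℝ) [IsProbabilityMeasure μ]
    (G : C(AddCircle (1:ℝ), ℂ)) (n : ℕ) :
    Integrable (fun x : ℝ => G (((n : ℝ) * x : ℝ) : AddCircle (1:ℝ))) μ := by
  have hc : Continuous fun x : ℝ => G (((n : ℝ) * x : ℝ) : AddCircle (1:ℝ)) :=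
    G.continuous.comp ((AddCircle.continuous_mk' (1:ℝ)).comp (continuous_const.mul continuous_id))
  exact ⟨hc.aestronglyMeasurable,
    HasFiniteIntegral.of_bounded (C := ‖G‖) (Eventually.of_forall fun x => G.norm_coe_le_norm _)⟩

lemma integrable_circle (G : C(AddCircle (1:ℝ), ℂ)) :
    Integrable (fun y => G y) (volume : Measure (AddCircle (1:ℝ))) :=
  ⟨G.continuous.aestronglyMeasurable,
    HasFiniteIntegral.of_bounded (C := ‖G‖) (Eventually.of_forall fun y => G.norm_coe_le_norm _)⟩

lemma integral_fourier_circle (m : ℤ) (hm : m ≠ 0) :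
    ∫ y, (fourier m y : ℂ) ∂(volume : Measure (AddCircle (1:ℝ))) = 0 := by
  rw [← AddCircle.integral_preimage (1:ℝ) 0 fun y => (fourier m y : ℂ)]
  rw [zero_add, ← intervalIntegral.integral_of_le zero_le_one]
  have hc : (2 * (π:ℂ) * Complex.I * m) ≠ 0 := by
    apply mul_ne_zero
    apply mul_ne_zero
    apply mul_ne_zero
    · norm_num
    · exact_mod_cast Real.pi_ne_zero
    · exact Complex.I_ne_zero
    · exact_mod_cast hm
  have heq : ∀ x : ℝ, (fourier m ((x : ℝ) : AddCircle (1:ℝ)) : ℂ)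
      = Complex.exp ((2 * (π:ℂ) * Complex.I * m) * x) := by
    intro x
    rw [fourier_coe_apply]
    congr 1
    push_cast
    ring
  rw [intervalIntegral.integral_congr (g := fun x : ℝ => Complex.exp ((2 * (π:ℂ) * Complex.I * m) * x))
    (fun x _ => heq x)]
  rw [integral_exp_mul_complex hc]
  have h1 : Complex.exp (2 * (π:ℂ) * Complex.I * m * (1:ℝ)) = 1 := by
    rw [show (2 * (π:ℂ) * Complex.I * m * (1:ℝ)) = (m : ℂ) * (2 * π * Complex.I) by push_cast; ring]
    exact Complex.exp_int_mul_two_pi_mul_I m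
  rw [h1]
  norm_num

lemma circle_tendsto (μ : Measure ℝ) [IsProbabilityMeasure μ] (hac : μ ≪ volume)
    (G : C(AddCircle (1:ℝ), ℂ)) :
    Tendsto (fun n : ℕ => ∫ x : ℝ, G (((n : ℝ) * x : ℝ) : AddCircle (1:ℝ)) ∂μ) atTop
      (𝓝 (∫ y, G y ∂(volume : Measure (AddCircle (1:ℝ))))) := by
  set P : C(AddCircle (1:ℝ), ℂ) → Prop := fun H =>
    Tendsto (fun n : ℕ => ∫ x : ℝ, H (((n : ℝ) * x : ℝ) : AddCircle (1:ℝ)) ∂μ) atTop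
      (𝓝 (∫ y, H y ∂(volume : Measure (AddCircle (1:ℝ))))) with hP
  have hbase : ∀ m : ℤ, P (fourier m) := by
    intro m
    by_cases hm : m = 0
    · subst hm
      simp only [P, fourier_zero]
      simp [measure_univ]
    · have h0 := fourier_mu_tendsto μ hac m hm
      rw [hP]
      simp only [integral_fourier_circle m hm]
      exact h0
  have hspan : ∀ H ∈ Submodule.span ℂ (Set.range (@fourier 1)), P H := by
    intro H hH
    induction hH using Submodule.span_induction with
    | mem x hx => obtain ⟨m, rfl⟩ := hx; exact hbase m
    | zero =>
      simp only [P]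
      simp only [ContinuousMap.coe_zero, Pi.zero_apply, integral_zero]
      exact tendsto_const_nhds
    | add x y hx hy Px Py =>
      have : P x ∧ P y := ⟨Px, Py⟩
      simp only [P, ContinuousMap.coe_add, Pi.add_apply] at this ⊢
      have h1 : ∀ n : ℕ, ∫ a : ℝ, (x (((n : ℝ) * a : ℝ) : AddCircle (1:ℝ))
          + y (((n : ℝ) * a : ℝ) : AddCircle (1:ℝ))) ∂μ
          = (∫ a : ℝ, x (((n : ℝ) * a : ℝ) : AddCircle (1:ℝ)) ∂μ)
            + ∫ a : ℝ, y (((n : ℝ) * a : ℝ) : AddCircle (1:ℝ)) ∂μ :=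
        fun n => integral_add (integrable_comp_mk μ x n) (integrable_comp_mk μ y n)
      have h2 : ∫ b, (x b + y b) ∂(volume : Measure (AddCircle (1:ℝ)))
          = (∫ b, x b ∂(volume : Measure (AddCircle (1:ℝ))))
            + ∫ b, y b ∂(volume : Measure (AddCircle (1:ℝ))) :=
        integral_add (integrable_circle x) (integrable_circle y)
      rw [h2]
      exact Tendsto.congr (fun n => (h1 n).symm) (this.1.add this.2)
    | smul c x hx Px =>
      simp only [P, ContinuousMap.coe_smul, Pi.smul_apply, integral_smul] at Px ⊢
      exact Px.const_smul c
  -- closure argument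
  have hG : G ∈ closure ((Submodule.span ℂ (Set.range (@fourier 1)) : Submodule ℂ _) : Set _) := by
    have : G ∈ (Submodule.span ℂ (Set.range (@fourier 1))).topologicalClosure := by
      rw [span_fourier_closure_eq_top]; trivial
    rw [← Submodule.topologicalClosure_coe]; exact this
  rw [Metric.tendsto_atTop]
  intro ε hε
  obtain ⟨H, hHmem, hHd⟩ := Metric.mem_closure_iff.mp hG (ε / 4) (by positivity)
  have PH := hspan H hHmem
  rw [hP, Metric.tendsto_atTop] at PH
  obtain ⟨N, hN⟩ := PH (ε / 4) (by positivity)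
  refine ⟨N, fun n hn => ?_⟩
  have key : ∀ (ν : Measure (AddCircle (1:ℝ))) (hν : IsProbabilityMeasure ν), True := fun _ _ => trivial
  have d1 : dist (∫ x : ℝ, G (((n : ℝ) * x : ℝ) : AddCircle (1:ℝ)) ∂μ)
      (∫ x : ℝ, H (((n : ℝ) * x : ℝ) : AddCircle (1:ℝ)) ∂μ) ≤ ε / 4 := by
    rw [dist_eq_norm, ← integral_sub (integrable_comp_mk μ G n) (integrable_comp_mk μ H n)]
    calc ‖∫ x : ℝ, (G (((n : ℝ) * x : ℝ) : AddCircle (1:ℝ))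
          - H (((n : ℝ) * x : ℝ) : AddCircle (1:ℝ))) ∂μ‖
        ≤ dist G H * (μ Set.univ).toReal := by
          apply norm_integral_le_of_norm_le_const
          refine Eventually.of_forall fun x => ?_
          rw [← dist_eq_norm]
          exact ContinuousMap.dist_apply_le_dist _
      _ ≤ ε / 4 := by
          rw [measure_univ]
          simp only [ENNReal.toReal_one, mul_one]
          exact le_of_lt hHd
  have d3 : dist (∫ y, H y ∂(volume : Measure (AddCircle (1:ℝ))))
      (∫ y, G y ∂(volume : Measure (AddCircle (1:ℝ)))) ≤ ε / 4 := by
    rw [dist_eq_norm, ← integral_sub (integrable_circle H) (integrable_circle G)]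
    calc ‖∫ y, (H y - G y) ∂(volume : Measure (AddCircle (1:ℝ)))‖
        ≤ dist H G * ((volume : Measure (AddCircle (1:ℝ))) Set.univ).toReal := by
          apply norm_integral_le_of_norm_le_const
          refine Eventually.of_forall fun y => ?_
          rw [← dist_eq_norm]
          exact ContinuousMap.dist_apply_le_dist _
      _ ≤ ε / 4 := by
          rw [measure_univ]
          simp only [ENNReal.toReal_one, mul_one]
          rw [dist_comm]
          exact le_of_lt hHd
  have d2 : dist (∫ x : ℝ, H (((n : ℝ) * x : ℝ) : AddCircle (1:ℝ)) ∂μ)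
      (∫ y, H y ∂(volume : Measure (AddCircle (1:ℝ)))) < ε / 4 := hN n hn
  have tri := dist_triangle4 (∫ x : ℝ, G (((n : ℝ) * x : ℝ) : AddCircle (1:ℝ)) ∂μ)
    (∫ x : ℝ, H (((n : ℝ) * x : ℝ) : AddCircle (1:ℝ)) ∂μ)
    (∫ y, H y ∂(volume : Measure (AddCircle (1:ℝ))))
    (∫ y, G y ∂(volume : Measure (AddCircle (1:ℝ))))
  linarith

lemma coe_int_addCircle (k : ℤ) : (((k : ℝ)) : AddCircle (1:ℝ)) = 0 := by
  refine (QuotientAddGroup.eq_zero_iff _).mpr ?_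
  exact ⟨k, by simp⟩

lemma coe_fract_addCircle (y : ℝ) :
    ((Int.fract y : ℝ) : AddCircle (1:ℝ)) = ((y : ℝ) : AddCircle (1:ℝ)) := by
  have : (y : ℝ) = Int.fract y + (⌊y⌋ : ℝ) := by rw [add_comm]; exact (Int.floor_add_fract y).symm
  calc ((Int.fract y : ℝ) : AddCircle (1:ℝ))
      = ((Int.fract y : ℝ) : AddCircle (1:ℝ)) + (((⌊y⌋ : ℝ)) : AddCircle (1:ℝ)) := by
        rw [coe_int_addCircle, add_zero]
    _ = ((y : ℝ) : AddCircle (1:ℝ)) := by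
        rw [← QuotientAddGroup.mk_add, ← this]

lemma periodic_tendsto (μ : Measure ℝ) [IsProbabilityMeasure μ] (hac : μ ≪ volume)
    (h : ℝ → ℝ) (hc : Continuous h) (hper : h 0 = h 1) :
    Tendsto (fun n : ℕ => ∫ x, h (Int.fract ((n : ℝ) * x)) ∂μ) atTop
      (𝓝 (∫ u in Set.Icc (0:ℝ) 1, h u)) := by
  set f : ℝ → ℂ := fun u => (h u : ℂ) with hfdef
  have hf0 : f 0 = f 1 := by simp [hfdef, hper]
  have hfc : Continuous f := Complex.continuous_ofReal.comp hc
  set G : C(AddCircle (1:ℝ), ℂ) :=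
    ⟨AddCircle.liftIco 1 0 f, AddCircle.liftIco_zero_continuous hf0 hfc.continuousOn⟩ with hGdef
  have hGx : ∀ y : ℝ, G ((y : ℝ) : AddCircle (1:ℝ)) = f (Int.fract y) := by
    intro y
    rw [← coe_fract_addCircle y]
    show AddCircle.liftIco 1 0 f ((Int.fract y : ℝ) : AddCircle (1:ℝ)) = f (Int.fract y)
    exact AddCircle.liftIco_zero_coe_apply ⟨Int.fract_nonneg y, Int.fract_lt_one y⟩
  have hmain := circle_tendsto μ hac G
  have hL : ∀ n : ℕ, ∫ x : ℝ, G (((n : ℝ) * x : ℝ) : AddCircle (1:ℝ)) ∂μ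
      = ((∫ x, h (Int.fract ((n : ℝ) * x)) ∂μ : ℝ) : ℂ) := by
    intro n
    have heq : (fun x : ℝ => G (((n : ℝ) * x : ℝ) : AddCircle (1:ℝ)))
        = fun x : ℝ => ((h (Int.fract ((n : ℝ) * x)) : ℝ) : ℂ) := funext fun x => hGx _
    rw [show (∫ x : ℝ, G (((n : ℝ) * x : ℝ) : AddCircle (1:ℝ)) ∂μ)
        = ∫ x : ℝ, ((h (Int.fract ((n : ℝ) * x)) : ℝ) : ℂ) ∂μ from congrArg _ heq]
    exact integral_ofReal
  have hR : ∫ y, G y ∂(volume : Measure (AddCircle (1:ℝ)))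
      = ((∫ u in Set.Icc (0:ℝ) 1, h u : ℝ) : ℂ) := by
    rw [← AddCircle.integral_preimage (1:ℝ) 0 fun y => G y, zero_add]
    have : ∀ x ∈ Set.Ioc (0:ℝ) 1, G ((x : ℝ) : AddCircle (1:ℝ)) = f x := by
      intro x hx
      rw [hGx]
      rcases eq_or_lt_of_le hx.2 with h1 | h1
      · rw [h1]; simp only [Int.fract_one]; exact hf0
      · rw [Int.fract_eq_self.mpr ⟨le_of_lt hx.1, h1⟩]
    rw [setIntegral_congr_fun measurableSet_Ioc this]
    rw [show (∫ x in Set.Ioc (0:ℝ) 1, f x) = ((∫ x in Set.Ioc (0:ℝ) 1, h x : ℝ) : ℂ) from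
      integral_ofReal]
    rw [integral_Icc_eq_integral_Ioc]
  rw [hR] at hmain
  have hmain2 : Tendsto (fun n : ℕ => ((∫ x, h (Int.fract ((n : ℝ) * x)) ∂μ : ℝ) : ℂ)) atTop
      (𝓝 ((∫ u in Set.Icc (0:ℝ) 1, h u : ℝ) : ℂ)) := Tendsto.congr (fun n => hL n) hmain
  have := (Complex.continuous_re.tendsto _).comp hmain2
  simpa [Function.comp_def] using this

noncomputable def bump (ε u : ℝ) : ℝ := max 0 (max (1 - u / ε) (1 - (1 - u) / ε))

lemma bump_cont (ε : ℝ) : Continuous (bump ε) := by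
  unfold bump
  fun_prop

lemma bump_nonneg (ε u : ℝ) : 0 ≤ bump ε u := le_max_left _ _

lemma bump_le_one {ε : ℝ} (hε : 0 < ε) {u : ℝ} (hu : u ∈ Set.Icc (0:ℝ) 1) : bump ε u ≤ 1 := by
  unfold bump
  apply max_le zero_le_one
  apply max_le
  · have : 0 ≤ u / ε := div_nonneg hu.1 hε.le
    linarith
  · have : 0 ≤ (1 - u) / ε := div_nonneg (by linarith [hu.2]) hε.le
    linarith

lemma bump_zero {ε : ℝ} (hε : 0 < ε) : bump ε 0 = 1 := by
  unfold bump
  rw [zero_div, sub_zero]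
  have h1 : 1 - 1 / ε ≤ 1 := by
    have : 0 ≤ 1 / ε := by positivity
    linarith
  rw [max_eq_left h1, max_eq_right zero_le_one]

lemma bump_one {ε : ℝ} (hε : 0 < ε) : bump ε 1 = 1 := by
  unfold bump
  rw [sub_self, zero_div, sub_zero]
  have h1 : 1 - 1 / ε ≤ 1 := by
    have : 0 ≤ 1 / ε := by positivity
    linarith
  rw [max_eq_right h1, max_eq_right zero_le_one]

lemma bump_mid {ε : ℝ} (hε : 0 < ε) {u : ℝ} (h1 : ε ≤ u) (h2 : u ≤ 1 - ε) : bump ε u = 0 := by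
  unfold bump
  rw [max_eq_left]
  apply max_le
  · have : 1 ≤ u / ε := (one_le_div hε).mpr h1
    linarith
  · have : 1 ≤ (1 - u) / ε := (one_le_div hε).mpr (by linarith)
    linarith

lemma bump_mul_integral_le {ε C : ℝ} (hε0 : 0 < ε) (hε4 : ε ≤ 1/4) (hC0 : 0 ≤ C)
    (w : ℝ → ℝ) (hwc : Continuous w) (hw : ∀ u, 0 ≤ w u ∧ w u ≤ 2 * C) :
    ∫ u in Set.Icc (0:ℝ) 1, bump ε u * w u ≤ 4 * C * ε := by
  have hd : Continuous fun u => bump ε u * w u := (bump_cont ε).mul hwc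
  have hint : ∀ a b : ℝ, IntervalIntegrable (fun u => bump ε u * w u) volume a b :=
    fun a b => hd.intervalIntegrable a b
  rw [integral_Icc_eq_integral_Ioc, ← intervalIntegral.integral_of_le zero_le_one]
  rw [← intervalIntegral.integral_add_adjacent_intervals (hint 0 ε) (hint ε 1)]
  rw [← intervalIntegral.integral_add_adjacent_intervals (hint ε (1-ε)) (hint (1-ε) 1)]
  have hmid : (∫ u in ε..(1-ε), bump ε u * w u) = 0 := by
    have heq : Set.EqOn (fun u => bump ε u * w u) (fun _ => (0:ℝ)) (Set.uIcc ε (1-ε)) := by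
      intro u hu
      rw [Set.uIcc_of_le (by linarith)] at hu
      simp only
      rw [bump_mid hε0 hu.1 hu.2, zero_mul]
    rw [intervalIntegral.integral_congr heq, intervalIntegral.integral_zero]
  have hend1 : (∫ u in (0:ℝ)..ε, bump ε u * w u) ≤ 2 * C * ε := by
    have hle : ∀ u ∈ Set.Icc (0:ℝ) ε, bump ε u * w u ≤ 2 * C := by
      intro u hu
      have hb1 : bump ε u ≤ 1 := bump_le_one hε0 ⟨hu.1, by linarith [hu.2]⟩
      have hb0 := bump_nonneg ε u
      have hwu := hw u
      nlinarith
    calc (∫ u in (0:ℝ)..ε, bump ε u * w u) ≤ ∫ _u in (0:ℝ)..ε, (2*C) :=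
        intervalIntegral.integral_mono_on hε0.le (hint 0 ε) intervalIntegrable_const hle
      _ = 2*C*ε := by
          simp only [intervalIntegral.integral_const, smul_eq_mul, sub_zero]
          ring
  have hend2 : (∫ u in (1-ε)..1, bump ε u * w u) ≤ 2 * C * ε := by
    have hle : ∀ u ∈ Set.Icc (1-ε) 1, bump ε u * w u ≤ 2 * C := by
      intro u hu
      have hb1 : bump ε u ≤ 1 := bump_le_one hε0 ⟨by linarith [hu.1], hu.2⟩
      have hb0 := bump_nonneg ε u
      have hwu := hw u
      nlinarith
    calc (∫ u in (1-ε)..1, bump ε u * w u) ≤ ∫ _u in (1-ε)..1, (2*C) :=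
        intervalIntegral.integral_mono_on (by linarith) (hint (1-ε) 1)
          intervalIntegrable_const hle
      _ = 2*C*ε := by
          rw [intervalIntegral.integral_const]
          simp only [smul_eq_mul]
          ring_nf
  linarith

lemma integrable_fract_comp (μ : Measure ℝ) [IsProbabilityMeasure μ] (φ : ℝ → ℝ)
    (hφ : Continuous φ) (B : ℝ) (hB : ∀ u ∈ Set.Ico (0:ℝ) 1, |φ u| ≤ B) (n : ℕ) :
    Integrable (fun x => φ (Int.fract ((n : ℝ) * x))) μ := by
  have hm : Measurable fun x : ℝ => φ (Int.fract ((n : ℝ) * x)) :=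
    hφ.measurable.comp (measurable_fract.comp (measurable_id.const_mul _))
  refine ⟨hm.aestronglyMeasurable, HasFiniteIntegral.of_bounded (C := B)
    (Eventually.of_forall fun x => ?_)⟩
  rw [Real.norm_eq_abs]
  exact hB _ ⟨Int.fract_nonneg _, Int.fract_lt_one _⟩

lemma limsup_le_key (μ : Measure ℝ) [IsProbabilityMeasure μ] (hac : μ ≪ volume)
    (g : ℝ → ℝ) (hg : Continuous g) (C : ℝ) (hC : ∀ x, |g x| ≤ C) :
    limsup (fun n : ℕ => ∫ x, g (Int.fract ((n : ℝ) * x)) ∂μ) atTop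
      ≤ ∫ u in Set.Icc (0:ℝ) 1, g u := by
  have hC0 : 0 ≤ C := le_trans (abs_nonneg _) (hC 0)
  set L : ℕ → ℝ := fun n => ∫ x, g (Int.fract ((n : ℝ) * x)) ∂μ with hLdef
  set I : ℝ := ∫ u in Set.Icc (0:ℝ) 1, g u with hIdef
  refine le_of_forall_sub_le fun δ hδ => ?_
  rw [sub_le_iff_le_add, add_comm]
  set ε : ℝ := min (δ / (4 * C + 1)) (1/4) with hεdef
  have hε0 : 0 < ε := lt_min (by positivity) (by norm_num)
  have hε4 : ε ≤ 1/4 := min_le_right _ _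
  have hεδ : 4 * C * ε ≤ δ := by
    have h1 : ε ≤ δ / (4 * C + 1) := min_le_left _ _
    have h2 : 4 * C * ε ≤ 4 * C * (δ / (4 * C + 1)) := by nlinarith
    have h3 : 4 * C * (δ / (4 * C + 1)) ≤ δ := by
      rw [mul_div_assoc', div_le_iff₀ (by positivity)]
      nlinarith
    linarith
  set hup : ℝ → ℝ := fun u => (1 - bump ε u) * g u + bump ε u * C with hupdef
  have hupc : Continuous hup := by
    apply Continuous.add
    · exact (continuous_const.sub (bump_cont ε)).mul hg
    · exact (bump_cont ε).mul continuous_const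
  have hup01 : hup 0 = hup 1 := by
    simp [hupdef, bump_zero hε0, bump_one hε0]
  have hg_le : ∀ u, g u ≤ hup u := by
    intro u
    have h1 := mul_nonneg (bump_nonneg ε u) (sub_nonneg.mpr ((abs_le.mp (hC u)).2))
    simp only [hupdef]
    nlinarith
  have hup_bound : ∀ u ∈ Set.Ico (0:ℝ) 1, |hup u| ≤ C := by
    intro u hu
    have hb1 : bump ε u ≤ 1 := bump_le_one hε0 ⟨hu.1, hu.2.le⟩
    have hb0 := bump_nonneg ε u
    have := abs_le.mp (hC u)
    rw [abs_le]
    constructor <;> simp only [hupdef] <;> nlinarith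
  set Up : ℕ → ℝ := fun n => ∫ x, hup (Int.fract ((n : ℝ) * x)) ∂μ with hUpdef
  have hUp : Tendsto Up atTop (𝓝 (∫ u in Set.Icc (0:ℝ) 1, hup u)) :=
    periodic_tendsto μ hac hup hupc hup01
  have hmono : ∀ n, L n ≤ Up n := fun n =>
    integral_mono (integrable_fract_comp μ g hg C (fun u _ => hC u) n)
      (integrable_fract_comp μ hup hupc C hup_bound n) fun x => hg_le _
  have hLlow : IsBoundedUnder (· ≥ ·) atTop L := by
    apply isBoundedUnder_of
    refine ⟨-C, fun n => ?_⟩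
    have : ‖L n‖ ≤ C * (μ Set.univ).toReal := norm_integral_le_of_norm_le_const
      (Eventually.of_forall fun x => by rw [Real.norm_eq_abs]; exact hC _)
    rw [measure_univ] at this
    simp only [ENNReal.toReal_one, mul_one, Real.norm_eq_abs] at this
    linarith [(abs_le.mp this).1]
  have hUpbdd : IsBoundedUnder (· ≤ ·) atTop Up := by
    apply isBoundedUnder_of
    refine ⟨C, fun n => ?_⟩
    have : ‖Up n‖ ≤ C * (μ Set.univ).toReal := norm_integral_le_of_norm_le_const
      (Eventually.of_forall fun x => by
        rw [Real.norm_eq_abs]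
        exact hup_bound _ ⟨Int.fract_nonneg _, Int.fract_lt_one _⟩)
    rw [measure_univ] at this
    simp only [ENNReal.toReal_one, mul_one, Real.norm_eq_abs] at this
    linarith [(abs_le.mp this).2]
  have h1 : limsup L atTop ≤ limsup Up atTop :=
    limsup_le_limsup (Eventually.of_forall hmono) hLlow.isCoboundedUnder_le hUpbdd
  have h2 : limsup Up atTop = ∫ u in Set.Icc (0:ℝ) 1, hup u := hUp.limsup_eq
  have h3 : (∫ u in Set.Icc (0:ℝ) 1, hup u) ≤ I + 4 * C * ε := by
    have hgi : IntegrableOn g (Set.Icc (0:ℝ) 1) volume := hg.integrableOn_Icc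
    have hupi : IntegrableOn hup (Set.Icc (0:ℝ) 1) volume := hupc.integrableOn_Icc
    have hsub : (∫ u in Set.Icc (0:ℝ) 1, hup u) - I
        = ∫ u in Set.Icc (0:ℝ) 1, (hup u - g u) := (integral_sub hupi hgi).symm
    have heq : (fun u => hup u - g u) = fun u => bump ε u * (C - g u) := by
      funext u
      simp only [hupdef]
      ring
    have hbound : (∫ u in Set.Icc (0:ℝ) 1, (hup u - g u)) ≤ 4 * C * ε := by
      rw [heq]
      refine bump_mul_integral_le hε0 hε4 hC0 _ (continuous_const.sub hg) fun u => ?_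
      have := abs_le.mp (hC u)
      constructor <;> linarith
    linarith
  linarith

lemma liminf_ge_key (μ : Measure ℝ) [IsProbabilityMeasure μ] (hac : μ ≪ volume)
    (g : ℝ → ℝ) (hg : Continuous g) (C : ℝ) (hC : ∀ x, |g x| ≤ C) :
    (∫ u in Set.Icc (0:ℝ) 1, g u)
      ≤ liminf (fun n : ℕ => ∫ x, g (Int.fract ((n : ℝ) * x)) ∂μ) atTop := by
  have hC0 : 0 ≤ C := le_trans (abs_nonneg _) (hC 0)
  set L : ℕ → ℝ := fun n => ∫ x, g (Int.fract ((n : ℝ) * x)) ∂μ with hLdef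
  set I : ℝ := ∫ u in Set.Icc (0:ℝ) 1, g u with hIdef
  refine le_of_forall_sub_le fun δ hδ => ?_
  rw [sub_le_iff_le_add]
  set ε : ℝ := min (δ / (4 * C + 1)) (1/4) with hεdef
  have hε0 : 0 < ε := lt_min (by positivity) (by norm_num)
  have hε4 : ε ≤ 1/4 := min_le_right _ _
  have hεδ : 4 * C * ε ≤ δ := by
    have h1 : ε ≤ δ / (4 * C + 1) := min_le_left _ _
    have h2 : 4 * C * ε ≤ 4 * C * (δ / (4 * C + 1)) := by nlinarith
    have h3 : 4 * C * (δ / (4 * C + 1)) ≤ δ := by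
      rw [mul_div_assoc', div_le_iff₀ (by positivity)]
      nlinarith
    linarith
  set hlo : ℝ → ℝ := fun u => (1 - bump ε u) * g u + bump ε u * (-C) with hlodef
  have hloc : Continuous hlo := by
    apply Continuous.add
    · exact (continuous_const.sub (bump_cont ε)).mul hg
    · exact (bump_cont ε).mul continuous_const
  have hlo01 : hlo 0 = hlo 1 := by
    simp [hlodef, bump_zero hε0, bump_one hε0]
  have hlo_le : ∀ u, hlo u ≤ g u := by
    intro u
    have h1 := mul_nonneg (bump_nonneg ε u) (sub_nonneg.mpr ((abs_le.mp (hC u)).1 : -C ≤ g u))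
    simp only [hlodef]
    nlinarith
  have hlo_bound : ∀ u ∈ Set.Ico (0:ℝ) 1, |hlo u| ≤ C := by
    intro u hu
    have hb1 : bump ε u ≤ 1 := bump_le_one hε0 ⟨hu.1, hu.2.le⟩
    have hb0 := bump_nonneg ε u
    have := abs_le.mp (hC u)
    rw [abs_le]
    constructor <;> simp only [hlodef] <;> nlinarith
  set Lo : ℕ → ℝ := fun n => ∫ x, hlo (Int.fract ((n : ℝ) * x)) ∂μ with hLodef
  have hLo : Tendsto Lo atTop (𝓝 (∫ u in Set.Icc (0:ℝ) 1, hlo u)) :=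
    periodic_tendsto μ hac hlo hloc hlo01
  have hmono : ∀ n, Lo n ≤ L n := fun n =>
    integral_mono (integrable_fract_comp μ hlo hloc C hlo_bound n)
      (integrable_fract_comp μ g hg C (fun u _ => hC u) n) fun x => hlo_le _
  have hLhigh : IsBoundedUnder (· ≤ ·) atTop L := by
    apply isBoundedUnder_of
    refine ⟨C, fun n => ?_⟩
    have : ‖L n‖ ≤ C * (μ Set.univ).toReal := norm_integral_le_of_norm_le_const
      (Eventually.of_forall fun x => by rw [Real.norm_eq_abs]; exact hC _)
    rw [measure_univ] at this
    simp only [ENNReal.toReal_one, mul_one, Real.norm_eq_abs] at this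
    linarith [(abs_le.mp this).2]
  have hLobdd : IsBoundedUnder (· ≥ ·) atTop Lo := by
    apply isBoundedUnder_of
    refine ⟨-C, fun n => ?_⟩
    have : ‖Lo n‖ ≤ C * (μ Set.univ).toReal := norm_integral_le_of_norm_le_const
      (Eventually.of_forall fun x => by
        rw [Real.norm_eq_abs]
        exact hlo_bound _ ⟨Int.fract_nonneg _, Int.fract_lt_one _⟩)
    rw [measure_univ] at this
    simp only [ENNReal.toReal_one, mul_one, Real.norm_eq_abs] at this
    linarith [(abs_le.mp this).1]
  have h1 : liminf Lo atTop ≤ liminf L atTop :=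
    liminf_le_liminf (Eventually.of_forall hmono) hLobdd hLhigh.isCoboundedUnder_ge
  have h2 : liminf Lo atTop = ∫ u in Set.Icc (0:ℝ) 1, hlo u := hLo.liminf_eq
  have h3 : I - 4 * C * ε ≤ ∫ u in Set.Icc (0:ℝ) 1, hlo u := by
    have hgi : IntegrableOn g (Set.Icc (0:ℝ) 1) volume := hg.integrableOn_Icc
    have hloi : IntegrableOn hlo (Set.Icc (0:ℝ) 1) volume := hloc.integrableOn_Icc
    have hsub : I - (∫ u in Set.Icc (0:ℝ) 1, hlo u)
        = ∫ u in Set.Icc (0:ℝ) 1, (g u - hlo u) := (integral_sub hgi hloi).symm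
    have heq : (fun u => g u - hlo u) = fun u => bump ε u * (g u + C) := by
      funext u
      simp only [hlodef]
      ring
    have hbound : (∫ u in Set.Icc (0:ℝ) 1, (g u - hlo u)) ≤ 4 * C * ε := by
      rw [heq]
      refine bump_mul_integral_le hε0 hε4 hC0 _ (hg.add continuous_const) fun u => ?_
      have := abs_le.mp (hC u)
      constructor <;> linarith
    linarith
  linarith

lemma key (μ : Measure ℝ) [IsProbabilityMeasure μ] (hac : μ ≪ volume)
    (g : ℝ → ℝ) (hg : Continuous g) (C : ℝ) (hC : ∀ x, |g x| ≤ C) :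
    Tendsto (fun n : ℕ => ∫ x, g (Int.fract ((n : ℝ) * x)) ∂μ) atTop
      (𝓝 (∫ u in Set.Icc (0:ℝ) 1, g u)) := by
  have hbdd : IsBoundedUnder (· ≤ ·) atTop
      (fun n : ℕ => ∫ x, g (Int.fract ((n : ℝ) * x)) ∂μ) := by
    apply isBoundedUnder_of
    refine ⟨C, fun n => ?_⟩
    have : ‖∫ x, g (Int.fract ((n : ℝ) * x)) ∂μ‖ ≤ C * (μ Set.univ).toReal :=
      norm_integral_le_of_norm_le_const
        (Eventually.of_forall fun x => by rw [Real.norm_eq_abs]; exact hC _)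
    rw [measure_univ] at this
    simp only [ENNReal.toReal_one, mul_one, Real.norm_eq_abs] at this
    linarith [(abs_le.mp this).2]
  have hbdd' : IsBoundedUnder (· ≥ ·) atTop
      (fun n : ℕ => ∫ x, g (Int.fract ((n : ℝ) * x)) ∂μ) := by
    apply isBoundedUnder_of
    refine ⟨-C, fun n => ?_⟩
    have : ‖∫ x, g (Int.fract ((n : ℝ) * x)) ∂μ‖ ≤ C * (μ Set.univ).toReal :=
      norm_integral_le_of_norm_le_const
        (Eventually.of_forall fun x => by rw [Real.norm_eq_abs]; exact hC _)
    rw [measure_univ] at this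
    simp only [ENNReal.toReal_one, mul_one, Real.norm_eq_abs] at this
    linarith [(abs_le.mp this).1]
  exact tendsto_of_le_liminf_of_limsup_le (liminf_ge_key μ hac g hg C hC)
    (limsup_le_key μ hac g hg C hC) hbdd hbdd'
end FractUniform

open FractUniform in
/-- Arbitrary functions principle: if `X` has a density, the fractional part of `n·X`
converges in distribution to the uniform law on `[0,1]`. -/
theorem fract_nX_tendsto_uniform
    {Ω : Type*} [MeasurableSpace Ω] (P : Measure Ω) [IsProbabilityMeasure P]
    (X : Ω → ℝ) (hX : Measurable X) (hac : P.map X ≪ volume) :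
    ∀ g : BoundedContinuousFunction ℝ ℝ,
      Tendsto (fun n : ℕ => ∫ ω, g (Int.fract ((n : ℝ) * X ω)) ∂P) atTop
        (nhds (∫ u in Set.Icc (0:ℝ) 1, g u)) := by
  intro g
  haveI : IsProbabilityMeasure (P.map X) := Measure.isProbabilityMeasure_map hX.aemeasurable
  have hmap : ∀ n : ℕ, ∫ x, g (Int.fract ((n : ℝ) * x)) ∂(P.map X)
      = ∫ ω, g (Int.fract ((n : ℝ) * X ω)) ∂P := by
    intro n
    exact integral_map hX.aemeasurable
      ((g.continuous.measurable.comp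
        (measurable_fract.comp (measurable_id.const_mul _))).aestronglyMeasurable)
  have hkey := key (P.map X) hac g g.continuous ‖g‖ fun x => by
    rw [← Real.norm_eq_abs]; exact g.norm_coe_le_norm x
  exact Tendsto.congr (fun n => hmap n) hkey
end

section
/- If X is a real random variable whose characteristic function φ_X(t) = E[exp(itX)] tends to 0 as |t| → ∞, then {nX} converges in distribution to the uniform distribution on [0,1] as n → ∞. -/
noncomputable section

open MeasureTheory Filter Complex Set
open scoped Real

instance instFactZeroLtOneReal : Fact ((0:ℝ) < 1) := ⟨zero_lt_one⟩

lemma aux_fourier_int_zero {k : ℤ} (hk : k ≠ 0) : (∫ x : UnitAddCircle, fourier k x) = 0 := by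
  rw [← UnitAddCircle.integral_preimage 0 (fourier k)]
  rw [zero_add, ← intervalIntegral.integral_of_le zero_le_one]
  have hc : (2 * π * Complex.I * k) ≠ 0 := by
    apply mul_ne_zero
    apply mul_ne_zero
    · simp [Real.pi_ne_zero]
    · exact Complex.I_ne_zero
    · exact_mod_cast hk
  have : ∀ x ∈ Set.uIcc (0:ℝ) 1, fourier k ((x : ℝ) : UnitAddCircle)
      = Complex.exp ((2 * π * Complex.I * k) * x) := by
    intro x _
    rw [fourier_coe_apply]
    norm_num
  rw [intervalIntegral.integral_congr this, integral_exp_mul_complex hc]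
  have h1 : Complex.exp (2 * π * Complex.I * k * 1) = 1 := by
    rw [mul_one]
    have := Complex.exp_int_mul_two_pi_mul_I k
    rw [← this]
    ring_nf
  push_cast
  rw [h1]
  simp

section main
variable {Ω : Type*} [MeasurableSpace Ω] (P : Measure Ω) [IsProbabilityMeasure P]
  (X : Ω → ℝ) (hX : Measurable X)

lemma aux_integrable (hX : Measurable X) (n : ℕ) (h : C(UnitAddCircle, ℂ)) :
    Integrable (fun ω => h ((↑((n:ℝ) * X ω) : UnitAddCircle))) P := by
  have hm : Measurable (fun ω => h ((↑((n:ℝ) * X ω) : UnitAddCircle))) :=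
    h.continuous.measurable.comp (AddCircle.measurable_mk'.comp (measurable_const.mul hX))
  refine (integrable_const ‖h‖).mono' hm.aestronglyMeasurable ?_
  filter_upwards with ω using h.norm_coe_le_norm _

lemma aux_circle_integrable (h : C(UnitAddCircle, ℂ)) :
    Integrable (fun x => h x) (volume : Measure UnitAddCircle) := by
  haveI : IsProbabilityMeasure (volume : Measure UnitAddCircle) := ⟨UnitAddCircle.measure_univ⟩
  refine (integrable_const ‖h‖).mono' h.continuous.measurable.aestronglyMeasurable ?_
  filter_upwards with x using h.norm_coe_le_norm _

lemma weyl_complex (hX : Measurable X)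
    (hchar : Tendsto (fun t : ℝ => ∫ ω, Complex.exp (t * X ω * Complex.I) ∂P)
      (cocompact ℝ) (nhds 0))
    (f : C(UnitAddCircle, ℂ)) :
    Tendsto (fun n : ℕ => ∫ ω, f ((↑((n:ℝ) * X ω) : UnitAddCircle)) ∂P) atTop
      (nhds (∫ x : UnitAddCircle, f x)) := by
  haveI : IsProbabilityMeasure (volume : Measure UnitAddCircle) := ⟨UnitAddCircle.measure_univ⟩
  set S : Set C(UnitAddCircle, ℂ) :=
    {f | Tendsto (fun n : ℕ => ∫ ω, f ((↑((n:ℝ) * X ω) : UnitAddCircle)) ∂P) atTop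
      (nhds (∫ x : UnitAddCircle, f x))} with hS
  -- generators
  have hfourier : ∀ k : ℤ, fourier k ∈ S := by
    intro k
    rcases eq_or_ne k 0 with rfl | hk
    · have h1 : ∀ y : UnitAddCircle, fourier 0 y = 1 := fun y => fourier_zero
      simp only [hS, Set.mem_setOf_eq, h1]
      simp
    · rw [hS, Set.mem_setOf_eq, aux_fourier_int_zero hk]
      have htend : Tendsto (fun n : ℕ => 2 * π * (k:ℝ) * n) atTop (cocompact ℝ) := by
        rw [cocompact_eq_atBot_atTop]
        rcases hk.lt_or_gt with hneg | hpos
        · apply Tendsto.mono_right _ le_sup_left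
          apply Tendsto.const_mul_atTop_of_neg
          · have : (k:ℝ) < 0 := by exact_mod_cast hneg
            nlinarith [Real.pi_pos]
          · exact tendsto_natCast_atTop_atTop
        · apply Tendsto.mono_right _ le_sup_right
          apply Tendsto.const_mul_atTop
          · have : (0:ℝ) < (k:ℝ) := by exact_mod_cast hpos
            nlinarith [Real.pi_pos]
          · exact tendsto_natCast_atTop_atTop
      have := hchar.comp htend
      convert this using 2 with n
      apply integral_congr_ae
      filter_upwards with ω
      rw [fourier_coe_apply]
      push_cast
      ring_nf
  -- span
  have hspan : ∀ f ∈ Submodule.span ℂ (Set.range (@fourier 1)), f ∈ S := by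
    intro f hf
    induction hf using Submodule.span_induction with
    | mem x hx => obtain ⟨k, rfl⟩ := hx; exact hfourier k
    | zero =>
      simp only [hS, Set.mem_setOf_eq]
      simp [ContinuousMap.zero_apply]
    | add x y hx hy hx' hy' =>
      simp only [hS, Set.mem_setOf_eq] at *
      have h1 : ∀ n : ℕ, (∫ ω, (x + y) ((↑((n:ℝ) * X ω) : UnitAddCircle)) ∂P)
          = (∫ ω, x ((↑((n:ℝ) * X ω) : UnitAddCircle)) ∂P)
            + ∫ ω, y ((↑((n:ℝ) * X ω) : UnitAddCircle)) ∂P := by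
        intro n
        simp only [ContinuousMap.add_apply]
        exact integral_add (aux_integrable P X hX n x) (aux_integrable P X hX n y)
      have h2 : (∫ u : UnitAddCircle, (x + y) u)
          = (∫ u : UnitAddCircle, x u) + ∫ u : UnitAddCircle, y u := by
        simp only [ContinuousMap.add_apply]
        exact integral_add (aux_circle_integrable x) (aux_circle_integrable y)
      simp only [h1, h2]
      exact hx'.add hy'
    | smul c x hx hx' =>
      simp only [hS, Set.mem_setOf_eq] at *
      have h1 : ∀ n : ℕ, (∫ ω, (c • x) ((↑((n:ℝ) * X ω) : UnitAddCircle)) ∂P)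
          = c • ∫ ω, x ((↑((n:ℝ) * X ω) : UnitAddCircle)) ∂P := by
        intro n
        simp only [ContinuousMap.smul_apply]
        exact integral_smul c _
      have h2 : (∫ u : UnitAddCircle, (c • x) u) = c • ∫ u : UnitAddCircle, x u := by
        simp only [ContinuousMap.smul_apply]
        exact integral_smul c _
      simp only [h1, h2]
      exact hx'.const_smul c
  -- closure
  have hdense : f ∈ closure ((Submodule.span ℂ (Set.range (@fourier 1)) : Submodule ℂ _) : Set _) := by
    have := span_fourier_closure_eq_top (T := 1)
    have : f ∈ (Submodule.span ℂ (Set.range (@fourier 1))).topologicalClosure := by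
      rw [this]; trivial
    exact this
  rw [Metric.tendsto_atTop]
  intro ε hε
  obtain ⟨p, hpS, hpd⟩ := Metric.mem_closure_iff.1 hdense (ε/4) (by linarith)
  have hpS' := hspan p hpS
  rw [hS, Set.mem_setOf_eq, Metric.tendsto_atTop] at hpS'
  obtain ⟨N, hN⟩ := hpS' (ε/4) (by linarith)
  refine ⟨N, fun n hn => ?_⟩
  have key : ∀ (μ : Measure UnitAddCircle) (c : Ω → UnitAddCircle), True := fun _ _ => trivial
  have hsub : ∀ x : UnitAddCircle, ‖f x - p x‖ ≤ dist f p := by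
    intro x
    rw [dist_eq_norm]
    calc ‖f x - p x‖ = ‖(f - p) x‖ := by simp
    _ ≤ ‖f - p‖ := (f - p).norm_coe_le_norm x
  have b1 : dist (∫ ω, f ((↑((n:ℝ) * X ω) : UnitAddCircle)) ∂P)
      (∫ ω, p ((↑((n:ℝ) * X ω) : UnitAddCircle)) ∂P) ≤ ε/4 := by
    rw [dist_eq_norm, ← integral_sub (aux_integrable P X hX n f) (aux_integrable P X hX n p)]
    calc ‖∫ ω, (f ((↑((n:ℝ) * X ω) : UnitAddCircle)) - p ((↑((n:ℝ) * X ω) : UnitAddCircle))) ∂P‖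
        ≤ dist f p * (P Set.univ).toReal := by
          refine norm_integral_le_of_norm_le_const ?_
          filter_upwards with ω using hsub _
      _ ≤ ε/4 := by simp; linarith [hpd.le]
  have b3 : dist (∫ x : UnitAddCircle, p x) (∫ x : UnitAddCircle, f x) ≤ ε/4 := by
    rw [dist_eq_norm, ← integral_sub (aux_circle_integrable p) (aux_circle_integrable f)]
    calc ‖∫ x : UnitAddCircle, (p x - f x)‖
        ≤ dist f p * ((volume : Measure UnitAddCircle) Set.univ).toReal := by
          refine norm_integral_le_of_norm_le_const ?_
          filter_upwards with x
          rw [norm_sub_rev]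
          exact hsub _
      _ ≤ ε/4 := by simp [UnitAddCircle.measure_univ]; linarith [hpd.le]
  calc dist (∫ ω, f ((↑((n:ℝ) * X ω) : UnitAddCircle)) ∂P) (∫ x : UnitAddCircle, f x)
      ≤ dist (∫ ω, f ((↑((n:ℝ) * X ω) : UnitAddCircle)) ∂P)
          (∫ ω, p ((↑((n:ℝ) * X ω) : UnitAddCircle)) ∂P)
        + dist (∫ ω, p ((↑((n:ℝ) * X ω) : UnitAddCircle)) ∂P) (∫ x : UnitAddCircle, p x)
        + dist (∫ x : UnitAddCircle, p x) (∫ x : UnitAddCircle, f x) := dist_triangle4 _ _ _ _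
    _ < ε := by
        have := hN n hn
        linarith

lemma weyl_real (hX : Measurable X)
    (hchar : Tendsto (fun t : ℝ => ∫ ω, Complex.exp (t * X ω * Complex.I) ∂P)
      (cocompact ℝ) (nhds 0))
    (f : C(UnitAddCircle, ℝ)) :
    Tendsto (fun n : ℕ => ∫ ω, f ((↑((n:ℝ) * X ω) : UnitAddCircle)) ∂P) atTop
      (nhds (∫ x : UnitAddCircle, f x)) := by
  have h := weyl_complex P X hX hchar
    (ContinuousMap.comp ⟨Complex.ofReal, Complex.continuous_ofReal⟩ f)
  simp only [ContinuousMap.comp_apply, ContinuousMap.coe_mk] at h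
  have h2 : ∀ n : ℕ, (∫ ω, ((f ((↑((n:ℝ) * X ω) : UnitAddCircle)) : ℝ) : ℂ) ∂P)
      = ((∫ ω, f ((↑((n:ℝ) * X ω) : UnitAddCircle)) ∂P : ℝ) : ℂ) := fun n => integral_ofReal
  have h3 : (∫ x : UnitAddCircle, ((f x : ℝ) : ℂ)) = ((∫ x : UnitAddCircle, f x : ℝ) : ℂ) :=
    integral_ofReal
  simp only [h2, h3] at h
  have := (Complex.continuous_re.tendsto _).comp h
  simpa [Function.comp_def] using this

lemma mk_fract (y : ℝ) : ((Int.fract y : ℝ) : UnitAddCircle) = (y : UnitAddCircle) := by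
  rw [QuotientAddGroup.eq]
  refine ⟨⌊y⌋, ?_⟩
  simp only [zsmul_eq_mul, mul_one, Int.fract]
  ring

end main

set_option maxHeartbeats 2000000 in
/-- If the characteristic function of `X` vanishes at infinity, then the fractional part
of `n·X` converges in distribution to the uniform law on `[0,1]`. -/
theorem fract_nX_tendsto_uniform_of_charFun
    {Ω : Type*} [MeasurableSpace Ω] (P : Measure Ω) [IsProbabilityMeasure P]
    (X : Ω → ℝ) (hX : Measurable X)
    (hchar : Tendsto (fun t : ℝ => ∫ ω, Complex.exp (t * X ω * Complex.I) ∂P)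
      (cocompact ℝ) (nhds 0)) :
    ∀ g : BoundedContinuousFunction ℝ ℝ,
      Tendsto (fun n : ℕ => ∫ ω, g (Int.fract ((n : ℝ) * X ω)) ∂P) atTop
        (nhds (∫ u in Set.Icc (0:ℝ) 1, g u)) := by
  intro g
  have hgc : Continuous g := g.continuous
  set M := ‖g‖ with hM
  have hM0 : (0:ℝ) ≤ M := norm_nonneg g
  have hgb : ∀ x : ℝ, |g x| ≤ M := fun x => by
    rw [← Real.norm_eq_abs]; exact g.norm_coe_le_norm x
  rw [Metric.tendsto_atTop]
  intro δ hδ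
  set ε := min (δ / (20 * (M + 1))) (1/4) with hεdef
  have hε0 : 0 < ε := lt_min (by positivity) (by norm_num)
  have hε4 : ε ≤ 1/4 := min_le_right _ _
  have hεδ : ε ≤ δ / (20 * (M + 1)) := min_le_left _ _
  -- the reparametrization φ and periodic approximation G of g
  set φf : ℝ → ℝ := fun x => if x ≤ 1 - ε then x else (1-ε)*(1-x)/ε with hφdef
  have hφc : Continuous φf := by
    apply Continuous.if_le continuous_id (by continuity) continuous_id continuous_const
    intro x hx
    simp only [id] at hx
    rw [hx]
    field_simp
    simp only [id_eq]; ring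
  have hφ_eq : ∀ x, x ≤ 1 - ε → φf x = x := fun x hx => if_pos hx
  set G : ℝ → ℝ := fun x => g (φf x) with hGdef
  have hGc : Continuous G := hgc.comp hφc
  have hGb : ∀ x, |G x| ≤ M := fun x => hgb _
  have hG01 : G 0 = G 1 := by
    simp only [hGdef, hφdef]
    rw [if_pos (by linarith), if_neg (by linarith)]
    norm_num
  have hG_eq : ∀ x, x ≤ 1 - ε → G x = g x := by
    intro x hx; simp only [hGdef, hφ_eq x hx]
  -- the bump b
  set b : ℝ → ℝ := fun x => min 1 ((max (x - (1 - 2*ε)) 0) / ε + (max (ε - x) 0)/ε) with hbdef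
  have hbc : Continuous b := by fun_prop
  have hb_nonneg : ∀ x, 0 ≤ b x := fun x => le_min zero_le_one (by positivity)
  have hb_le_one : ∀ x, b x ≤ 1 := fun x => min_le_left _ _
  have hb_one : ∀ x, 1 - ε ≤ x → b x = 1 := by
    intro x hx
    have h1 : (1:ℝ) ≤ (x - (1 - 2*ε))/ε := by rw [le_div_iff₀ hε0]; linarith
    have h2 : (1:ℝ) ≤ (max (x - (1 - 2*ε)) 0) / ε + (max (ε - x) 0)/ε := by
      calc (1:ℝ) ≤ (x - (1-2*ε))/ε := h1
      _ ≤ (max (x - (1 - 2*ε)) 0) / ε := by gcongr; exact le_max_left _ _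
      _ ≤ _ := le_add_of_nonneg_right (by positivity)
    simp only [hbdef]
    exact min_eq_left h2
  have hb_zero : ∀ x, ε ≤ x → x ≤ 1 - 2*ε → b x = 0 := by
    intro x h1 h2
    have e1 : max (x - (1 - 2*ε)) 0 = 0 := max_eq_right (by linarith)
    have e2 : max (ε - x) 0 = 0 := max_eq_right (by linarith)
    simp only [hbdef, e1, e2]
    norm_num
  have hb_at0 : b 0 = 1 := by
    have e1 : max ((0:ℝ) - (1 - 2*ε)) 0 = 0 := max_eq_right (by linarith)
    have e2 : max (ε - 0) 0 = ε := by rw [max_eq_left (by linarith)]; ring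
    simp only [hbdef]
    rw [e1, e2, zero_div, zero_add, div_self hε0.ne']
    norm_num
  have hb_at1 : b 1 = 1 := by
    have e1 : max ((1:ℝ) - (1 - 2*ε)) 0 = 2*ε := by rw [max_eq_left (by linarith)]; ring
    have e2 : max (ε - 1) 0 = 0 := max_eq_right (by linarith)
    simp only [hbdef]
    rw [e1, e2, zero_div, add_zero, mul_div_assoc, div_self hε0.ne']
    norm_num
  have hb01 : b 0 = b 1 := by rw [hb_at0, hb_at1]
  -- lifts to the circle
  set Gc : C(UnitAddCircle, ℝ) :=
    ⟨AddCircle.liftIco 1 0 G, AddCircle.liftIco_zero_continuous hG01 hGc.continuousOn⟩ with hGcdef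
  set Bc : C(UnitAddCircle, ℝ) :=
    ⟨AddCircle.liftIco 1 0 b, AddCircle.liftIco_zero_continuous hb01 hbc.continuousOn⟩ with hBcdef
  have hGc_eval : ∀ y : ℝ, Gc ((y : ℝ) : UnitAddCircle) = G (Int.fract y) := by
    intro y
    rw [← mk_fract y, hGcdef]
    simp only [ContinuousMap.coe_mk]
    exact AddCircle.liftIco_zero_coe_apply ⟨Int.fract_nonneg y, Int.fract_lt_one y⟩
  have hBc_eval : ∀ y : ℝ, Bc ((y : ℝ) : UnitAddCircle) = b (Int.fract y) := by
    intro y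
    rw [← mk_fract y, hBcdef]
    simp only [ContinuousMap.coe_mk]
    exact AddCircle.liftIco_zero_coe_apply ⟨Int.fract_nonneg y, Int.fract_lt_one y⟩
  -- circle integrals as interval integrals
  have hGint : (∫ x : UnitAddCircle, Gc x) = ∫ x in Set.Ioc (0:ℝ) 1, G x := by
    rw [← UnitAddCircle.integral_preimage 0 (fun x => Gc x), zero_add]
    apply setIntegral_congr_fun measurableSet_Ioc
    intro a ha
    show Gc ((a : ℝ) : UnitAddCircle) = G a
    rw [hGc_eval a]
    by_cases h : a = 1
    · rw [h, Int.fract_one, ← hG01]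
    · rw [Int.fract_eq_self.mpr ⟨le_of_lt ha.1, lt_of_le_of_ne ha.2 h⟩]
  have hBint : (∫ x : UnitAddCircle, Bc x) = ∫ x in Set.Ioc (0:ℝ) 1, b x := by
    rw [← UnitAddCircle.integral_preimage 0 (fun x => Bc x), zero_add]
    apply setIntegral_congr_fun measurableSet_Ioc
    intro a ha
    show Bc ((a : ℝ) : UnitAddCircle) = b a
    rw [hBc_eval a]
    by_cases h : a = 1
    · rw [h, Int.fract_one, ← hb01]
    · rw [Int.fract_eq_self.mpr ⟨le_of_lt ha.1, lt_of_le_of_ne ha.2 h⟩]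
  -- bound ∫ b ≤ 3 ε
  have hb_int_bound : (∫ x in Set.Ioc (0:ℝ) 1, b x) ≤ 3 * ε := by
    rw [← intervalIntegral.integral_of_le zero_le_one]
    have hsp1 : (∫ x in (0:ℝ)..ε, b x) + (∫ x in ε..(1-2*ε), b x)
        = ∫ x in (0:ℝ)..(1-2*ε), b x :=
      intervalIntegral.integral_add_adjacent_intervals
        (hbc.intervalIntegrable _ _) (hbc.intervalIntegrable _ _)
    have hsp2 : (∫ x in (0:ℝ)..(1-2*ε), b x) + (∫ x in (1-2*ε)..1, b x)
        = ∫ x in (0:ℝ)..1, b x :=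
      intervalIntegral.integral_add_adjacent_intervals
        (hbc.intervalIntegrable _ _) (hbc.intervalIntegrable _ _)
    have hmid : (∫ x in ε..(1-2*ε), b x) = 0 := by
      rw [intervalIntegral.integral_congr (g := fun _ => (0:ℝ))]
      · simp
      · intro x hx
        rw [Set.uIcc_of_le (by linarith : ε ≤ 1 - 2*ε)] at hx
        exact hb_zero x hx.1 hx.2
    have hIa : (∫ x in (0:ℝ)..ε, b x) ≤ ε := by
      have h := intervalIntegral.norm_integral_le_of_norm_le_const (a := (0:ℝ)) (b := ε)
        (C := 1) (f := b) (fun x _ => by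
          rw [Real.norm_eq_abs, abs_le]
          exact ⟨by linarith [hb_nonneg x], hb_le_one x⟩)
      rw [Real.norm_eq_abs] at h
      calc (∫ x in (0:ℝ)..ε, b x) ≤ |∫ x in (0:ℝ)..ε, b x| := le_abs_self _
      _ ≤ 1 * |ε - 0| := h
      _ = ε := by rw [sub_zero, _root_.abs_of_nonneg hε0.le]; ring
    have hIc : (∫ x in (1-2*ε)..1, b x) ≤ 2*ε := by
      have h := intervalIntegral.norm_integral_le_of_norm_le_const (a := (1-2*ε)) (b := (1:ℝ))
        (C := 1) (f := b) (fun x _ => by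
          rw [Real.norm_eq_abs, abs_le]
          exact ⟨by linarith [hb_nonneg x], hb_le_one x⟩)
      rw [Real.norm_eq_abs] at h
      calc (∫ x in (1-2*ε)..1, b x) ≤ |∫ x in (1-2*ε)..1, b x| := le_abs_self _
      _ ≤ 1 * |1 - (1-2*ε)| := h
      _ = 2*ε := by rw [_root_.abs_of_nonneg (by linarith)]; ring
    linarith
  -- relation between ∫ G on Ioc and the target L
  have hI1L : |(∫ x in Set.Ioc (0:ℝ) 1, G x) - (∫ u in Set.Icc (0:ℝ) 1, g u)| ≤ 2*M*ε := by
    have hL : (∫ u in Set.Icc (0:ℝ) 1, g u) = ∫ u in (0:ℝ)..1, g u := by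
      rw [intervalIntegral.integral_of_le zero_le_one, integral_Icc_eq_integral_Ioc]
    have hdiff : (∫ x in Set.Ioc (0:ℝ) 1, G x) - (∫ u in Set.Icc (0:ℝ) 1, g u)
        = ∫ x in (0:ℝ)..1, (G x - g x) := by
      rw [hL, ← intervalIntegral.integral_of_le zero_le_one,
        intervalIntegral.integral_sub (hGc.intervalIntegrable _ _) (hgc.intervalIntegrable _ _)]
    rw [hdiff]
    have hsplit : (∫ x in (0:ℝ)..(1-ε), (G x - g x)) + (∫ x in (1-ε)..1, (G x - g x))
        = ∫ x in (0:ℝ)..1, (G x - g x) :=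
      intervalIntegral.integral_add_adjacent_intervals
        ((hGc.sub hgc).intervalIntegrable _ _) ((hGc.sub hgc).intervalIntegrable _ _)
    rw [← hsplit]
    have h1 : (∫ x in (0:ℝ)..(1-ε), (G x - g x)) = 0 := by
      rw [intervalIntegral.integral_congr (g := fun _ => (0:ℝ))]
      · simp
      · intro x hx
        rw [Set.uIcc_of_le (by linarith : (0:ℝ) ≤ 1-ε)] at hx
        show G x - g x = 0
        rw [hG_eq x hx.2, sub_self]
    rw [h1, zero_add]
    have h2 := intervalIntegral.norm_integral_le_of_norm_le_const (a := 1-ε) (b := (1:ℝ))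
      (C := 2*M) (f := fun x => G x - g x) (fun x _ => by
        rw [Real.norm_eq_abs]
        calc |G x - g x| ≤ |G x| + |g x| := _root_.abs_sub _ _
        _ ≤ 2*M := by linarith [hGb x, hgb x])
    rw [Real.norm_eq_abs] at h2
    calc |∫ x in (1-ε)..1, (G x - g x)| ≤ 2*M * |1 - (1-ε)| := h2
    _ = 2*M*ε := by rw [_root_.abs_of_nonneg (by linarith)]; ring
  -- pointwise bound
  have hpt : ∀ y : ℝ, |g (Int.fract y) - G (Int.fract y)| ≤ 2*M*b (Int.fract y) := by
    intro y
    by_cases hx : Int.fract y ≤ 1 - ε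
    · rw [hG_eq _ hx, sub_self, abs_zero]
      exact mul_nonneg (by positivity) (hb_nonneg _)
    · push_neg at hx
      rw [hb_one _ hx.le]
      calc |g (Int.fract y) - G (Int.fract y)| ≤ |g (Int.fract y)| + |G (Int.fract y)| :=
        _root_.abs_sub _ _
      _ ≤ 2*M := by linarith [hgb (Int.fract y), hGb (Int.fract y)]
      _ = 2*M*1 := by ring
  -- integrability on Ω
  have mkint : ∀ (h : ℝ → ℝ), Continuous h → (∀ x, |h x| ≤ M + 1) →
      ∀ n : ℕ, Integrable (fun ω => h (Int.fract ((n:ℝ) * X ω))) P := by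
    intro h hc hb n
    have hm : Measurable fun ω => h (Int.fract ((n:ℝ) * X ω)) :=
      hc.measurable.comp ((measurable_const.mul hX).fract)
    refine (integrable_const (M+1)).mono' hm.aestronglyMeasurable ?_
    filter_upwards with ω using by rw [Real.norm_eq_abs]; exact hb _
  have measg : ∀ n : ℕ, Integrable (fun ω => g (Int.fract ((n:ℝ) * X ω))) P :=
    mkint g hgc (fun x => by linarith [hgb x])
  have measG : ∀ n : ℕ, Integrable (fun ω => G (Int.fract ((n:ℝ) * X ω))) P :=
    mkint G hGc (fun x => by linarith [hGb x])
  have measb : ∀ n : ℕ, Integrable (fun ω => b (Int.fract ((n:ℝ) * X ω))) P :=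
    mkint b hbc (fun x => by
      rw [abs_le]; exact ⟨by linarith [hb_nonneg x, hM0], by linarith [hb_le_one x, hM0]⟩)
  -- Weyl applications
  have T1 : Tendsto (fun n : ℕ => ∫ ω, G (Int.fract ((n:ℝ) * X ω)) ∂P) atTop
      (nhds (∫ x in Set.Ioc (0:ℝ) 1, G x)) := by
    rw [← hGint]
    have he : (fun n : ℕ => ∫ ω, G (Int.fract ((n:ℝ) * X ω)) ∂P)
        = fun n : ℕ => ∫ ω, Gc ((↑((n:ℝ) * X ω) : UnitAddCircle)) ∂P := by
      funext n
      exact integral_congr_ae (by filter_upwards with ω using (hGc_eval _).symm)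
    rw [he]
    exact weyl_real P X hX hchar Gc
  have T2 : Tendsto (fun n : ℕ => ∫ ω, b (Int.fract ((n:ℝ) * X ω)) ∂P) atTop
      (nhds (∫ x in Set.Ioc (0:ℝ) 1, b x)) := by
    rw [← hBint]
    have he : (fun n : ℕ => ∫ ω, b (Int.fract ((n:ℝ) * X ω)) ∂P)
        = fun n : ℕ => ∫ ω, Bc ((↑((n:ℝ) * X ω) : UnitAddCircle)) ∂P := by
      funext n
      exact integral_congr_ae (by filter_upwards with ω using (hBc_eval _).symm)
    rw [he]
    exact weyl_real P X hX hchar Bc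
  rw [Metric.tendsto_atTop] at T1 T2
  obtain ⟨N1, hN1⟩ := T1 (δ/4) (by linarith)
  obtain ⟨N2, hN2⟩ := T2 ε hε0
  refine ⟨max N1 N2, fun n hn => ?_⟩
  have h1 := hN1 n (le_trans (le_max_left _ _) hn)
  have h2 := hN2 n (le_trans (le_max_right _ _) hn)
  set An := ∫ ω, g (Int.fract ((n:ℝ) * X ω)) ∂P with hAn
  set Bn := ∫ ω, G (Int.fract ((n:ℝ) * X ω)) ∂P with hBn
  set Cn := ∫ ω, b (Int.fract ((n:ℝ) * X ω)) ∂P with hCn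
  set I1 := ∫ x in Set.Ioc (0:ℝ) 1, G x with hI1
  set L := ∫ u in Set.Icc (0:ℝ) 1, g u with hLdef
  have hAB : |An - Bn| ≤ 2*M*Cn := by
    have e1 : An - Bn = ∫ ω, (g (Int.fract ((n:ℝ) * X ω)) - G (Int.fract ((n:ℝ) * X ω))) ∂P :=
      (integral_sub (measg n) (measG n)).symm
    have e2 : 2*M*Cn = ∫ ω, 2*M*b (Int.fract ((n:ℝ) * X ω)) ∂P := by
      rw [hCn, integral_const_mul]
    rw [e1, e2, ← Real.norm_eq_abs]
    refine le_trans (norm_integral_le_integral_norm _) ?_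
    have hInt : Integrable (fun ω => ‖g (Int.fract ((n:ℝ) * X ω)) - G (Int.fract ((n:ℝ) * X ω))‖) P :=
      ((measg n).sub (measG n)).norm
    refine integral_mono hInt ((measb n).const_mul (2*M)) ?_
    intro ω
    show ‖g (Int.fract ((n:ℝ) * X ω)) - G (Int.fract ((n:ℝ) * X ω))‖ ≤ 2*M*b (Int.fract ((n:ℝ) * X ω))
    rw [Real.norm_eq_abs]
    exact hpt _
  have hCb : Cn < 4*ε := by
    have := abs_lt.1 (by rw [← Real.dist_eq]; exact h2)
    linarith [hb_int_bound]
  have hd1 : |Bn - I1| < δ/4 := by rw [← Real.dist_eq]; exact h1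
  have hεbound : ε * (20 * (M + 1)) ≤ δ := by
    rw [← le_div_iff₀ (by positivity)]
    exact hεδ
  rw [Real.dist_eq]
  calc |An - L| ≤ |An - Bn| + (|Bn - I1| + |I1 - L|) := by
        have e : An - L = (An - Bn) + ((Bn - I1) + (I1 - L)) := by ring
        rw [e]
        refine le_trans (abs_add_le _ _) ?_
        gcongr
        exact abs_add_le _ _
    _ ≤ 2*M*Cn + (δ/4 + 2*M*ε) := by
        refine add_le_add hAB (add_le_add hd1.le hI1L)
    _ ≤ 2*M*(4*ε) + (δ/4 + 2*M*ε) := by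
        have := mul_le_mul_of_nonneg_left hCb.le (by positivity : (0:ℝ) ≤ 2*M)
        linarith
    _ = 10*M*ε + δ/4 := by ring
    _ < δ := by nlinarith [hεbound, hε0, hδ, hM0]
end
end

section
/- Let X have a density, let X_n = ⌊nX⌋/n, and let φ : ℝ → ℝ be C¹ and Lipschitz. Then n(φ(X_n) − φ(X)) converges in distribution to −U φ′(X), where U is uniform on [0,1] and independent of X. -/
open MeasureTheory Filter

section Helpers
open Topology intervalIntegral

lemma taylor_step (φ : ℝ → ℝ) (hφ : ContDiff ℝ 1 φ) (x : ℝ) :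
    Tendsto (fun n : ℕ => (n:ℝ) * (φ ((⌊(n:ℝ)*x⌋ : ℝ)/n) - φ x)
      - (-(Int.fract ((n:ℝ)*x)) * deriv φ x)) atTop (𝓝 0) := by
  have hd : Differentiable ℝ φ := hφ.differentiable one_ne_zero
  have hc : Continuous (deriv φ) := hφ.continuous_deriv le_rfl
  rw [Metric.tendsto_atTop]
  intro ε hε
  obtain ⟨δ, hδ, hδ'⟩ := Metric.continuousAt_iff.mp (hc.continuousAt (x := x)) (ε/2) (half_pos hε)
  obtain ⟨N, hN⟩ := exists_nat_gt (1/δ)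
  refine ⟨max N 1, fun n hn => ?_⟩
  have hn1 : (1:ℕ) ≤ n := le_trans (le_max_right N 1) hn
  have hnN : N ≤ n := le_trans (le_max_left N 1) hn
  have hnpos : (0:ℝ) < n := by exact_mod_cast hn1
  set y : ℝ := (⌊(n:ℝ)*x⌋ : ℝ)/n with hy
  have hyx : x - y = Int.fract ((n:ℝ)*x) / n := by
    rw [hy, Int.fract, mul_comm (n:ℝ) x]; field_simp
  have hfr0 : (0:ℝ) ≤ Int.fract ((n:ℝ)*x) := Int.fract_nonneg _
  have hfr1 : Int.fract ((n:ℝ)*x) ≤ 1 := le_of_lt (Int.fract_lt_one _)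
  have hyle : y ≤ x := by nlinarith [div_nonneg hfr0 hnpos.le]
  have hxy : x - y < δ := by
    rw [hyx]
    calc Int.fract ((n:ℝ)*x) / n ≤ 1 / n := by gcongr
      _ < δ := by
          rw [div_lt_iff₀ hnpos]
          have h1 : 1/δ < (N:ℝ) := hN
          have h2 : (N:ℝ) ≤ n := by exact_mod_cast hnN
          rw [div_lt_iff₀ hδ] at h1
          nlinarith
  -- FTC
  have hftc : φ x - φ y = ∫ t in y..x, deriv φ t :=
    (integral_deriv_eq_sub (fun t _ => hd t) (hc.intervalIntegrable _ _)).symm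
  have hkey : (n:ℝ) * (φ y - φ x) - (-(Int.fract ((n:ℝ)*x)) * deriv φ x)
      = -((n:ℝ) * ∫ t in y..x, (deriv φ t - deriv φ x)) := by
    have h1 : (∫ t in y..x, (deriv φ t - deriv φ x))
        = (∫ t in y..x, deriv φ t) - (x - y) * deriv φ x := by
      rw [intervalIntegral.integral_sub (hc.intervalIntegrable _ _)
        (intervalIntegrable_const), intervalIntegral.integral_const]
      ring_nf
    rw [h1, ← hftc]
    have : (n:ℝ) * (x - y) = Int.fract ((n:ℝ)*x) := by
      rw [hyx]; field_simp
    linear_combination (-(deriv φ x)) * this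
  rw [Real.dist_eq, sub_zero, hkey]
  have hbound : ‖∫ t in y..x, (deriv φ t - deriv φ x)‖ ≤ (ε/2) * |x - y| := by
    apply intervalIntegral.norm_integral_le_of_norm_le_const
    intro t ht
    rw [Set.uIoc_of_le hyle] at ht
    have h1 : |t - x| < δ := by
      rw [abs_lt]; constructor <;> nlinarith [ht.1, ht.2]
    have := hδ' (by rwa [Real.dist_eq] : dist t x < δ)
    rw [Real.dist_eq] at this
    exact le_of_lt this
  have : |(n:ℝ) * ∫ t in y..x, (deriv φ t - deriv φ x)| ≤ ε/2 := by
    rw [abs_mul, abs_of_pos hnpos]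
    calc (n:ℝ) * |∫ t in y..x, (deriv φ t - deriv φ x)| ≤ (n:ℝ) * ((ε/2) * |x-y|) := by
          exact mul_le_mul_of_nonneg_left hbound hnpos.le
      _ = (ε/2) * ((n:ℝ) * (x - y)) := by
          rw [abs_of_nonneg (by linarith : (0:ℝ) ≤ x - y)]; ring
      _ ≤ (ε/2) * 1 := by
          apply mul_le_mul_of_nonneg_left _ (le_of_lt (half_pos hε))
          rw [hyx]; field_simp; exact hfr1
      _ = ε/2 := mul_one _
  rw [abs_neg]
  linarith

lemma key_pointwise (g : BoundedContinuousFunction ℝ ℝ) (φ : ℝ → ℝ)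
    (hφ : ContDiff ℝ 1 φ) (x : ℝ) :
    Tendsto (fun n : ℕ => g ((n:ℝ) * (φ ((⌊(n:ℝ)*x⌋ : ℝ)/n) - φ x))
      - g (-(Int.fract ((n:ℝ)*x)) * deriv φ x)) atTop (𝓝 0) := by
  set c : ℝ := |deriv φ x| with hc
  have hK : IsCompact (Set.Icc (-c-1) (c+1)) := isCompact_Icc
  have hu : UniformContinuousOn g (Set.Icc (-c-1) (c+1)) :=
    hK.uniformContinuousOn_of_continuous (g.continuous.continuousOn)
  rw [Metric.tendsto_atTop]
  intro ε hε
  rw [Metric.uniformContinuousOn_iff] at hu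
  obtain ⟨δ, hδ, hδ'⟩ := hu ε hε
  have ht := taylor_step φ hφ x
  rw [Metric.tendsto_atTop] at ht
  obtain ⟨N, hN⟩ := ht (min δ 1) (lt_min hδ one_pos)
  refine ⟨N, fun n hn => ?_⟩
  have h1 := hN n hn
  rw [Real.dist_eq, sub_zero] at h1
  set Y := (n:ℝ) * (φ ((⌊(n:ℝ)*x⌋ : ℝ)/n) - φ x) with hY
  set Z := -(Int.fract ((n:ℝ)*x)) * deriv φ x with hZ
  have hZmem : Z ∈ Set.Icc (-c-1) (c+1) := by
    have h2 : |Z| ≤ c := by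
      rw [hZ, abs_mul, abs_neg, Int.abs_fract]
      calc Int.fract ((n:ℝ)*x) * |deriv φ x| ≤ 1 * |deriv φ x| := by
            apply mul_le_mul_of_nonneg_right (le_of_lt (Int.fract_lt_one _)) (abs_nonneg _)
        _ = c := one_mul _
    rw [abs_le] at h2
    constructor <;> [linarith [h2.1]; linarith [h2.2]]
  have hYmem : Y ∈ Set.Icc (-c-1) (c+1) := by
    have h2 : |Y - Z| ≤ 1 := le_of_lt (lt_of_lt_of_le h1 (min_le_right _ _))
    rw [abs_le] at h2
    obtain ⟨hz1, hz2⟩ := hZmem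
    have h3 : |Z| ≤ c := by
      rw [hZ, abs_mul, abs_neg, Int.abs_fract]
      calc Int.fract ((n:ℝ)*x) * |deriv φ x| ≤ 1 * |deriv φ x| := by
            apply mul_le_mul_of_nonneg_right (le_of_lt (Int.fract_lt_one _)) (abs_nonneg _)
        _ = c := one_mul _
    rw [abs_le] at h3
    constructor <;> [linarith [h2.1, h3.1]; linarith [h2.2, h3.2]]
  have := hδ' Y hYmem Z hZmem (lt_of_lt_of_le h1 (min_le_left _ _))
  rwa [Real.dist_eq, sub_zero, ← Real.dist_eq]

lemma fract_comp_intervalIntegrable (F : ℝ → ℝ) (hF : Continuous F) (n : ℕ) (a b : ℝ) :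
    IntervalIntegrable (fun x => F (Int.fract ((n:ℝ)*x))) volume a b := by
  rw [intervalIntegrable_iff]
  obtain ⟨C, hC⟩ := (isCompact_Icc (a := (0:ℝ)) (b := 1)).exists_bound_of_continuousOn
    hF.continuousOn
  have hm : Measurable fun x => F (Int.fract ((n:ℝ)*x)) :=
    hF.measurable.comp (measurable_fract.comp (measurable_id.const_mul _))
  apply Integrable.mono' (g := fun _ => C)
  · exact (integrableOn_const_iff (C := C)).mpr (Or.inr measure_Ioc_lt_top)
  · exact hm.aestronglyMeasurable.restrict
  · filter_upwards with x
    exact hC _ ⟨Int.fract_nonneg _, (Int.fract_lt_one _).le⟩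

lemma step_exact (F : ℝ → ℝ) (hF : Continuous F) (n : ℕ) (hn : 1 ≤ n) (k : ℤ) :
    ∫ x in ((k:ℝ)/n)..((k:ℝ)/n + 1/n), F (Int.fract ((n:ℝ)*x))
      = (1/(n:ℝ)) * ∫ u in (0:ℝ)..1, F u := by
  have hn0 : (0:ℝ) < n := by exact_mod_cast hn
  have hae : ∀ᵐ x : ℝ, x ≠ (k:ℝ)/n + 1/n := by
    rw [ae_iff]
    have : {x : ℝ | ¬ x ≠ (k:ℝ)/n + 1/n} = {(k:ℝ)/n + 1/n} := by ext z; simp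
    rw [this]; exact measure_singleton _
  have hle : (k:ℝ)/n ≤ (k:ℝ)/n + 1/n := by nlinarith [one_div_pos.mpr hn0]
  have hcongr : ∫ x in ((k:ℝ)/n)..((k:ℝ)/n + 1/n), F (Int.fract ((n:ℝ)*x))
      = ∫ x in ((k:ℝ)/n)..((k:ℝ)/n + 1/n), F ((n:ℝ)*x + (-(k:ℝ))) := by
    apply intervalIntegral.integral_congr_ae
    filter_upwards [hae] with x hx hmem
    rw [Set.uIoc_of_le hle] at hmem
    have hx2 : x < (k:ℝ)/n + 1/n := lt_of_le_of_ne hmem.2 hx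
    have hfl : ⌊(n:ℝ)*x⌋ = k := by
      rw [Int.floor_eq_iff]
      constructor
      · have := hmem.1
        rw [div_lt_iff₀ hn0] at this
        nlinarith
      · push_cast
        rw [show (k:ℝ)/n + 1/n = ((k:ℝ)+1)/n by ring] at hx2
        rw [lt_div_iff₀ hn0] at hx2
        nlinarith
    rw [Int.fract, hfl]
    ring_nf
  rw [hcongr, intervalIntegral.integral_comp_mul_add F hn0.ne' (-(k:ℝ))]
  have e1 : (n:ℝ) * ((k:ℝ)/n) + (-(k:ℝ)) = 0 := by field_simp; ring
  have e2 : (n:ℝ) * ((k:ℝ)/n + 1/n) + (-(k:ℝ)) = 1 := by field_simp; ring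
  rw [e1, e2, smul_eq_mul, one_div, inv_eq_one_div]

lemma equidist_cc (G : ℝ → ℝ → ℝ) (hG : Continuous fun p : ℝ × ℝ => G p.1 p.2)
    (f : ℝ → ℝ) (hf : Continuous f) (hfs : HasCompactSupport f) :
    Tendsto (fun n : ℕ => ∫ x, f x * G x (Int.fract ((n:ℝ) * x))) atTop
      (𝓝 (∫ x, f x * ∫ u in (0:ℝ)..1, G x u)) := by
  classical
  -- support bound
  obtain ⟨r, hr⟩ := hfs.isBounded.subset_closedBall 0
  set M : ℕ := ⌈r⌉₊ + 1 with hMdef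
  have hM1 : (1:ℝ) ≤ M := by exact_mod_cast Nat.le_add_left 1 ⌈r⌉₊
  have hsupp : ∀ x : ℝ, x ∉ Set.Icc (-(M:ℝ)) M → f x = 0 := by
    intro x hx
    apply image_eq_zero_of_notMem_tsupport
    intro hmem
    have := hr hmem
    rw [Metric.mem_closedBall, Real.dist_eq, sub_zero] at this
    have hrM : r ≤ (M:ℝ) := le_trans (Nat.le_ceil r) (by exact_mod_cast Nat.le_succ _)
    exact hx ⟨by cases abs_le.mp (this.trans hrM) with | intro h1 h2 => linarith,
      by cases abs_le.mp (this.trans hrM) with | intro h1 h2 => linarith⟩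
  -- the two-variable function
  set Ψ : ℝ × ℝ → ℝ := fun p => f p.1 * G p.1 p.2 with hΨdef
  have hΨ : Continuous Ψ := (hf.comp continuous_fst).mul hG
  have hHc : Continuous fun x : ℝ => ∫ u in (0:ℝ)..1, G x u :=
    intervalIntegral.continuous_parametric_intervalIntegral_of_continuous' hG 0 1
  set Hf : ℝ → ℝ := fun x => f x * ∫ u in (0:ℝ)..1, G x u with hHfdef
  have hHfc : Continuous Hf := hf.mul hHc
  -- compact box and bounds
  set Kbox : Set (ℝ × ℝ) := Set.Icc (-(M:ℝ)) M ×ˢ Set.Icc (0:ℝ) 1 with hKdef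
  have hKc : IsCompact Kbox := isCompact_Icc.prod isCompact_Icc
  obtain ⟨C, hC⟩ := hKc.exists_bound_of_continuousOn hΨ.continuousOn
  have hC0 : 0 ≤ C := by
    refine le_trans (norm_nonneg (Ψ (0, 0))) (hC (0, 0) ?_)
    constructor
    · constructor <;> simp <;> linarith
    · exact ⟨le_refl 0, zero_le_one⟩
  have hUC := hKc.uniformContinuousOn_of_continuous hΨ.continuousOn
  rw [Metric.uniformContinuousOn_iff] at hUC
  -- integrability of the left-hand integrands
  have hmeasn : ∀ n : ℕ, Measurable fun x => f x * G x (Int.fract ((n:ℝ)*x)) := by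
    intro n
    exact hf.measurable.mul (hG.measurable.comp
      (measurable_id.prodMk (measurable_fract.comp (measurable_id.const_mul _))))
  have hintn : ∀ n : ℕ, Integrable (fun x => f x * G x (Int.fract ((n:ℝ)*x))) := by
    intro n
    apply Integrable.mono' (g := (Set.Icc (-(M:ℝ)) M).indicator fun _ => C)
    · exact (integrable_indicator_iff measurableSet_Icc).mpr
        ((integrableOn_const_iff (C := C)).mpr (Or.inr measure_Icc_lt_top))
    · exact (hmeasn n).aestronglyMeasurable
    · filter_upwards with x
      by_cases hx : x ∈ Set.Icc (-(M:ℝ)) M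
      · rw [Set.indicator_of_mem hx]
        exact hC (x, Int.fract ((n:ℝ)*x))
          ⟨hx, ⟨Int.fract_nonneg _, (Int.fract_lt_one _).le⟩⟩
      · rw [Set.indicator_of_notMem hx, hsupp x hx]
        simp
  have hintHf : Integrable Hf := by
    apply hHfc.integrable_of_hasCompactSupport
    apply HasCompactSupport.mul_right hfs
  -- restriction helper
  have hrestrict : ∀ h : ℝ → ℝ, (∀ x ∉ Set.Icc (-(M:ℝ)) M, h x = 0) →
      (∫ x, h x) = ∫ x in (-(M:ℝ))..M, h x := by
    intro h h0
    rw [intervalIntegral.integral_of_le (by linarith : -(M:ℝ) ≤ M),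
      ← integral_Icc_eq_integral_Ioc,
      setIntegral_eq_integral_of_forall_compl_eq_zero h0]
  rw [Metric.tendsto_atTop]
  intro ε hε
  set ε' : ℝ := ε / (4*M + 1) with hε'def
  have hε' : 0 < ε' := by positivity
  obtain ⟨δ, hδ, hδ'⟩ := hUC ε' hε'
  obtain ⟨N₀, hN₀⟩ := exists_nat_gt (1/δ)
  refine ⟨max N₀ 1, fun n hn => ?_⟩
  have hn1 : 1 ≤ n := le_trans (le_max_right _ _) hn
  have hnN : N₀ ≤ n := le_trans (le_max_left _ _) hn
  have hn0 : (0:ℝ) < n := by exact_mod_cast hn1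
  have hinv : 1/(n:ℝ) < δ := by
    rw [div_lt_iff₀ hn0]
    have h1 : 1/δ < (N₀:ℝ) := hN₀
    rw [div_lt_iff₀ hδ] at h1
    have h2 : (N₀:ℝ) ≤ n := by exact_mod_cast hnN
    nlinarith
  have hinvpos : (0:ℝ) < 1/n := by positivity
  -- grid
  set a : ℕ → ℝ := fun i => -(M:ℝ) + i/n with hadef
  have ha0 : a 0 = -(M:ℝ) := by simp [hadef]
  have haN : a (2*M*n) = (M:ℝ) := by
    simp only [hadef]
    push_cast
    field_simp
    ring
  have hastep : ∀ i, a (i+1) = a i + 1/n := by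
    intro i; simp only [hadef]; push_cast; ring
  have hamem : ∀ i, i ≤ 2*M*n → a i ∈ Set.Icc (-(M:ℝ)) M := by
    intro i hi
    constructor
    · have : (0:ℝ) ≤ (i:ℝ)/n := by positivity
      simp only [hadef]; linarith
    · have h1 : (i:ℝ) ≤ 2*M*n := by exact_mod_cast hi
      have : (i:ℝ)/n ≤ 2*M := by rw [div_le_iff₀ hn0]; linarith
      simp only [hadef]; linarith
  -- decompose both sides
  have hsum1 : (∫ x, f x * G x (Int.fract ((n:ℝ)*x)))
      = ∑ i ∈ Finset.range (2*M*n), ∫ x in a i..a (i+1), f x * G x (Int.fract ((n:ℝ)*x)) := by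
    rw [hrestrict _ (fun x hx => by rw [hsupp x hx, zero_mul]),
      intervalIntegral.sum_integral_adjacent_intervals
        (fun k _ => (hintn n).intervalIntegrable), ha0, haN]
  have hsum2 : (∫ x, Hf x) = ∑ i ∈ Finset.range (2*M*n), ∫ x in a i..a (i+1), Hf x := by
    rw [hrestrict _ (fun x hx => by simp only [hHfdef]; rw [hsupp x hx, zero_mul]),
      intervalIntegral.sum_integral_adjacent_intervals
        (fun k _ => hHfc.intervalIntegrable _ _), ha0, haN]
  -- per-piece estimate
  have hpiece : ∀ i, i < 2*M*n →
      |(∫ x in a i..a (i+1), f x * G x (Int.fract ((n:ℝ)*x))) - ∫ x in a i..a (i+1), Hf x|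
        ≤ 2*ε'/n := by
    intro i hi
    obtain ⟨hai1, hai2⟩ := hamem i hi.le
    obtain ⟨hai1', hai2'⟩ := hamem (i+1) hi
    have hstep := hastep i
    have hle : a i ≤ a (i+1) := by rw [hstep]; linarith
    -- membership facts for points in the piece
    have hmemfact : ∀ x ∈ Set.uIoc (a i) (a (i+1)), x ∈ Set.Icc (-(M:ℝ)) M ∧ |x - a i| < δ := by
      intro x hx
      rw [Set.uIoc_of_le hle] at hx
      refine ⟨⟨by linarith [hx.1.le], by linarith [hx.2]⟩, ?_⟩
      have h1 : x - a i ≤ 1/n := by rw [hstep] at hx; linarith [hx.2]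
      have h2 : 0 < x - a i := by linarith [hx.1]
      rw [abs_of_pos h2]; exact lt_of_le_of_lt h1 hinv
    have hΨbound : ∀ x ∈ Set.uIoc (a i) (a (i+1)), ∀ u ∈ Set.Icc (0:ℝ) 1,
        |f x * G x u - f (a i) * G (a i) u| ≤ ε' := by
      intro x hx u hu
      obtain ⟨hxm, hxd⟩ := hmemfact x hx
      have := hδ' (x, u) ⟨hxm, hu⟩ (a i, u) ⟨⟨hai1, hai2⟩, hu⟩
        (by rw [Prod.dist_eq, dist_self, max_eq_left dist_nonneg, Real.dist_eq]; exact hxd)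
      rw [Real.dist_eq] at this
      exact this.le
    -- Estimate 1
    have hE1 : |(∫ x in a i..a (i+1), f x * G x (Int.fract ((n:ℝ)*x)))
        - ∫ x in a i..a (i+1), f (a i) * G (a i) (Int.fract ((n:ℝ)*x))| ≤ ε' * (1/n) := by
      rw [← intervalIntegral.integral_sub ((hintn n).intervalIntegrable)
        (fract_comp_intervalIntegrable (fun u => f (a i) * G (a i) u)
          (continuous_const.mul (hG.comp (Continuous.prodMk_right _))) n _ _)]
      have hb := intervalIntegral.norm_integral_le_of_norm_le_const (C := ε')
        (f := fun x => f x * G x (Int.fract ((n:ℝ)*x)) - f (a i) * G (a i) (Int.fract ((n:ℝ)*x)))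
        (a := a i) (b := a (i+1)) ?_
      · rw [Real.norm_eq_abs] at hb
        refine hb.trans (le_of_eq ?_)
        rw [hstep]; rw [abs_of_pos (by linarith : (0:ℝ) < a i + 1/n - a i)]; ring_nf
      · intro x hx
        rw [Real.norm_eq_abs]
        exact hΨbound x hx _ ⟨Int.fract_nonneg _, (Int.fract_lt_one _).le⟩
    -- Estimate 2 (exact identity)
    set k : ℤ := (i:ℤ) - (M:ℤ)*(n:ℤ) with hkdef
    have hck : a i = (k:ℝ)/n := by
      simp only [hadef, hkdef]; push_cast; field_simp; ring
    have hE2 : (∫ x in a i..a (i+1), f (a i) * G (a i) (Int.fract ((n:ℝ)*x)))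
        = (1/(n:ℝ)) * Hf (a i) := by
      have hse := step_exact (fun u => f (a i) * G (a i) u)
        (continuous_const.mul (hG.comp (Continuous.prodMk_right _))) n hn1 k
      rw [← hck] at hse
      rw [hstep, hse, intervalIntegral.integral_const_mul]
    -- Estimate 3
    have hE3 : |(∫ x in a i..a (i+1), Hf x) - (1/(n:ℝ)) * Hf (a i)| ≤ ε' * (1/n) := by
      have hconst : (1/(n:ℝ)) * Hf (a i) = ∫ x in a i..a (i+1), Hf (a i) := by
        rw [intervalIntegral.integral_const, smul_eq_mul, hstep]; ring_nf
      rw [hconst, ← intervalIntegral.integral_sub (hHfc.intervalIntegrable _ _)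
        intervalIntegrable_const]
      have hb := intervalIntegral.norm_integral_le_of_norm_le_const (C := ε')
        (f := fun x => Hf x - Hf (a i)) (a := a i) (b := a (i+1)) ?_
      · rw [Real.norm_eq_abs] at hb
        refine hb.trans (le_of_eq ?_)
        rw [hstep]; rw [abs_of_pos (by linarith : (0:ℝ) < a i + 1/n - a i)]; ring_nf
      · intro x hx
        show ‖Hf x - Hf (a i)‖ ≤ ε'
        rw [Real.norm_eq_abs]
        have hGi1 : IntervalIntegrable (fun u : ℝ => f x * G x u) volume 0 1 :=
          (continuous_const.mul (hG.comp (continuous_const.prodMk continuous_id))).intervalIntegrable 0 1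
        have hGi2 : IntervalIntegrable (fun u : ℝ => f (a i) * G (a i) u) volume 0 1 :=
          (continuous_const.mul (hG.comp (continuous_const.prodMk continuous_id))).intervalIntegrable 0 1
        have hdiff : Hf x - Hf (a i) = ∫ u in (0:ℝ)..1, (f x * G x u - f (a i) * G (a i) u) := by
          rw [intervalIntegral.integral_sub hGi1 hGi2,
            intervalIntegral.integral_const_mul, intervalIntegral.integral_const_mul]
        rw [hdiff]
        have hb2 := intervalIntegral.norm_integral_le_of_norm_le_const (C := ε')
          (f := fun u => f x * G x u - f (a i) * G (a i) u) (a := (0:ℝ)) (b := 1) ?_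
        · rw [Real.norm_eq_abs] at hb2
          simpa using hb2
        · intro u hu
          rw [Real.norm_eq_abs]
          rw [Set.uIoc_of_le zero_le_one] at hu
          exact hΨbound x hx u ⟨hu.1.le, hu.2⟩
    calc |(∫ x in a i..a (i+1), f x * G x (Int.fract ((n:ℝ)*x))) - ∫ x in a i..a (i+1), Hf x|
        ≤ |(∫ x in a i..a (i+1), f x * G x (Int.fract ((n:ℝ)*x))) - (1/(n:ℝ)) * Hf (a i)|
          + |(1/(n:ℝ)) * Hf (a i) - ∫ x in a i..a (i+1), Hf x| := abs_sub_le _ _ _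
      _ ≤ ε' * (1/n) + ε' * (1/n) := by
          rw [← hE2]
          refine add_le_add hE1 ?_
          rw [abs_sub_comm, hE2]
          exact hE3
      _ = 2*ε'/n := by ring
  -- assemble
  rw [Real.dist_eq, hsum1]
  have hT : (∫ x, f x * ∫ u in (0:ℝ)..1, G x u) = ∑ i ∈ Finset.range (2*M*n),
      ∫ x in a i..a (i+1), Hf x := hsum2
  rw [hT, ← Finset.sum_sub_distrib]
  calc |∑ i ∈ Finset.range (2*M*n), ((∫ x in a i..a (i+1), f x * G x (Int.fract ((n:ℝ)*x)))
        - ∫ x in a i..a (i+1), Hf x)|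
      ≤ ∑ i ∈ Finset.range (2*M*n), |(∫ x in a i..a (i+1), f x * G x (Int.fract ((n:ℝ)*x)))
        - ∫ x in a i..a (i+1), Hf x| := Finset.abs_sum_le_sum_abs _ _
    _ ≤ ∑ _i ∈ Finset.range (2*M*n), 2*ε'/n :=
        Finset.sum_le_sum (fun i hi => hpiece i (Finset.mem_range.mp hi))
    _ = (2*M*n : ℕ) * (2*ε'/n) := by rw [Finset.sum_const, Finset.card_range, nsmul_eq_mul]
    _ = 4*M*ε' := by push_cast; field_simp; ring
    _ < ε := by
        have hkey : ε' * (4*M+1) = ε := by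
          rw [hε'def]; field_simp
        nlinarith [hkey, hε']

lemma equidist (G : ℝ → ℝ → ℝ) (hG : Continuous fun p : ℝ × ℝ => G p.1 p.2)
    (C : ℝ) (hC : ∀ x u, |G x u| ≤ C)
    (f : ℝ → ℝ) (hf : Integrable f volume) :
    Tendsto (fun n : ℕ => ∫ x, f x * G x (Int.fract ((n:ℝ) * x))) atTop
      (𝓝 (∫ x, f x * ∫ u in (0:ℝ)..1, G x u)) := by
  have hC0 : 0 ≤ C := le_trans (abs_nonneg _) (hC 0 0)
  have hHc : Continuous fun x : ℝ => ∫ u in (0:ℝ)..1, G x u :=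
    intervalIntegral.continuous_parametric_intervalIntegral_of_continuous' hG 0 1
  have hHbd : ∀ x : ℝ, |∫ u in (0:ℝ)..1, G x u| ≤ C := by
    intro x
    have := intervalIntegral.norm_integral_le_of_norm_le_const (C := C)
      (f := fun u => G x u) (a := (0:ℝ)) (b := 1)
      (fun u _ => by rw [Real.norm_eq_abs]; exact hC x u)
    rw [Real.norm_eq_abs] at this
    simpa using this
  -- measurability of G-composed maps
  have hGnm : ∀ n : ℕ, Measurable fun x => G x (Int.fract ((n:ℝ)*x)) := fun n =>
    hG.measurable.comp (measurable_id.prodMk (measurable_fract.comp (measurable_id.const_mul _)))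
  have hGnbd : ∀ (n : ℕ) (x : ℝ), |G x (Int.fract ((n:ℝ)*x))| ≤ C := fun n x => hC _ _
  -- integrability for arbitrary integrable h
  have hint1 : ∀ (h : ℝ → ℝ), Integrable h volume → ∀ n : ℕ,
      Integrable (fun x => h x * G x (Int.fract ((n:ℝ)*x))) volume := by
    intro h hh n
    apply Integrable.mono' (hh.norm.const_mul C)
      (hh.aestronglyMeasurable.mul (hGnm n).aestronglyMeasurable)
    filter_upwards with x
    show ‖h x * G x (Int.fract ((n:ℝ)*x))‖ ≤ C * ‖h x‖
    rw [Real.norm_eq_abs, abs_mul]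
    calc |h x| * |G x (Int.fract ((n:ℝ)*x))| ≤ |h x| * C :=
          mul_le_mul_of_nonneg_left (hGnbd n x) (abs_nonneg _)
      _ = C * ‖h x‖ := by rw [Real.norm_eq_abs]; ring
  have hint2 : ∀ (h : ℝ → ℝ), Integrable h volume →
      Integrable (fun x => h x * ∫ u in (0:ℝ)..1, G x u) volume := by
    intro h hh
    apply Integrable.mono' (hh.norm.const_mul C)
      (hh.aestronglyMeasurable.mul hHc.measurable.aestronglyMeasurable)
    filter_upwards with x
    show ‖h x * ∫ u in (0:ℝ)..1, G x u‖ ≤ C * ‖h x‖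
    rw [Real.norm_eq_abs, abs_mul]
    calc |h x| * |∫ u in (0:ℝ)..1, G x u| ≤ |h x| * C :=
          mul_le_mul_of_nonneg_left (hHbd x) (abs_nonneg _)
      _ = C * ‖h x‖ := by rw [Real.norm_eq_abs]; ring
  -- generic comparison estimate
  have hcompare : ∀ (h : ℝ → ℝ), Integrable h volume → ∀ (B : ℝ → ℝ), Measurable B →
      (∀ x, |B x| ≤ C) → Integrable (fun x => h x * B x) volume →
      |∫ x, h x * B x| ≤ C * ∫ x, ‖h x‖ := by
    intro h hh B hBm hBbd hint
    calc |∫ x, h x * B x| ≤ ∫ x, ‖h x * B x‖ := by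
          rw [← Real.norm_eq_abs]; exact norm_integral_le_integral_norm _
      _ ≤ ∫ x, C * ‖h x‖ := by
          apply integral_mono hint.norm (hh.norm.const_mul C)
          intro x
          simp only [Real.norm_eq_abs, abs_mul]
          calc |h x| * |B x| ≤ |h x| * C := mul_le_mul_of_nonneg_left (hBbd x) (abs_nonneg _)
            _ = C * |h x| := by ring
      _ = C * ∫ x, ‖h x‖ := MeasureTheory.integral_const_mul _ _
  rw [Metric.tendsto_atTop]
  intro ε hε
  set ε' : ℝ := ε / (2*C + 3) with hε'def
  have hε' : 0 < ε' := by positivity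
  obtain ⟨g0, hg0supp, hg0close, hg0cont, hg0int⟩ :=
    hf.exists_hasCompactSupport_integral_sub_le hε'
  have hmain := equidist_cc G hG g0 hg0cont hg0supp
  rw [Metric.tendsto_atTop] at hmain
  obtain ⟨N, hN⟩ := hmain ε' hε'
  refine ⟨N, fun n hn => ?_⟩
  have hdint : Integrable (fun x => f x - g0 x) volume := hf.sub hg0int
  have h1 : |(∫ x, f x * G x (Int.fract ((n:ℝ)*x))) - ∫ x, g0 x * G x (Int.fract ((n:ℝ)*x))|
      ≤ C * ε' := by
    rw [← integral_sub (hint1 f hf n) (hint1 g0 hg0int n)]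
    have : (fun x => f x * G x (Int.fract ((n:ℝ)*x)) - g0 x * G x (Int.fract ((n:ℝ)*x)))
        = fun x => (f x - g0 x) * G x (Int.fract ((n:ℝ)*x)) := by
      funext x; ring
    rw [this]
    refine le_trans (hcompare _ hdint _ (hGnm n) (hGnbd n) (hint1 _ hdint n)) ?_
    exact mul_le_mul_of_nonneg_left hg0close hC0
  have h2 : |(∫ x, f x * ∫ u in (0:ℝ)..1, G x u) - ∫ x, g0 x * ∫ u in (0:ℝ)..1, G x u|
      ≤ C * ε' := by
    rw [← integral_sub (hint2 f hf) (hint2 g0 hg0int)]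
    have : (fun x => (f x * ∫ u in (0:ℝ)..1, G x u) - g0 x * ∫ u in (0:ℝ)..1, G x u)
        = fun x => (f x - g0 x) * ∫ u in (0:ℝ)..1, G x u := by
      funext x; ring
    rw [this]
    refine le_trans (hcompare _ hdint _ hHc.measurable hHbd (hint2 _ hdint)) ?_
    exact mul_le_mul_of_nonneg_left hg0close hC0
  have h3 := hN n hn
  rw [Real.dist_eq] at h3 ⊢
  have hkey : ε' * (2*C+3) = ε := by rw [hε'def]; field_simp
  calc |(∫ x, f x * G x (Int.fract ((n:ℝ)*x))) - ∫ x, f x * ∫ u in (0:ℝ)..1, G x u|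
      ≤ |(∫ x, f x * G x (Int.fract ((n:ℝ)*x))) - ∫ x, g0 x * G x (Int.fract ((n:ℝ)*x))|
        + |(∫ x, g0 x * G x (Int.fract ((n:ℝ)*x))) - ∫ x, f x * ∫ u in (0:ℝ)..1, G x u| :=
        abs_sub_le _ _ _
    _ ≤ C * ε' + (|(∫ x, g0 x * G x (Int.fract ((n:ℝ)*x))) - ∫ x, g0 x * ∫ u in (0:ℝ)..1, G x u|
        + |(∫ x, g0 x * ∫ u in (0:ℝ)..1, G x u) - ∫ x, f x * ∫ u in (0:ℝ)..1, G x u|) := by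
        refine add_le_add h1 (abs_sub_le _ _ _)
    _ < C * ε' + (ε' + C * ε') := by
        have h2' : |(∫ x, g0 x * ∫ u in (0:ℝ)..1, G x u) - ∫ x, f x * ∫ u in (0:ℝ)..1, G x u|
            ≤ C * ε' := by rw [abs_sub_comm]; exact h2
        linarith [h3]
    _ < ε := by nlinarith [hkey, hε', hC0]

end Helpers

open Topology intervalIntegral in
/-- For `X` with a density, `Xₙ = ⌊nX⌋/n` and `φ ∈ C¹ ∩ Lip`,
`n(φ(Xₙ) − φ(X))` converges in distribution to `−U φ'(X)` with `U` uniform on `[0,1]`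
independent of `X`. -/
theorem n_phi_diff_tendsto
    {Ω : Type*} [MeasurableSpace Ω] (P : Measure Ω) [IsProbabilityMeasure P]
    (X : Ω → ℝ) (hX : Measurable X) (hac : P.map X ≪ volume)
    (φ : ℝ → ℝ) (hφ : ContDiff ℝ 1 φ) (K : NNReal) (hlip : LipschitzWith K φ) :
    ∀ g : BoundedContinuousFunction ℝ ℝ,
      Tendsto
        (fun n : ℕ => ∫ ω, g ((n : ℝ) * (φ ((⌊(n : ℝ) * X ω⌋ : ℝ) / n) - φ (X ω))) ∂P)
        atTop
        (nhds (∫ ω, ∫ u in Set.Icc (0:ℝ) 1, g (-u * deriv φ (X ω)) ∂volume ∂P)) := by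
  intro g
  have hdc : Continuous (deriv φ) := hφ.continuous_deriv le_rfl
  -- the two-variable kernel
  set G : ℝ → ℝ → ℝ := fun x u => g (-u * deriv φ x) with hGdef
  have hGc : Continuous fun p : ℝ × ℝ => G p.1 p.2 :=
    g.continuous.comp (continuous_snd.neg.mul (hdc.comp continuous_fst))
  have hGbd : ∀ x u, |G x u| ≤ ‖g‖ := fun x u => by
    rw [← Real.norm_eq_abs]; exact g.norm_coe_le_norm _
  -- measurability
  have hYm : ∀ n : ℕ, Measurable fun ω =>
      g ((n:ℝ) * (φ ((⌊(n:ℝ)*X ω⌋ : ℝ)/n) - φ (X ω))) := by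
    intro n
    apply g.continuous.measurable.comp
    apply Measurable.const_mul
    apply Measurable.sub
    · refine hφ.continuous.measurable.comp (Measurable.div_const ?_ _)
      exact (measurable_of_countable (Int.cast : ℤ → ℝ)).comp
        (Int.measurable_floor.comp (hX.const_mul _))
    · exact hφ.continuous.measurable.comp hX
  have hZm : ∀ n : ℕ, Measurable fun ω =>
      g (-(Int.fract ((n:ℝ)*X ω)) * deriv φ (X ω)) := by
    intro n
    apply g.continuous.measurable.comp
    exact ((measurable_fract.comp (hX.const_mul _)).neg).mul (hdc.measurable.comp hX)
  have hbd : ∀ (t : ℝ), ‖(g t : ℝ)‖ ≤ ‖g‖ := fun t => g.norm_coe_le_norm t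
  -- integrability over the probability space
  have hYint : ∀ n : ℕ, Integrable (fun ω =>
      g ((n:ℝ) * (φ ((⌊(n:ℝ)*X ω⌋ : ℝ)/n) - φ (X ω)))) P := by
    intro n
    apply Integrable.mono' (integrable_const ‖g‖) (hYm n).aestronglyMeasurable
    filter_upwards with ω using hbd _
  have hZint : ∀ n : ℕ, Integrable (fun ω =>
      g (-(Int.fract ((n:ℝ)*X ω)) * deriv φ (X ω))) P := by
    intro n
    apply Integrable.mono' (integrable_const ‖g‖) (hZm n).aestronglyMeasurable
    filter_upwards with ω using hbd _
  -- Step 1: difference of integrals tends to 0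
  have hstep1 : Tendsto (fun n : ℕ =>
      (∫ ω, g ((n:ℝ) * (φ ((⌊(n:ℝ)*X ω⌋ : ℝ)/n) - φ (X ω))) ∂P)
        - ∫ ω, g (-(Int.fract ((n:ℝ)*X ω)) * deriv φ (X ω)) ∂P) atTop (𝓝 0) := by
    have hdct := tendsto_integral_of_dominated_convergence (μ := P)
      (F := fun n ω => g ((n:ℝ) * (φ ((⌊(n:ℝ)*X ω⌋ : ℝ)/n) - φ (X ω)))
        - g (-(Int.fract ((n:ℝ)*X ω)) * deriv φ (X ω)))
      (f := fun _ => (0:ℝ)) (bound := fun _ => 2*‖g‖)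
      (fun n => ((hYm n).sub (hZm n)).aestronglyMeasurable)
      (integrable_const _)
      (fun n => by
        filter_upwards with ω
        calc ‖g ((n:ℝ) * (φ ((⌊(n:ℝ)*X ω⌋ : ℝ)/n) - φ (X ω)))
            - g (-(Int.fract ((n:ℝ)*X ω)) * deriv φ (X ω))‖
            ≤ ‖(g ((n:ℝ) * (φ ((⌊(n:ℝ)*X ω⌋ : ℝ)/n) - φ (X ω))) : ℝ)‖
              + ‖(g (-(Int.fract ((n:ℝ)*X ω)) * deriv φ (X ω)) : ℝ)‖ := norm_sub_le _ _
          _ ≤ ‖g‖ + ‖g‖ := add_le_add (hbd _) (hbd _)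
          _ = 2*‖g‖ := by ring)
      (by filter_upwards with ω using key_pointwise g φ hφ (X ω))
    rw [MeasureTheory.integral_zero] at hdct
    have : ∀ n : ℕ, (∫ ω, (g ((n:ℝ) * (φ ((⌊(n:ℝ)*X ω⌋ : ℝ)/n) - φ (X ω)))
        - g (-(Int.fract ((n:ℝ)*X ω)) * deriv φ (X ω))) ∂P)
        = (∫ ω, g ((n:ℝ) * (φ ((⌊(n:ℝ)*X ω⌋ : ℝ)/n) - φ (X ω))) ∂P)
          - ∫ ω, g (-(Int.fract ((n:ℝ)*X ω)) * deriv φ (X ω)) ∂P := fun n =>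
      integral_sub (hYint n) (hZint n)
    exact hdct.congr (fun n => this n)
  -- Step 2: density representation
  set μ : Measure ℝ := P.map X with hμdef
  have hprob : IsProbabilityMeasure μ := Measure.isProbabilityMeasure_map hX.aemeasurable
  set f : ℝ → ℝ := fun x => (μ.rnDeriv volume x).toReal with hfdef
  have hfint : Integrable f volume := Measure.integrable_toReal_rnDeriv
  have hμ1 : volume.withDensity (μ.rnDeriv volume) = μ :=
    Measure.withDensity_rnDeriv_eq μ volume hac
  have hdens : ∀ h : ℝ → ℝ, Measurable h → ∫ x, h x ∂μ = ∫ x, f x * h x := by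
    intro h hm
    rw [← hμ1]
    have hcongr : volume.withDensity (μ.rnDeriv volume)
        = volume.withDensity (fun x => ((μ.rnDeriv volume x).toNNReal : ENNReal)) := by
      apply withDensity_congr_ae
      filter_upwards [Measure.rnDeriv_lt_top μ volume] with x hx
      rw [ENNReal.coe_toNNReal hx.ne]
    rw [hcongr, integral_withDensity_eq_integral_smul
      (Measure.measurable_rnDeriv μ volume).ennreal_toNNReal h]
    simp only [NNReal.smul_def, smul_eq_mul]
    rfl
  -- Step 2a: Z-integral as integral over ℝ
  have hZrep : ∀ n : ℕ, (∫ ω, g (-(Int.fract ((n:ℝ)*X ω)) * deriv φ (X ω)) ∂P)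
      = ∫ x, f x * G x (Int.fract ((n:ℝ)*x)) := by
    intro n
    have hGm : Measurable (fun x : ℝ => (g (-(Int.fract ((n:ℝ)*x)) * deriv φ x) : ℝ)) :=
      g.continuous.measurable.comp
        ((measurable_fract.comp (measurable_id.const_mul _)).neg.mul hdc.measurable)
    have hmap : (∫ x, g (-(Int.fract ((n:ℝ)*x)) * deriv φ x) ∂μ)
        = ∫ ω, g (-(Int.fract ((n:ℝ)*X ω)) * deriv φ (X ω)) ∂P := by
      apply integral_map hX.aemeasurable hGm.aestronglyMeasurable
    rw [← hmap, hdens _ hGm]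
  -- Step 2b: target representation
  have hGu : Continuous (Function.uncurry G) := hGc
  have hHc : Continuous fun x : ℝ => ∫ u in (0:ℝ)..1, G x u :=
    intervalIntegral.continuous_parametric_intervalIntegral_of_continuous' hGu 0 1
  have htarget : (∫ ω, ∫ u in Set.Icc (0:ℝ) 1, g (-u * deriv φ (X ω)) ∂volume ∂P)
      = ∫ x, f x * ∫ u in (0:ℝ)..1, G x u := by
    have hpt : ∀ c : ℝ, (∫ u in Set.Icc (0:ℝ) 1, g (-u * c) ∂volume)
        = ∫ u in (0:ℝ)..1, g (-u * c) := by
      intro c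
      rw [MeasureTheory.integral_Icc_eq_integral_Ioc, ← intervalIntegral.integral_of_le zero_le_one]
    calc (∫ ω, ∫ u in Set.Icc (0:ℝ) 1, g (-u * deriv φ (X ω)) ∂volume ∂P)
        = ∫ ω, (∫ u in (0:ℝ)..1, G (X ω) u) ∂P := by
          apply MeasureTheory.integral_congr_ae
          filter_upwards with ω
          exact hpt (deriv φ (X ω))
      _ = ∫ x, (∫ u in (0:ℝ)..1, G x u) ∂μ := by
          rw [hμdef]
          exact (integral_map hX.aemeasurable hHc.measurable.aestronglyMeasurable).symm
      _ = ∫ x, f x * ∫ u in (0:ℝ)..1, G x u := hdens _ hHc.measurable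
  -- Step 3: conclude
  have hmain := equidist G hGc ‖g‖ hGbd f hfint
  rw [htarget]
  have hZtend : Tendsto (fun n : ℕ =>
      ∫ ω, g (-(Int.fract ((n:ℝ)*X ω)) * deriv φ (X ω)) ∂P) atTop
      (𝓝 (∫ x, f x * ∫ u in (0:ℝ)..1, G x u)) := by
    apply hmain.congr
    intro n
    exact (hZrep n).symm
  have := hstep1.add hZtend
  rw [zero_add] at this
  apply this.congr
  intro n
  ring
end

section
/- Let M : ℝ → O(d) be a bounded measurable map into the d×d orthogonal matrices, periodic with period 1, with ∫₀¹ M(s) ds = 0 (entrywise). Then for every ξ ∈ L²([0,1], ℝ^d), sup_{t ∈ [0,1]} |∫₀^t ξ(s)* M(ns) ds| → 0 as n → ∞. -/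
open MeasureTheory Filter Matrix

section Auxiliary

open intervalIntegral

private lemma ii_of_bdd {f : ℝ → ℝ} (hm : Measurable f) {C : ℝ} (hb : ∀ s, |f s| ≤ C) (a b : ℝ) :
    IntervalIntegrable f volume a b := by
  constructor <;>
  · refine ⟨hm.aestronglyMeasurable.restrict, ?_⟩
    exact HasFiniteIntegral.restrict_of_bounded (C := C) measure_Ioc_lt_top
      (Filter.Eventually.of_forall fun s => by simpa using hb s)

private lemma entry_bd {d : ℕ} {M : ℝ → Matrix (Fin d) (Fin d) ℝ}
    (hOrth : ∀ s, M s ∈ Matrix.orthogonalGroup (Fin d) ℝ) (s : ℝ) (i j : Fin d) :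
    |M s i j| ≤ 1 := by
  have h := (Matrix.mem_orthogonalGroup_iff' (Fin d) ℝ).mp (hOrth s)
  have h2 : (star (M s) * M s) j j = 1 := by
    rw [Matrix.star_eq_conjTranspose, Matrix.conjTranspose_eq_transpose_of_trivial, h]; simp
  rw [Matrix.mul_apply] at h2
  simp only [Matrix.star_apply, star_trivial] at h2
  rw [abs_le_one_iff_mul_self_le_one]
  calc M s i j * M s i j ≤ ∑ k, M s k j * M s k j := by
        apply Finset.single_le_sum (f := fun k => M s k j * M s k j)
        · intro k _; exact mul_self_nonneg _
        · exact Finset.mem_univ i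
    _ = 1 := h2

private lemma key_scalar {f : ℝ → ℝ} (hm : Measurable f) (hb : ∀ s, |f s| ≤ 1)
    (hp : Function.Periodic f 1) (h0 : ∫ s in (0:ℝ)..1, f s = 0) {τ : ℝ} (hτ : 0 ≤ τ) :
    |∫ s in (0:ℝ)..τ, f s| ≤ 1 := by
  have hi : ∀ a b : ℝ, IntervalIntegrable f volume a b := ii_of_bdd hm hb
  have hnat : ∀ m : ℕ, ∫ s in (0:ℝ)..(m:ℝ), f s = 0 := by
    intro m
    induction m with
    | zero => simp
    | succ p ih =>
      have hsplit := integral_add_adjacent_intervals (hi 0 p) (hi p (p+1))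
      have hper : ∫ s in (p:ℝ)..(p:ℝ)+1, f s = ∫ s in (0:ℝ)..(0:ℝ)+1, f s :=
        hp.intervalIntegral_add_eq (p:ℝ) 0
      push_cast
      rw [← hsplit, ih, hper]
      simpa using h0
  set m := ⌊τ⌋₊ with hm'
  have h1 : (m:ℝ) ≤ τ := Nat.floor_le hτ
  have h2 : τ < (m:ℝ) + 1 := Nat.lt_floor_add_one τ
  have hsplit := integral_add_adjacent_intervals (hi 0 m) (hi m τ)
  rw [← hsplit, hnat m, zero_add]
  have := intervalIntegral.norm_integral_le_of_norm_le_const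
    (a := (m:ℝ)) (b := τ) (C := 1) (f := f) (fun x _ => by simpa using hb x)
  simpa using this.trans (by rw [abs_of_nonneg (by linarith)]; linarith)

private lemma key_scalar2 {f : ℝ → ℝ} (hm : Measurable f) (hb : ∀ s, |f s| ≤ 1)
    (hp : Function.Periodic f 1) (h0 : ∫ s in (0:ℝ)..1, f s = 0)
    {n : ℕ} (hn : 1 ≤ n) {a b : ℝ} (ha : 0 ≤ a) (hb' : 0 ≤ b) :
    |∫ s in a..b, f ((n:ℝ) * s)| ≤ 2 / n := by
  have hn0 : (n:ℝ) ≠ 0 := by positivity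
  have hnpos : (0:ℝ) < n := by positivity
  have hone : ∀ c : ℝ, 0 ≤ c → |∫ s in (0:ℝ)..c, f ((n:ℝ) * s)| ≤ 1 / n := by
    intro c hc
    rw [intervalIntegral.integral_comp_mul_left f hn0]
    rw [mul_zero]
    have := key_scalar hm hb hp h0 (τ := (n:ℝ)*c) (by positivity)
    rw [smul_eq_mul, abs_mul, abs_inv, abs_of_pos hnpos]
    rw [div_eq_inv_mul]
    exact mul_le_mul_of_nonneg_left this (by positivity)
  have hii : ∀ u v : ℝ, IntervalIntegrable (fun s => f ((n:ℝ)*s)) volume u v :=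
    ii_of_bdd (hm.comp (measurable_const_mul _)) (fun s => hb _)
  have hsplit := integral_add_adjacent_intervals (hii 0 a) (hii a b)
  have heq : ∫ s in a..b, f ((n:ℝ)*s) =
      (∫ s in (0:ℝ)..b, f ((n:ℝ)*s)) - ∫ s in (0:ℝ)..a, f ((n:ℝ)*s) := by
    rw [← hsplit]; ring
  rw [heq]
  have h1 := hone a ha
  have h2 := hone b hb'
  have h3 : (2:ℝ)/n = 1/n + 1/n := by ring
  rw [h3]
  exact (abs_sub _ _).trans (by linarith)

private lemma scalar_est {d : ℕ} (M : ℝ → Matrix (Fin d) (Fin d) ℝ)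
    (hMmeas : ∀ i j, Measurable fun s => M s i j)
    (hMb : ∀ s (i j : Fin d), |M s i j| ≤ 1)
    (ξ g : ℝ → (Fin d → ℝ)) (g_cont : Continuous g)
    (hξj : ∀ j : Fin d, Integrable (fun s => ξ s j) (volume.restrict (Set.Icc (0:ℝ) 1)))
    (Cg : ℝ) (hCg : ∀ x, ‖g x‖ ≤ Cg) (hCg0 : 0 ≤ Cg)
    (δ ε' : ℝ) (hε' : 0 < ε')
    (hδ : ∀ ⦃a b : ℝ⦄, dist a b < δ → dist (g a) (g b) < ε')
    (hcomp : ∀ j : Fin d, ∫ s in Set.Icc (0:ℝ) 1, |ξ s j - g s j| ≤ ε')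
    (k n : ℕ) (hkpos : (0:ℝ) < k) (hkδ : 1/(k:ℝ) < δ) (hn1 : 1 ≤ n)
    (key2 : ∀ (i j : Fin d) {n : ℕ}, 1 ≤ n → ∀ {a b : ℝ}, 0 ≤ a → 0 ≤ b →
      |∫ s in a..b, M ((n:ℝ) * s) j i| ≤ 2 / n)
    {t : ℝ} (ht0 : 0 ≤ t) (ht1 : t ≤ 1) (i : Fin d) :
    |∫ s in Set.Icc (0:ℝ) t, ∑ j, ξ s j * M ((n:ℝ) * s) j i| ≤
      (d:ℝ)*ε' + ((d:ℝ)*ε' + 2*(k:ℝ)*(d:ℝ)*Cg/n) := by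
  have hn0 : (0:ℝ) < n := by positivity
  have hMn : ∀ j i : Fin d, Measurable fun s => M ((n:ℝ)*s) j i :=
    fun j i => (hMmeas j i).comp (measurable_const_mul _)
  have hgj_cont : ∀ j : Fin d, Continuous fun s => g s j :=
    fun j => (continuous_apply j).comp g_cont
  have hgjb : ∀ s (j : Fin d), |g s j| ≤ Cg := fun s j => by
    have := norm_le_pi_norm (g s) j
    simpa [Real.norm_eq_abs] using this.trans (hCg s)
  set G : ℝ → ℝ := fun s => ∑ j, g s j * M ((n:ℝ)*s) j i with hGdef
  set D : ℝ → ℝ := fun s => ∑ j, (ξ s j - g s j) * M ((n:ℝ)*s) j i with hDdef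
  have hGmeas : Measurable G :=
    Finset.measurable_sum _ fun j _ => ((hgj_cont j).measurable).mul (hMn j i)
  have hGbd : ∀ s, |G s| ≤ (d:ℝ)*Cg := by
    intro s
    calc |G s| ≤ ∑ j, |g s j * M ((n:ℝ)*s) j i| := Finset.abs_sum_le_sum_abs _ _
      _ ≤ ∑ _j : Fin d, Cg := by
          apply Finset.sum_le_sum
          intro j _
          rw [abs_mul]
          calc |g s j| * |M ((n:ℝ)*s) j i| ≤ Cg * 1 :=
                mul_le_mul (hgjb s j) (hMb _ j i) (abs_nonneg _) hCg0
            _ = Cg := mul_one Cg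
      _ = (d:ℝ)*Cg := by simp [Finset.sum_const, Finset.card_univ, nsmul_eq_mul]
  have hGii : ∀ a b : ℝ, IntervalIntegrable G volume a b := ii_of_bdd hGmeas hGbd
  -- integrability of D on [0,1]
  have hgj_int : ∀ j : Fin d, Integrable (fun s => g s j) (volume.restrict (Set.Icc (0:ℝ) 1)) :=
    fun j => (hgj_cont j).integrableOn_Icc
  have hDint : Integrable D (volume.restrict (Set.Icc (0:ℝ) 1)) := by
    apply integrable_finset_sum
    intro j _
    have hb : Integrable (fun s => ξ s j - g s j) (volume.restrict (Set.Icc (0:ℝ) 1)) :=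
      (hξj j).sub (hgj_int j)
    have := hb.bdd_mul (c := 1) ((hMn j i).aestronglyMeasurable.restrict)
      (Filter.Eventually.of_forall fun s => by simpa [Real.norm_eq_abs] using hMb ((n:ℝ)*s) j i)
    simpa [mul_comm] using this
  -- restrict to [0,t]
  have hsub : Set.Icc (0:ℝ) t ⊆ Set.Icc (0:ℝ) 1 := Set.Icc_subset_Icc_right ht1
  have hmono : volume.restrict (Set.Icc (0:ℝ) t) ≤ volume.restrict (Set.Icc (0:ℝ) 1) :=
    Measure.restrict_mono hsub le_rfl
  have hDt : Integrable D (volume.restrict (Set.Icc (0:ℝ) t)) := hDint.mono_measure hmono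
  have hGt : Integrable G (volume.restrict (Set.Icc (0:ℝ) t)) :=
    ⟨hGmeas.aestronglyMeasurable.restrict,
      HasFiniteIntegral.restrict_of_bounded (C := (d:ℝ)*Cg) measure_Icc_lt_top
        (Filter.Eventually.of_forall fun s => by simpa [Real.norm_eq_abs] using hGbd s)⟩
  have hsplitFG : ∫ s in Set.Icc (0:ℝ) t, ∑ j, ξ s j * M ((n:ℝ) * s) j i
      = (∫ s in Set.Icc (0:ℝ) t, D s) + ∫ s in Set.Icc (0:ℝ) t, G s := by
    rw [← integral_add hDt hGt]
    apply MeasureTheory.integral_congr_ae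
    filter_upwards with s
    rw [hDdef, hGdef]
    rw [← Finset.sum_add_distrib]
    apply Finset.sum_congr rfl
    intro j _
    ring
  -- bound on the D part
  have hDbound : |∫ s in Set.Icc (0:ℝ) t, D s| ≤ (d:ℝ)*ε' := by
    calc |∫ s in Set.Icc (0:ℝ) t, D s| ≤ ∫ s in Set.Icc (0:ℝ) t, |D s| := by
          simpa [Real.norm_eq_abs] using
            norm_integral_le_integral_norm (μ := volume.restrict (Set.Icc (0:ℝ) t)) D
      _ ≤ ∫ s in Set.Icc (0:ℝ) 1, |D s| :=
          setIntegral_mono_set hDint.abs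
            (Filter.Eventually.of_forall fun s => abs_nonneg _)
            (HasSubset.Subset.eventuallyLE hsub)
      _ ≤ ∫ s in Set.Icc (0:ℝ) 1, ∑ j, |ξ s j - g s j| := by
          apply integral_mono hDint.abs
          · exact integrable_finset_sum _ fun j _ => ((hξj j).sub (hgj_int j)).abs
          · intro s
            calc |D s| ≤ ∑ j, |(ξ s j - g s j) * M ((n:ℝ)*s) j i| :=
                  Finset.abs_sum_le_sum_abs _ _
              _ ≤ ∑ j, |ξ s j - g s j| := by
                  apply Finset.sum_le_sum
                  intro j _
                  rw [abs_mul]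
                  calc |ξ s j - g s j| * |M ((n:ℝ)*s) j i| ≤ |ξ s j - g s j| * 1 :=
                        mul_le_mul_of_nonneg_left (hMb _ j i) (abs_nonneg _)
                    _ = _ := mul_one _
      _ = ∑ j, ∫ s in Set.Icc (0:ℝ) 1, |ξ s j - g s j| :=
          integral_finset_sum _ fun j _ => ((hξj j).sub (hgj_int j)).abs
      _ ≤ ∑ _j : Fin d, ε' := Finset.sum_le_sum fun j _ => hcomp j
      _ = (d:ℝ)*ε' := by simp [Finset.sum_const, Finset.card_univ, nsmul_eq_mul]
  -- partition for the G part
  set a : ℕ → ℝ := fun p => min ((p:ℝ)/(k:ℝ)) t with hadef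
  have ha0 : a 0 = 0 := by
    simp only [hadef, Nat.cast_zero, zero_div]
    exact min_eq_left ht0
  have hak : a k = t := by
    simp only [hadef, div_self hkpos.ne']
    exact min_eq_right ht1
  have hamono : ∀ p : ℕ, a p ≤ a (p+1) := by
    intro p
    apply min_le_min _ le_rfl
    rw [div_le_div_iff_of_pos_right hkpos]; push_cast; linarith
  have hanneg : ∀ p : ℕ, 0 ≤ a p := fun p => le_min (by positivity) ht0
  have hlen : ∀ p : ℕ, a (p+1) - a p ≤ 1/(k:ℝ) := by
    intro p
    rcases le_total ((p:ℝ)/(k:ℝ)) t with h | h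
    · have h1 : a p = (p:ℝ)/(k:ℝ) := min_eq_left h
      have h2 : a (p+1) ≤ ((p:ℝ)+1)/(k:ℝ) := by
        simp only [hadef]
        push_cast
        exact min_le_left _ _
      have h3 : ((p:ℝ)+1)/(k:ℝ) - (p:ℝ)/(k:ℝ) = 1/(k:ℝ) := by ring
      linarith
    · have h1 : a p = t := min_eq_right h
      have h2 : a (p+1) = t := by
        apply min_eq_right
        apply h.trans
        rw [div_le_div_iff_of_pos_right hkpos]; push_cast; linarith
      rw [h1, h2]
      simp only [sub_self]
      positivity
  -- per-piece estimate
  have piece : ∀ p : ℕ, |∫ s in a p..a (p+1), G s| ≤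
      (d:ℝ)*ε'*(a (p+1) - a p) + (d:ℝ)*Cg*(2/(n:ℝ)) := by
    intro p
    set c : Fin d → ℝ := g (a p) with hcdef
    have hcb : ∀ j : Fin d, |c j| ≤ Cg := fun j => hgjb (a p) j
    set Gc : ℝ → ℝ := fun s => ∑ j, c j * M ((n:ℝ)*s) j i with hGcdef
    have hGcii : ∀ u v : ℝ, IntervalIntegrable Gc volume u v := by
      apply ii_of_bdd (C := (d:ℝ)*Cg)
      · exact Finset.measurable_sum _ fun j _ => ((hMn j i).const_mul (c j))
      · intro s
        calc |Gc s| ≤ ∑ j, |c j * M ((n:ℝ)*s) j i| := Finset.abs_sum_le_sum_abs _ _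
          _ ≤ ∑ _j : Fin d, Cg := by
              apply Finset.sum_le_sum
              intro j _
              rw [abs_mul]
              calc |c j| * |M ((n:ℝ)*s) j i| ≤ Cg * 1 :=
                    mul_le_mul (hcb j) (hMb _ j i) (abs_nonneg _) hCg0
                _ = Cg := mul_one Cg
          _ = (d:ℝ)*Cg := by simp [Finset.sum_const, Finset.card_univ, nsmul_eq_mul]
    -- difference part
    have hdiff : |∫ s in a p..a (p+1), (G s - Gc s)| ≤ (d:ℝ)*ε'*(a (p+1) - a p) := by
      have hbd : ∀ x ∈ Set.uIoc (a p) (a (p+1)), ‖G x - Gc x‖ ≤ (d:ℝ)*ε' := by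
        intro x hx
        rw [Set.uIoc_of_le (hamono p)] at hx
        have hdist : dist x (a p) < δ := by
          rw [Real.dist_eq, abs_of_nonneg (by linarith [hx.1.le] : (0:ℝ) ≤ x - a p)]
          have := hlen p
          linarith [hx.2, hkδ]
        have hgd := (hδ hdist).le
        rw [Real.norm_eq_abs]
        calc |G x - Gc x| = |∑ j, (g x j - c j) * M ((n:ℝ)*x) j i| := by
              congr 1
              rw [hGdef, hGcdef]
              simp only
              rw [← Finset.sum_sub_distrib]
              apply Finset.sum_congr rfl
              intro j _
              ring
          _ ≤ ∑ j, |(g x j - c j) * M ((n:ℝ)*x) j i| := Finset.abs_sum_le_sum_abs _ _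
          _ ≤ ∑ _j : Fin d, ε' := by
              apply Finset.sum_le_sum
              intro j _
              rw [abs_mul]
              have hcomp' : |g x j - c j| ≤ ε' := by
                have h1 : ‖(g x - c) j‖ ≤ ‖g x - c‖ := norm_le_pi_norm _ j
                rw [dist_eq_norm] at hgd
                simpa [Real.norm_eq_abs] using h1.trans hgd
              calc |g x j - c j| * |M ((n:ℝ)*x) j i| ≤ ε' * 1 :=
                    mul_le_mul hcomp' (hMb _ j i) (abs_nonneg _) hε'.le
                _ = ε' := mul_one ε'
          _ = (d:ℝ)*ε' := by simp [Finset.sum_const, Finset.card_univ, nsmul_eq_mul]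
      have := intervalIntegral.norm_integral_le_of_norm_le_const hbd
      rw [Real.norm_eq_abs] at this
      refine this.trans ?_
      rw [abs_of_nonneg (by linarith [hamono p])]
    -- constant part
    have hconst : |∫ s in a p..a (p+1), Gc s| ≤ (d:ℝ)*Cg*(2/(n:ℝ)) := by
      have heq : ∫ s in a p..a (p+1), Gc s
          = ∑ j, c j * ∫ s in a p..a (p+1), M ((n:ℝ)*s) j i := by
        rw [hGcdef]
        rw [intervalIntegral.integral_finset_sum]
        · apply Finset.sum_congr rfl
          intro j _
          exact intervalIntegral.integral_const_mul _ _
        · intro j _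
          apply ii_of_bdd (C := Cg) ((hMn j i).const_mul (c j))
          intro s
          rw [abs_mul]
          calc |c j| * |M ((n:ℝ)*s) j i| ≤ Cg * 1 :=
                mul_le_mul (hcb j) (hMb _ j i) (abs_nonneg _) hCg0
            _ = Cg := mul_one Cg
      rw [heq]
      calc |∑ j, c j * ∫ s in a p..a (p+1), M ((n:ℝ)*s) j i|
          ≤ ∑ j, |c j * ∫ s in a p..a (p+1), M ((n:ℝ)*s) j i| := Finset.abs_sum_le_sum_abs _ _
        _ ≤ ∑ _j : Fin d, Cg * (2/(n:ℝ)) := by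
            apply Finset.sum_le_sum
            intro j _
            rw [abs_mul]
            exact mul_le_mul (hcb j) (key2 i j hn1 (hanneg p) (hanneg (p+1)))
              (abs_nonneg _) hCg0
        _ = (d:ℝ)*(Cg*(2/(n:ℝ))) := by simp [Finset.sum_const, Finset.card_univ, nsmul_eq_mul]
        _ = (d:ℝ)*Cg*(2/(n:ℝ)) := by ring
    -- combine
    have hsplit : ∫ s in a p..a (p+1), G s
        = (∫ s in a p..a (p+1), (G s - Gc s)) + ∫ s in a p..a (p+1), Gc s := by
      rw [intervalIntegral.integral_sub (hGii _ _) (hGcii _ _)]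
      ring
    rw [hsplit]
    exact (abs_add_le _ _).trans (by linarith)
  -- sum up the pieces
  have hGbound : |∫ s in Set.Icc (0:ℝ) t, G s| ≤ (d:ℝ)*ε' + 2*(k:ℝ)*(d:ℝ)*Cg/n := by
    have hconv : ∫ s in Set.Icc (0:ℝ) t, G s = ∫ s in (0:ℝ)..t, G s := by
      rw [MeasureTheory.integral_Icc_eq_integral_Ioc, intervalIntegral.integral_of_le ht0]
    have hsum : ∑ p ∈ Finset.range k, ∫ s in a p..a (p+1), G s = ∫ s in (0:ℝ)..t, G s := by
      rw [intervalIntegral.sum_integral_adjacent_intervals (fun p _ => hGii _ _), ha0, hak]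
    rw [hconv, ← hsum]
    calc |∑ p ∈ Finset.range k, ∫ s in a p..a (p+1), G s|
        ≤ ∑ p ∈ Finset.range k, |∫ s in a p..a (p+1), G s| := Finset.abs_sum_le_sum_abs _ _
      _ ≤ ∑ p ∈ Finset.range k, ((d:ℝ)*ε'*(a (p+1) - a p) + (d:ℝ)*Cg*(2/(n:ℝ))) :=
          Finset.sum_le_sum fun p _ => piece p
      _ = (d:ℝ)*ε'*(a k - a 0) + (k:ℝ)*((d:ℝ)*Cg*(2/(n:ℝ))) := by
          rw [Finset.sum_add_distrib, ← Finset.mul_sum, Finset.sum_range_sub a,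
            Finset.sum_const, Finset.card_range, nsmul_eq_mul]
      _ ≤ (d:ℝ)*ε' + 2*(k:ℝ)*(d:ℝ)*Cg/n := by
          rw [ha0, hak]
          have h1 : (d:ℝ)*ε'*(t - 0) ≤ (d:ℝ)*ε'*1 := by
            apply mul_le_mul_of_nonneg_left (by linarith) (by positivity)
          have h2 : (k:ℝ)*((d:ℝ)*Cg*(2/(n:ℝ))) = 2*(k:ℝ)*(d:ℝ)*Cg/n := by ring
          linarith
  rw [hsplitFG]
  exact (abs_add_le _ _).trans (by linarith)

end Auxiliary

/-- For a bounded measurable 1-periodic orthogonal-matrix valued map `M` with zero mean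
over a period and `ξ ∈ L²([0,1], ℝ^d)`, `sup_{t∈[0,1]} |∫₀^t ξ(s)* M(ns) ds| → 0`. -/
theorem sup_integral_periodic_orthogonal_tendsto_zero
    {d : ℕ} (M : ℝ → Matrix (Fin d) (Fin d) ℝ) (hMmeas : ∀ i j, Measurable fun s => M s i j)
    (hOrth : ∀ s, M s ∈ Matrix.orthogonalGroup (Fin d) ℝ)
    (hper : Function.Periodic M 1)
    (hmean : ∀ i j, ∫ s in Set.Icc (0:ℝ) 1, M s i j = 0)
    (ξ : ℝ → (Fin d → ℝ)) (hξ : MeasureTheory.MemLp ξ 2 (volume.restrict (Set.Icc (0:ℝ) 1))) :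
    Tendsto
      (fun n : ℕ => ⨆ t : Set.Icc (0:ℝ) 1,
        ‖∫ s in Set.Icc (0:ℝ) (t : ℝ), Matrix.vecMul (ξ s) (M ((n : ℝ) * s))‖)
      atTop (nhds 0) := by
  -- basic facts about M
  have hMb : ∀ s (i j : Fin d), |M s i j| ≤ 1 := fun s i j => entry_bd hOrth s i j
  have hperE : ∀ i j : Fin d, Function.Periodic (fun s => M s i j) 1 := fun i j s => by
    simpa using congrFun (congrFun (hper s) i) j
  have h0E : ∀ i j : Fin d, ∫ s in (0:ℝ)..1, M s i j = 0 := by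
    intro i j
    rw [intervalIntegral.integral_of_le zero_le_one, ← MeasureTheory.integral_Icc_eq_integral_Ioc]
    exact hmean i j
  have key2 : ∀ (i j : Fin d) {n : ℕ}, 1 ≤ n → ∀ {a b : ℝ}, 0 ≤ a → 0 ≤ b →
      |∫ s in a..b, M ((n:ℝ) * s) j i| ≤ 2 / n := fun i j {n} hn {a b} ha hb =>
    key_scalar2 (hMmeas j i) (fun s => hMb s j i) (hperE j i) (h0E j i) hn ha hb
  -- integrability of ξ
  haveI : IsFiniteMeasure (volume.restrict (Set.Icc (0:ℝ) 1)) := by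
    constructor
    rw [Measure.restrict_apply_univ, Real.volume_Icc]
    norm_num
  have hξ1 : Integrable ξ (volume.restrict (Set.Icc (0:ℝ) 1)) := hξ.integrable one_le_two
  have hξj : ∀ j : Fin d, Integrable (fun s => ξ s j) (volume.restrict (Set.Icc (0:ℝ) 1)) :=
    fun j => by
      simpa using
        (ContinuousLinearMap.proj (R := ℝ) (φ := fun _ : Fin d => ℝ) j).integrable_comp hξ1
  set ξ' : ℝ → (Fin d → ℝ) := Set.indicator (Set.Icc (0:ℝ) 1) ξ with hξ'def
  have hξ'int : Integrable ξ' volume := (integrable_indicator_iff measurableSet_Icc).2 hξ1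
  -- start of the ε-argument
  rw [Metric.tendsto_atTop]
  intro ε hε
  set ε' := ε / (6 * ((d:ℝ)+1)) with hε'def
  have hε' : 0 < ε' := by positivity
  obtain ⟨g, g_supp, g_close, g_cont, g_int⟩ :=
    hξ'int.exists_hasCompactSupport_integral_sub_le hε'
  obtain ⟨Cg, hCg⟩ := g_supp.exists_bound_of_continuous g_cont
  have hCg0 : 0 ≤ Cg := le_trans (norm_nonneg _) (hCg 0)
  obtain ⟨δ, hδ0, hδ⟩ := Metric.uniformContinuous_iff.mp
    (g_supp.uniformContinuous_of_continuous g_cont) ε' hε'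
  set k : ℕ := ⌈1/δ⌉₊ + 1 with hkdef
  have hkpos : (0:ℝ) < k := by positivity
  have hkδ : 1/(k:ℝ) < δ := by
    have h1 : 1/δ < (k:ℝ) := by
      calc 1/δ ≤ (⌈1/δ⌉₊ : ℝ) := Nat.le_ceil _
        _ < (k:ℝ) := by rw [hkdef]; push_cast; linarith
    rw [div_lt_iff₀ hkpos]
    have h2 : 1 < (k:ℝ) * δ := (div_lt_iff₀ hδ0).mp h1
    linarith
  -- componentwise L¹ closeness of g to ξ on [0,1]
  have hcomp : ∀ j : Fin d, ∫ s in Set.Icc (0:ℝ) 1, |ξ s j - g s j| ≤ ε' := by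
    intro j
    have hsub : Integrable (fun x => ξ' x - g x) volume := hξ'int.sub g_int
    have hsubj : Integrable (fun x => ξ' x j - g x j) volume := by
      have := (ContinuousLinearMap.proj (R := ℝ) (φ := fun _ : Fin d => ℝ) j).integrable_comp hsub
      simpa using this
    calc ∫ s in Set.Icc (0:ℝ) 1, |ξ s j - g s j|
        = ∫ s in Set.Icc (0:ℝ) 1, |ξ' s j - g s j| := by
          apply setIntegral_congr_fun measurableSet_Icc
          intro s hs
          simp only [hξ'def, Set.indicator_of_mem hs]
      _ ≤ ∫ s in Set.Icc (0:ℝ) 1, ‖ξ' s - g s‖ := by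
          apply integral_mono hsubj.abs.restrict hsub.norm.restrict
          intro s
          have h1 : ‖(ξ' s - g s) j‖ ≤ ‖ξ' s - g s‖ := norm_le_pi_norm _ j
          simpa [Real.norm_eq_abs] using h1
      _ ≤ ∫ x, ‖ξ' x - g x‖ :=
          setIntegral_le_integral hsub.norm (Filter.Eventually.of_forall fun s => norm_nonneg _)
      _ ≤ ε' := g_close
  -- choose N
  have hev : ∀ᶠ n : ℕ in atTop, (2*(k:ℝ)*(d:ℝ)*Cg) / n < ε / 6 :=
    (tendsto_const_div_atTop_nhds_zero_nat _).eventually (gt_mem_nhds (by positivity))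
  obtain ⟨N, hN⟩ := eventually_atTop.mp (hev.and (eventually_ge_atTop 1))
  refine ⟨N, fun n hn => ?_⟩
  obtain ⟨hC₀, hn1⟩ := hN n hn
  set B := (d:ℝ)*ε' + ((d:ℝ)*ε' + 2*(k:ℝ)*(d:ℝ)*Cg/(n:ℝ)) with hBdef
  have hB0 : 0 ≤ B := by positivity
  -- uniform-in-t estimate
  have main : ∀ t : ℝ, 0 ≤ t → t ≤ 1 →
      ‖∫ s in Set.Icc (0:ℝ) t, Matrix.vecMul (ξ s) (M ((n:ℝ) * s))‖ ≤ B := by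
    intro t ht0 ht1
    have hMn : ∀ j i : Fin d, Measurable fun s => M ((n:ℝ)*s) j i :=
      fun j i => (hMmeas j i).comp (measurable_const_mul _)
    have hmono : volume.restrict (Set.Icc (0:ℝ) t) ≤ volume.restrict (Set.Icc (0:ℝ) 1) :=
      Measure.restrict_mono (Set.Icc_subset_Icc_right ht1) le_rfl
    have hVint : Integrable (fun s => Matrix.vecMul (ξ s) (M ((n:ℝ) * s)))
        (volume.restrict (Set.Icc (0:ℝ) t)) := by
      have hVeq : (fun s => Matrix.vecMul (ξ s) (M ((n:ℝ) * s)))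
          = fun s => ∑ j, (ξ s j) • (M ((n:ℝ)*s) j) := by
        funext s
        ext i'
        simp [Matrix.vecMul, dotProduct, Finset.sum_apply]
      rw [hVeq]
      apply integrable_finset_sum
      intro j _
      have hrow : MemLp (fun s => M ((n:ℝ)*s) j) ⊤ (volume.restrict (Set.Icc (0:ℝ) t)) := by
        apply memLp_top_of_bound (C := 1)
        · exact (measurable_pi_lambda _ fun i' => hMn j i').aestronglyMeasurable.restrict
        · apply Filter.Eventually.of_forall
          intro s
          rw [pi_norm_le_iff_of_nonneg zero_le_one]
          intro i'
          simpa [Real.norm_eq_abs] using hMb ((n:ℝ)*s) j i'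
      have hφ : Integrable (fun s => ξ s j) (volume.restrict (Set.Icc (0:ℝ) t)) :=
        (hξj j).mono_measure hmono
      exact hφ.smul_of_top_left hrow
    rw [pi_norm_le_iff_of_nonneg hB0]
    intro i
    rw [Real.norm_eq_abs]
    have hcompI : (∫ s in Set.Icc (0:ℝ) t, Matrix.vecMul (ξ s) (M ((n:ℝ) * s))) i
        = ∫ s in Set.Icc (0:ℝ) t, ∑ j, ξ s j * M ((n:ℝ) * s) j i := by
      calc (∫ s in Set.Icc (0:ℝ) t, Matrix.vecMul (ξ s) (M ((n:ℝ) * s))) i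
          = ∫ s in Set.Icc (0:ℝ) t, (Matrix.vecMul (ξ s) (M ((n:ℝ) * s))) i :=
            ((ContinuousLinearMap.proj (R := ℝ) (φ := fun _ : Fin d => ℝ) i).integral_comp_comm
              hVint).symm
        _ = ∫ s in Set.Icc (0:ℝ) t, ∑ j, ξ s j * M ((n:ℝ) * s) j i := by
            apply MeasureTheory.integral_congr_ae
            filter_upwards with s
            simp [Matrix.vecMul, dotProduct]
    rw [hcompI, hBdef]
    exact scalar_est M hMmeas hMb ξ g g_cont hξj Cg hCg hCg0 δ ε' hε' hδ hcomp
      k n hkpos hkδ hn1 key2 ht0 ht1 i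
  -- conclude
  haveI : Nonempty (Set.Icc (0:ℝ) 1) := ⟨⟨0, le_rfl, zero_le_one⟩⟩
  have hsupnn : 0 ≤ ⨆ t : Set.Icc (0:ℝ) 1,
      ‖∫ s in Set.Icc (0:ℝ) (t : ℝ), Matrix.vecMul (ξ s) (M ((n:ℝ) * s))‖ :=
    Real.iSup_nonneg fun t => norm_nonneg _
  have hsuple : (⨆ t : Set.Icc (0:ℝ) 1,
      ‖∫ s in Set.Icc (0:ℝ) (t : ℝ), Matrix.vecMul (ξ s) (M ((n:ℝ) * s))‖) ≤ B :=
    ciSup_le fun tt => main tt tt.2.1 tt.2.2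
  have hd6 : (d:ℝ)*ε' ≤ ε/6 := by
    rw [hε'def, ← mul_div_assoc, div_le_div_iff₀ (by positivity) (by norm_num : (0:ℝ) < 6)]
    nlinarith [hε.le, Nat.cast_nonneg (α := ℝ) d]
  have hB : B < ε := by
    rw [hBdef]
    have := hC₀
    linarith
  rw [Real.dist_eq, sub_zero, abs_of_nonneg hsupnn]
  exact lt_of_le_of_lt hsuple hB
end

section
/- Let θ be bounded measurable 1-periodic with mean 0 and mean square 1. For every f ∈ L¹([0,1]) and every continuous bounded g : ℝ → ℝ, ∫₀¹ f(s) g(θ(ns)) ds → ∫₀¹ f(s) ds · ∫₀¹ g(θ(u)) du as n → ∞. -/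
open MeasureTheory Filter

open intervalIntegral

private lemma aux_ii {G : ℝ → ℝ} {C : ℝ} (hGm : Measurable G) (hGb : ∀ x, |G x| ≤ C)
    (a b : ℝ) : IntervalIntegrable G volume a b := by
  rw [intervalIntegrable_iff]
  exact Measure.integrableOn_of_bounded (measure_Ioc_lt_top).ne hGm.aestronglyMeasurable
    (ae_of_all _ fun x => by simpa [Real.norm_eq_abs] using hGb x)

private lemma aux_mb {G : ℝ → ℝ} {C : ℝ} (hGb : ∀ x, |G x| ≤ C) (a b : ℝ) (h : |b - a| ≤ 1) :
    |∫ t in a..b, G t| ≤ C := by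
  have hC : 0 ≤ C := le_trans (abs_nonneg _) (hGb 0)
  have := intervalIntegral.norm_integral_le_of_norm_le_const
    (C := C) (f := G) (a := a) (b := b) (fun y _ => by simpa [Real.norm_eq_abs] using hGb y)
  rw [Real.norm_eq_abs] at this
  nlinarith [abs_nonneg (b - a)]

private lemma aux_F {G : ℝ → ℝ} {C : ℝ} (hGm : Measurable G) (hGb : ∀ x, |G x| ≤ C)
    (hper : Function.Periodic G 1) (x : ℝ) :
    |(∫ t in (0:ℝ)..x, G t) - x * ∫ t in (0:ℝ)..1, G t| ≤ 2 * C := by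
  have hC : 0 ≤ C := le_trans (abs_nonneg _) (hGb 0)
  have hii := aux_ii hGm hGb
  set m : ℝ := ∫ t in (0:ℝ)..1, G t with hm
  have hmb : |m| ≤ C := aux_mb hGb 0 1 (by norm_num)
  have h1 : (∫ t in Int.fract x..x, G t) = (⌊x⌋ : ℝ) * m := by
    have h0 := hper.intervalIntegral_add_zsmul_eq ⌊x⌋ (Int.fract x) hii
    have hfr : Int.fract x + (⌊x⌋ : ℤ) • (1:ℝ) = x := by
      rw [zsmul_eq_mul, mul_one]; exact Int.fract_add_floor x
    rw [hfr] at h0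
    rw [h0, hper.intervalIntegral_add_eq (Int.fract x) 0, zero_add, zsmul_eq_mul, ← hm]
  have h2 : (∫ t in (0:ℝ)..x, G t) = (∫ t in (0:ℝ)..Int.fract x, G t) + (⌊x⌋:ℝ) * m := by
    rw [← integral_add_adjacent_intervals (hii 0 (Int.fract x)) (hii (Int.fract x) x), h1]
  have h3 : |∫ t in (0:ℝ)..Int.fract x, G t| ≤ C := by
    apply aux_mb hGb
    rw [sub_zero, abs_of_nonneg (Int.fract_nonneg x)]
    exact (Int.fract_lt_one x).le
  have h5 : |(⌊x⌋:ℝ) - x| ≤ 1 := by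
    rw [abs_sub_comm, Int.self_sub_floor, abs_of_nonneg (Int.fract_nonneg x)]
    exact (Int.fract_lt_one x).le
  have key : (∫ t in (0:ℝ)..x, G t) - x * m
      = (∫ t in (0:ℝ)..Int.fract x, G t) + ((⌊x⌋:ℝ) - x) * m := by rw [h2]; ring
  rw [key]
  calc |(∫ t in (0:ℝ)..Int.fract x, G t) + ((⌊x⌋:ℝ) - x) * m|
      ≤ |∫ t in (0:ℝ)..Int.fract x, G t| + |((⌊x⌋:ℝ) - x) * m| := abs_add_le _ _
    _ ≤ C + 1 * C := by
        refine add_le_add h3 ?_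
        rw [abs_mul]
        exact mul_le_mul h5 hmb (abs_nonneg _) zero_le_one
    _ = 2 * C := by ring

private lemma aux_interval {G : ℝ → ℝ} {C : ℝ} (hGm : Measurable G) (hGb : ∀ x, |G x| ≤ C)
    (hper : Function.Periodic G 1) (a b : ℝ) :
    Tendsto (fun n : ℕ => ∫ s in a..b, G ((n:ℝ) * s)) atTop
      (nhds ((b - a) * ∫ t in (0:ℝ)..1, G t)) := by
  have hC : 0 ≤ C := le_trans (abs_nonneg _) (hGb 0)
  set m : ℝ := ∫ t in (0:ℝ)..1, G t with hm
  rw [← tendsto_sub_nhds_zero_iff]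
  apply squeeze_zero_norm' (a := fun n : ℕ => 4 * C / n)
  · filter_upwards [eventually_ge_atTop 1] with n hn
    have hn0 : (0:ℝ) < n := by exact_mod_cast Nat.lt_of_lt_of_le Nat.zero_lt_one hn
    have hint : (∫ s in a..b, G ((n:ℝ) * s)) = (n:ℝ)⁻¹ * ∫ t in (n:ℝ)*a..(n:ℝ)*b, G t := by
      rw [intervalIntegral.integral_comp_mul_left G hn0.ne', smul_eq_mul]
    have hsub : (∫ t in (n:ℝ)*a..(n:ℝ)*b, G t)
        = (∫ t in (0:ℝ)..(n:ℝ)*b, G t) - ∫ t in (0:ℝ)..(n:ℝ)*a, G t :=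
      (intervalIntegral.integral_interval_sub_left (aux_ii hGm hGb 0 _)
        (aux_ii hGm hGb 0 _)).symm
    have h1 := aux_F hGm hGb hper ((n:ℝ)*b)
    have h2 := aux_F hGm hGb hper ((n:ℝ)*a)
    rw [Real.norm_eq_abs]
    have hkey : (∫ s in a..b, G ((n:ℝ) * s)) - (b - a) * m
        = (n:ℝ)⁻¹ * (((∫ t in (0:ℝ)..(n:ℝ)*b, G t) - (n:ℝ)*b*m)
            - ((∫ t in (0:ℝ)..(n:ℝ)*a, G t) - (n:ℝ)*a*m)) := by
      rw [hint, hsub]; field_simp; ring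
    rw [hkey, abs_mul, abs_inv, abs_of_pos hn0]
    have hD : |((∫ t in (0:ℝ)..(n:ℝ)*b, G t) - (n:ℝ)*b*m)
        - ((∫ t in (0:ℝ)..(n:ℝ)*a, G t) - (n:ℝ)*a*m)| ≤ 4 * C := by
      have := abs_sub_abs_le_abs_sub ((∫ t in (0:ℝ)..(n:ℝ)*b, G t) - (n:ℝ)*b*m)
        ((∫ t in (0:ℝ)..(n:ℝ)*a, G t) - (n:ℝ)*a*m)
      have habs := abs_sub ((∫ t in (0:ℝ)..(n:ℝ)*b, G t) - (n:ℝ)*b*m)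
        ((∫ t in (0:ℝ)..(n:ℝ)*a, G t) - (n:ℝ)*a*m)
      linarith
    calc (n:ℝ)⁻¹ * |_| ≤ (n:ℝ)⁻¹ * (4*C) := by gcongr
      _ = 4 * C / n := by ring
  · exact tendsto_const_div_atTop_nhds_zero_nat (4*C)

private lemma aux_cont {G : ℝ → ℝ} {C : ℝ} (hGm : Measurable G) (hGb : ∀ x, |G x| ≤ C)
    (hper : Function.Periodic G 1) (φ : ℝ → ℝ) (hφ : Continuous φ) {M : ℝ}
    (hφb : ∀ x, |φ x| ≤ M) :
    Tendsto (fun n : ℕ => ∫ s in (0:ℝ)..1, φ s * G ((n:ℝ) * s)) atTop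
      (nhds ((∫ s in (0:ℝ)..1, φ s) * ∫ t in (0:ℝ)..1, G t)) := by
  have hC : 0 ≤ C := le_trans (abs_nonneg _) (hGb 0)
  have hM : 0 ≤ M := le_trans (abs_nonneg _) (hφb 0)
  set m : ℝ := ∫ t in (0:ℝ)..1, G t with hm
  have hmb : |m| ≤ C := aux_mb hGb 0 1 (by norm_num)
  rw [Metric.tendsto_atTop]
  intro ε hε
  set ε' : ℝ := ε / (2*C + 2) with hε'def
  have hε' : 0 < ε' := div_pos hε (by linarith)
  -- uniform continuity on [0,1]
  obtain ⟨δ, hδ0, hδ⟩ := Metric.uniformContinuousOn_iff.mp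
    ((isCompact_Icc (a := (0:ℝ)) (b := 1)).uniformContinuousOn_of_continuous
      hφ.continuousOn) ε' hε'
  obtain ⟨k0, hk0⟩ := exists_nat_one_div_lt hδ0
  set k : ℕ := k0 + 1 with hkdef
  have hk1 : 1 ≤ k := Nat.le_add_left 1 k0
  have hkpos : (0:ℝ) < k := by positivity
  have hkδ : 1 / (k:ℝ) < δ := by
    rw [hkdef]; push_cast; exact hk0
  set a : ℕ → ℝ := fun j => (j:ℝ) / k with hadef
  have ha0 : a 0 = 0 := by simp [hadef]
  have hak : a k = 1 := by
    simp only [hadef]; exact div_self hkpos.ne'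
  have haΔ : ∀ j : ℕ, a (j+1) - a j = 1 / k := by
    intro j; simp only [hadef]; push_cast; rw [div_sub_div_same]; norm_num
  have hamono : ∀ j : ℕ, a j ≤ a (j+1) := by
    intro j
    have h := haΔ j
    have h2 : (0:ℝ) < 1 / k := by positivity
    linarith
  have hasub : ∀ j : ℕ, j < k → Set.uIcc (a j) (a (j+1)) ⊆ Set.Icc (0:ℝ) 1 := by
    intro j hj
    rw [Set.uIcc_of_le (hamono j)]
    apply Set.Icc_subset_Icc
    · simp only [hadef]; positivity
    · simp only [hadef]
      rw [div_le_one hkpos]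
      exact_mod_cast hj
  -- integrability
  have hGnb : ∀ n : ℕ, ∀ x, |G ((n:ℝ) * x)| ≤ C := fun n x => hGb _
  have hGnm : ∀ n : ℕ, Measurable (fun s => G ((n:ℝ) * s)) :=
    fun n => hGm.comp (measurable_const_mul _)
  have hGni : ∀ (n : ℕ) (c d : ℝ), IntervalIntegrable (fun s => G ((n:ℝ) * s)) volume c d :=
    fun n c d => aux_ii (hGnm n) (hGnb n) c d
  have hprodb : ∀ n : ℕ, ∀ x, |φ x * G ((n:ℝ) * x)| ≤ M * C := by
    intro n x
    rw [abs_mul]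
    exact mul_le_mul (hφb x) (hGnb n x) (abs_nonneg _) hM
  have hprodi : ∀ (n : ℕ) (c d : ℝ),
      IntervalIntegrable (fun s => φ s * G ((n:ℝ) * s)) volume c d :=
    fun n c d => aux_ii (hφ.measurable.mul (hGnm n)) (hprodb n) c d
  -- piecewise decomposition of T n
  have hTsum : ∀ n : ℕ, (∫ s in (0:ℝ)..1, φ s * G ((n:ℝ) * s))
      = ∑ j ∈ Finset.range k, ∫ s in a j..a (j+1), φ s * G ((n:ℝ) * s) := by
    intro n
    rw [intervalIntegral.sum_integral_adjacent_intervals (fun j _ => hprodi n _ _), ha0, hak]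
  have hφsum : (∫ s in (0:ℝ)..1, φ s)
      = ∑ j ∈ Finset.range k, ∫ s in a j..a (j+1), φ s := by
    rw [intervalIntegral.sum_integral_adjacent_intervals
      (fun j _ => hφ.intervalIntegrable _ _), ha0, hak]
  -- the step-function comparison term
  set A : ℕ → ℝ := fun n => ∑ j ∈ Finset.range k,
    φ (a j) * ∫ s in a j..a (j+1), G ((n:ℝ) * s) with hAdef
  set B : ℝ := ∑ j ∈ Finset.range k, φ (a j) * ((a (j+1) - a j) * m) with hBdef
  -- closeness of φ values on each piece
  have hφclose : ∀ j : ℕ, j < k → ∀ s ∈ Set.uIcc (a j) (a (j+1)), |φ s - φ (a j)| ≤ ε' := by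
    intro j hj s hs
    have hsub := hasub j hj
    have hs' : s ∈ Set.Icc (0:ℝ) 1 := hsub hs
    have haj : a j ∈ Set.Icc (0:ℝ) 1 := hsub (Set.left_mem_uIcc)
    have hd : dist s (a j) < δ := by
      rw [Set.uIcc_of_le (hamono j)] at hs
      rw [Real.dist_eq]
      have h1 : s - a j ≤ 1/k := by
        have := hs.2; have := haΔ j; linarith
      have h2 : 0 ≤ s - a j := by linarith [hs.1]
      rw [abs_of_nonneg h2]; linarith
    have := hδ s hs' (a j) haj hd
    rw [Real.dist_eq] at this
    exact this.le
  -- |T n - A n| ≤ ε' * C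
  have key1 : ∀ n : ℕ, |(∫ s in (0:ℝ)..1, φ s * G ((n:ℝ) * s)) - A n| ≤ ε' * C := by
    intro n
    rw [hTsum n, hAdef, ← Finset.sum_sub_distrib]
    calc |∑ j ∈ Finset.range k, ((∫ s in a j..a (j+1), φ s * G ((n:ℝ) * s))
            - φ (a j) * ∫ s in a j..a (j+1), G ((n:ℝ) * s))|
        ≤ ∑ j ∈ Finset.range k, |(∫ s in a j..a (j+1), φ s * G ((n:ℝ) * s))
            - φ (a j) * ∫ s in a j..a (j+1), G ((n:ℝ) * s)| := Finset.abs_sum_le_sum_abs _ _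
      _ ≤ ∑ j ∈ Finset.range k, ε' * C * (1/k) := by
          apply Finset.sum_le_sum
          intro j hj
          have hjk : j < k := Finset.mem_range.mp hj
          have heq : (∫ s in a j..a (j+1), φ s * G ((n:ℝ) * s))
              - φ (a j) * ∫ s in a j..a (j+1), G ((n:ℝ) * s)
              = ∫ s in a j..a (j+1), (φ s - φ (a j)) * G ((n:ℝ) * s) := by
            rw [← intervalIntegral.integral_const_mul,
              ← intervalIntegral.integral_sub (hprodi n _ _) ((hGni n _ _).const_mul _)]
            congr 1; ext s; ring
          rw [heq]
          have hbound := intervalIntegral.norm_integral_le_of_norm_le_const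
            (C := ε' * C) (f := fun s => (φ s - φ (a j)) * G ((n:ℝ) * s))
            (a := a j) (b := a (j+1)) ?_
          · rw [Real.norm_eq_abs] at hbound
            calc |∫ s in a j..a (j+1), (φ s - φ (a j)) * G ((n:ℝ) * s)|
                ≤ ε' * C * |a (j+1) - a j| := hbound
              _ = ε' * C * (1/k) := by
                  rw [haΔ j, abs_of_nonneg (by positivity)]
          · intro s hs
            rw [Real.norm_eq_abs, abs_mul]
            exact mul_le_mul (hφclose j hjk s (Set.uIoc_subset_uIcc hs)) (hGnb n s)
              (abs_nonneg _) hε'.le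
      _ = ε' * C := by
          rw [Finset.sum_const, Finset.card_range, nsmul_eq_mul]
          field_simp
  -- |B - (∫φ) m| ≤ ε' * C
  have key2 : |B - (∫ s in (0:ℝ)..1, φ s) * m| ≤ ε' * C := by
    have hBrw : B - (∫ s in (0:ℝ)..1, φ s) * m
        = (∑ j ∈ Finset.range k, (φ (a j) * (a (j+1) - a j) - ∫ s in a j..a (j+1), φ s)) * m := by
      rw [hBdef, hφsum]
      simp only [Finset.sum_mul]
      rw [← Finset.sum_sub_distrib]
      exact Finset.sum_congr rfl fun j _ => by ring
    rw [hBrw, abs_mul]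
    have hsumb : |∑ j ∈ Finset.range k,
        (φ (a j) * (a (j+1) - a j) - ∫ s in a j..a (j+1), φ s)| ≤ ε' := by
      calc |∑ j ∈ Finset.range k, (φ (a j) * (a (j+1) - a j) - ∫ s in a j..a (j+1), φ s)|
          ≤ ∑ j ∈ Finset.range k, |φ (a j) * (a (j+1) - a j) - ∫ s in a j..a (j+1), φ s| :=
            Finset.abs_sum_le_sum_abs _ _
        _ ≤ ∑ j ∈ Finset.range k, ε' * (1/k) := by
            apply Finset.sum_le_sum
            intro j hj
            have hjk : j < k := Finset.mem_range.mp hj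
            have heq : φ (a j) * (a (j+1) - a j) - (∫ s in a j..a (j+1), φ s)
                = ∫ s in a j..a (j+1), (φ (a j) - φ s) := by
              rw [intervalIntegral.integral_sub (intervalIntegrable_const)
                (hφ.intervalIntegrable _ _), intervalIntegral.integral_const, smul_eq_mul]
              ring
            rw [heq]
            have hbound := intervalIntegral.norm_integral_le_of_norm_le_const
              (C := ε') (f := fun s => φ (a j) - φ s) (a := a j) (b := a (j+1)) ?_
            · rw [Real.norm_eq_abs] at hbound
              calc |∫ s in a j..a (j+1), (φ (a j) - φ s)| ≤ ε' * |a (j+1) - a j| := hbound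
                _ = ε' * (1/k) := by rw [haΔ j, abs_of_nonneg (by positivity)]
            · intro s hs
              rw [Real.norm_eq_abs, abs_sub_comm]
              exact hφclose j hjk s (Set.uIoc_subset_uIcc hs)
        _ = ε' := by rw [Finset.sum_const, Finset.card_range, nsmul_eq_mul]; field_simp
    exact mul_le_mul hsumb hmb (abs_nonneg _) hε'.le
  -- A n → B
  have htendA : Tendsto A atTop (nhds B) := by
    rw [hAdef, hBdef]
    exact tendsto_finset_sum _ fun j _ =>
      (aux_interval hGm hGb hper (a j) (a (j+1))).const_mul (φ (a j))
  obtain ⟨N, hN⟩ := Metric.tendsto_atTop.mp htendA ε' hε'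
  refine ⟨N, fun n hn => ?_⟩
  have hAB := hN n hn
  rw [Real.dist_eq] at hAB ⊢
  have h1 := key1 n
  have htotal := abs_sub_le (∫ s in (0:ℝ)..1, φ s * G ((n:ℝ) * s)) (A n)
    ((∫ s in (0:ℝ)..1, φ s) * m)
  have htotal2 := abs_sub_le (A n) B ((∫ s in (0:ℝ)..1, φ s) * m)
  have hfin : ε' * C + ε' + ε' * C < ε := by
    have hmul : ε' * (2*C + 2) = ε := div_mul_cancel₀ ε (by linarith)
    nlinarith
  linarith

/-- Asymptotic decoupling: for `θ` bounded measurable 1-periodic (mean 0, mean square 1),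
`f ∈ L¹([0,1])` and `g` continuous bounded,
`∫₀¹ f(s) g(θ(ns)) ds → (∫₀¹ f) · (∫₀¹ g(θ(u)) du)`. -/
theorem integral_decoupling_periodic
    (θ : ℝ → ℝ) (hθm : Measurable θ) (C : ℝ) (hθb : ∀ s, |θ s| ≤ C)
    (hper : Function.Periodic θ 1)
    (hmean : ∫ s in Set.Icc (0:ℝ) 1, θ s = 0)
    (hmsq : ∫ s in Set.Icc (0:ℝ) 1, (θ s)^2 = 1)
    (f : ℝ → ℝ) (hf : IntegrableOn f (Set.Icc (0:ℝ) 1) volume)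
    (g : BoundedContinuousFunction ℝ ℝ) :
    Tendsto (fun n : ℕ => ∫ s in Set.Icc (0:ℝ) 1, f s * g (θ ((n : ℝ) * s))) atTop
      (nhds ((∫ s in Set.Icc (0:ℝ) 1, f s) * ∫ u in Set.Icc (0:ℝ) 1, g (θ u))) := by
  classical
  set G : ℝ → ℝ := fun u => g (θ u) with hG
  have hGm : Measurable G := g.continuous.measurable.comp hθm
  have hGb : ∀ x, |G x| ≤ ‖g‖ := fun x => by
    simpa [Real.norm_eq_abs] using g.norm_coe_le_norm (θ x)
  have hper' : Function.Periodic G 1 := fun x => by simp [hG, hper x]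
  have hC : (0:ℝ) ≤ ‖g‖ := norm_nonneg g
  set m : ℝ := ∫ t in (0:ℝ)..1, G t with hm
  have hmb : |m| ≤ ‖g‖ := aux_mb hGb 0 1 (by norm_num)
  -- convert Icc integrals to interval integrals
  have hIcc_eq : ∀ h : ℝ → ℝ, (∫ s in Set.Icc (0:ℝ) 1, h s) = ∫ s in (0:ℝ)..1, h s := by
    intro h
    rw [integral_Icc_eq_integral_Ioc, intervalIntegral.integral_of_le zero_le_one]
  simp only [hIcc_eq]
  rw [show (∫ u in (0:ℝ)..1, g (θ u)) = m from rfl]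
  rw [Metric.tendsto_atTop]
  intro ε hε
  set ε' : ℝ := ε / (2*‖g‖ + 2) with hε'def
  have hε' : 0 < ε' := div_pos hε (by linarith)
  -- approximate f in L¹ by a compactly supported continuous function
  set ft : ℝ → ℝ := (Set.Icc (0:ℝ) 1).indicator f with hft
  have hfti : Integrable ft := hf.integrable_indicator measurableSet_Icc
  obtain ⟨φ, hφcs, hφL1, hφc, hφint⟩ := hfti.exists_hasCompactSupport_integral_sub_le hε'
  obtain ⟨M, hM⟩ := hφc.bounded_above_of_compact_support hφcs
  have hφb : ∀ x, |φ x| ≤ M := fun x => by simpa [Real.norm_eq_abs] using hM x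
  have hcont := aux_cont hGm hGb hper' φ hφc hφb
  obtain ⟨N, hN⟩ := Metric.tendsto_atTop.mp hcont ε' hε'
  refine ⟨N, fun n hn => ?_⟩
  -- notation
  set Gn : ℝ → ℝ := fun s => G ((n:ℝ) * s) with hGn
  have hGnm : Measurable Gn := hGm.comp (measurable_const_mul _)
  have hGnb : ∀ x, |Gn x| ≤ ‖g‖ := fun x => hGb _
  -- integrability on Ioc 0 1
  have hmul_int : ∀ (ψ : ℝ → ℝ), IntegrableOn ψ (Set.Ioc (0:ℝ) 1) volume →
      IntegrableOn (fun s => ψ s * Gn s) (Set.Ioc (0:ℝ) 1) volume := by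
    intro ψ hψ
    have : Integrable (fun s => Gn s * ψ s) (volume.restrict (Set.Ioc (0:ℝ) 1)) :=
      Integrable.bdd_mul hψ hGnm.aestronglyMeasurable
        (c := ‖g‖) (ae_of_all _ fun x => by simpa [Real.norm_eq_abs] using hGnb x)
    exact this.congr (ae_of_all _ fun x => mul_comm _ _)
  have hfIoc : IntegrableOn f (Set.Ioc (0:ℝ) 1) volume :=
    hf.mono_set Set.Ioc_subset_Icc_self
  have hφIoc : IntegrableOn φ (Set.Ioc (0:ℝ) 1) volume := hφint.integrableOn
  -- L¹ distance between f and φ on Ioc 0 1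
  have hL1 : (∫ s in Set.Ioc (0:ℝ) 1, |f s - φ s|) ≤ ε' := by
    have h1 : (∫ s in Set.Ioc (0:ℝ) 1, |f s - φ s|)
        = ∫ s in Set.Ioc (0:ℝ) 1, ‖ft s - φ s‖ := by
      apply setIntegral_congr_fun measurableSet_Ioc
      intro x hx
      show |f x - φ x| = ‖ft x - φ x‖
      rw [hft, Set.indicator_of_mem (Set.Ioc_subset_Icc_self hx), Real.norm_eq_abs]
    have h2 : (∫ s in Set.Ioc (0:ℝ) 1, ‖ft s - φ s‖) ≤ ∫ s, ‖ft s - φ s‖ :=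
      setIntegral_le_integral (hfti.sub hφint).norm (ae_of_all _ fun x => norm_nonneg _)
    linarith
  -- d1 : difference between T_n f and T_n φ
  have d1 : |(∫ s in Set.Ioc (0:ℝ) 1, f s * Gn s) - ∫ s in Set.Ioc (0:ℝ) 1, φ s * Gn s|
      ≤ ‖g‖ * ε' := by
    rw [← integral_sub (hmul_int f hfIoc) (hmul_int φ hφIoc)]
    have hb : |∫ s in Set.Ioc (0:ℝ) 1, (f s * Gn s - φ s * Gn s)|
        ≤ ∫ s in Set.Ioc (0:ℝ) 1, ‖f s * Gn s - φ s * Gn s‖ := by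
      rw [← Real.norm_eq_abs]
      exact MeasureTheory.norm_integral_le_integral_norm _
    have hmono : (∫ s in Set.Ioc (0:ℝ) 1, ‖f s * Gn s - φ s * Gn s‖)
        ≤ ∫ s in Set.Ioc (0:ℝ) 1, ‖g‖ * |f s - φ s| := by
      apply integral_mono_of_nonneg (ae_of_all _ fun x => norm_nonneg _)
      · exact (((hfIoc.sub hφIoc).norm).const_mul ‖g‖).congr
          (ae_of_all _ fun x => by simp [Real.norm_eq_abs])
      · apply ae_of_all
        intro x
        show ‖f x * Gn x - φ x * Gn x‖ ≤ ‖g‖ * |f x - φ x|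
        have hrw : f x * Gn x - φ x * Gn x = (f x - φ x) * Gn x := by ring
        rw [hrw, Real.norm_eq_abs, abs_mul, mul_comm]
        exact mul_le_mul_of_nonneg_right (hGnb x) (abs_nonneg _)
    have heq : (∫ s in Set.Ioc (0:ℝ) 1, ‖g‖ * |f s - φ s|)
        = ‖g‖ * ∫ s in Set.Ioc (0:ℝ) 1, |f s - φ s| := integral_const_mul _ _
    have := mul_le_mul_of_nonneg_left hL1 hC
    linarith
  -- d2 : difference of the limits
  have d2 : |(∫ s in (0:ℝ)..1, φ s) * m - (∫ s in (0:ℝ)..1, f s) * m| ≤ ε' * ‖g‖ := by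
    have hdiff : (∫ s in (0:ℝ)..1, φ s) - (∫ s in (0:ℝ)..1, f s)
        = ∫ s in Set.Ioc (0:ℝ) 1, (φ s - f s) := by
      rw [intervalIntegral.integral_of_le zero_le_one, intervalIntegral.integral_of_le zero_le_one,
        ← integral_sub hφIoc hfIoc]
    have hb1 : |∫ s in Set.Ioc (0:ℝ) 1, (φ s - f s)| ≤ ε' := by
      have h := MeasureTheory.norm_integral_le_integral_norm (μ := volume.restrict (Set.Ioc (0:ℝ) 1))
        (f := fun s => φ s - f s)
      rw [Real.norm_eq_abs] at h
      have heqn : (∫ s in Set.Ioc (0:ℝ) 1, ‖φ s - f s‖) = ∫ s in Set.Ioc (0:ℝ) 1, |f s - φ s| := by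
        apply setIntegral_congr_fun measurableSet_Ioc
        intro x _
        show ‖φ x - f x‖ = |f x - φ x|
        rw [Real.norm_eq_abs, abs_sub_comm]
      rw [heqn] at h
      linarith
    have : (∫ s in (0:ℝ)..1, φ s) * m - (∫ s in (0:ℝ)..1, f s) * m
        = ((∫ s in Set.Ioc (0:ℝ) 1, (φ s - f s))) * m := by rw [← hdiff]; ring
    rw [this, abs_mul]
    exact mul_le_mul hb1 hmb (abs_nonneg _) hε'.le
  -- d3 : convergence of T_n φ
  have d3 := hN n hn
  rw [Real.dist_eq] at d3
  rw [Real.dist_eq]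
  -- express interval integrals as Ioc integrals
  have hTf : (∫ s in (0:ℝ)..1, f s * Gn s) = ∫ s in Set.Ioc (0:ℝ) 1, f s * Gn s :=
    intervalIntegral.integral_of_le zero_le_one
  have hTφ : (∫ s in (0:ℝ)..1, φ s * Gn s) = ∫ s in Set.Ioc (0:ℝ) 1, φ s * Gn s :=
    intervalIntegral.integral_of_le zero_le_one
  rw [hTφ] at d3
  rw [hTf]
  have htot1 := abs_sub_le (∫ s in Set.Ioc (0:ℝ) 1, f s * Gn s)
    (∫ s in Set.Ioc (0:ℝ) 1, φ s * Gn s) ((∫ s in (0:ℝ)..1, f s) * m)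
  have htot2 := abs_sub_le (∫ s in Set.Ioc (0:ℝ) 1, φ s * Gn s)
    ((∫ s in (0:ℝ)..1, φ s) * m) ((∫ s in (0:ℝ)..1, f s) * m)
  have hfin : ‖g‖ * ε' + ε' + ε' * ‖g‖ < ε := by
    have hmul : ε' * (2*‖g‖ + 2) = ε := div_mul_cancel₀ ε (by linarith)
    nlinarith
  linarith
end

section
/- Let X have a density and X_n = ⌊nX⌋/n. Then n(X − X_n) = {nX} converges in distribution to Uniform[0,1], and in particular X_n → X almost surely with |X − X_n| ≤ 1/n. -/
open MeasureTheory Filter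



section Aux

lemma bdd_meas_intervalIntegrable {f : ℝ → ℝ} (hf : Measurable f) {C : ℝ}
    (hC : ∀ t, |f t| ≤ C) (a b : ℝ) : IntervalIntegrable f volume a b := by
  rw [intervalIntegrable_iff]
  haveI : IsFiniteMeasure (volume.restrict (Set.uIoc a b)) :=
    ⟨by rw [Measure.restrict_apply_univ]; exact measure_Ioc_lt_top⟩
  exact (integrable_const C).mono' hf.aestronglyMeasurable
    (Filter.Eventually.of_forall fun t => by simpa [Real.norm_eq_abs] using hC t)

lemma inner_zero {h : ℝ → ℝ} (hper : Function.Periodic h 1)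
    (hzero : ∫ t in (0:ℝ)..1, h t = 0) {n : ℕ} (hn : 1 ≤ n) (y : ℝ) :
    ∫ s in Set.Ioc (0:ℝ) (1 / (n:ℝ)), h ((n:ℝ) * y - (n:ℝ) * s) = 0 := by
  have hn0 : (0:ℝ) < n := by exact_mod_cast hn
  rw [← intervalIntegral.integral_of_le (by positivity : (0:ℝ) ≤ 1 / (n:ℝ))]
  have h1 : ∫ s in (0:ℝ)..(1/(n:ℝ)), h ((n:ℝ)*y - (n:ℝ)*s)
      = ((n:ℝ))⁻¹ • ∫ t in ((n:ℝ)*0)..((n:ℝ)*(1/(n:ℝ))), h ((n:ℝ)*y - t) :=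
    intervalIntegral.integral_comp_mul_left (fun t => h ((n:ℝ)*y - t)) (ne_of_gt hn0)
  rw [h1, mul_zero, mul_one_div, div_self (ne_of_gt hn0),
    intervalIntegral.integral_comp_sub_left h ((n:ℝ)*y)]
  have h2 : ∫ x in ((n:ℝ)*y - 1)..((n:ℝ)*y - 0), h x = ∫ x in (0:ℝ)..1, h x := by
    have := hper.intervalIntegral_add_eq ((n:ℝ)*y - 1) 0
    simpa using this
  rw [h2, hzero, smul_zero]

lemma shift_L1_small {φ : ℝ → ℝ} (hφc : Continuous φ) (hφs : HasCompactSupport φ)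
    {ε : ℝ} (hε : 0 < ε) :
    ∃ δ > 0, ∀ s : ℝ, |s| ≤ δ → ∫ x, |φ x - φ (x + s)| ≤ ε := by
  obtain ⟨R, hR0, hR⟩ : ∃ R : ℝ, 0 ≤ R ∧ tsupport φ ⊆ Set.Icc (-R) R := by
    obtain ⟨R, hR⟩ := hφs.isBounded.subset_closedBall 0
    exact ⟨max R 0, le_max_right _ _, by
      refine hR.trans ?_
      rw [Real.closedBall_eq_Icc]
      apply Set.Icc_subset_Icc <;> simp [le_max_left, neg_le]
      ⟩
  have hz : Tendsto φ (cocompact ℝ) (nhds 0) := by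
    have hev : ∀ᶠ x in cocompact ℝ, φ x = 0 := by
      refine Filter.eventually_of_mem (Filter.mem_cocompact.mpr ⟨tsupport φ, hφs, subset_rfl⟩) ?_
      exact fun x hx => image_eq_zero_of_notMem_tsupport hx
    exact tendsto_const_nhds.congr' (by filter_upwards [hev] with x hx using hx.symm)
  have uc : UniformContinuous φ := hφc.uniformContinuous_of_tendsto_cocompact hz
  set ε' : ℝ := ε / (2*R + 3) with hε'
  have hε'0 : 0 < ε' := by positivity
  obtain ⟨δ, hδ0, hδ⟩ := Metric.uniformContinuous_iff.mp uc ε' hε'0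
  refine ⟨min (δ/2) 1, by positivity, fun s hs => ?_⟩
  have hs1 : |s| ≤ 1 := hs.trans (min_le_right _ _)
  have hsδ : |s| < δ := lt_of_le_of_lt (hs.trans (min_le_left _ _)) (by linarith)
  have hbd : ∀ x, |φ x - φ (x + s)| ≤ ε' := by
    intro x
    have := hδ (a := x) (b := x + s) (by
      rw [Real.dist_eq]
      have hxx : x - (x+s) = -s := by ring
      rw [hxx, abs_neg]; exact hsδ)
    rw [Real.dist_eq] at this
    exact this.le
  have hsupp : ∀ x, x ∉ Set.Icc (-(R+1)) (R+1) → |φ x - φ (x + s)| = 0 := by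
    intro x hx
    simp only [Set.mem_Icc, not_and_or, not_le] at hx
    have hx1 : x ∉ tsupport φ := by
      intro hmem; rcases hR hmem with ⟨h1, h2⟩
      rcases hx with hx | hx <;> linarith
    have hx2 : x + s ∉ tsupport φ := by
      intro hmem; rcases hR hmem with ⟨h1, h2⟩
      rcases abs_le.mp hs1 with ⟨hs1', hs2'⟩
      rcases hx with hx | hx <;> linarith
    rw [image_eq_zero_of_notMem_tsupport hx1, image_eq_zero_of_notMem_tsupport hx2, sub_zero, abs_zero]
  have heq : ∫ x, |φ x - φ (x + s)| = ∫ x in Set.Icc (-(R+1)) (R+1), |φ x - φ (x + s)| :=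
    (setIntegral_eq_integral_of_forall_compl_eq_zero hsupp).symm
  have hcont : Continuous fun x => |φ x - φ (x + s)| :=
    (hφc.sub (hφc.comp (continuous_id.add continuous_const))).abs
  have hle : ∫ x in Set.Icc (-(R+1)) (R+1), |φ x - φ (x + s)|
      ≤ ε' * (volume (Set.Icc (-(R+1)) (R+1))).toReal := by
    have := norm_setIntegral_le_of_norm_le_const (μ := volume)
      (s := Set.Icc (-(R+1)) (R+1)) (C := ε') (f := fun x => |φ x - φ (x + s)|)
      measure_Icc_lt_top (fun x _ => by simpa [Real.norm_eq_abs, abs_abs] using hbd x)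
    exact (le_abs_self _).trans (by rw [← Real.norm_eq_abs]; exact this)
  have hvol : (volume (Set.Icc (-(R+1)) (R+1))).toReal = 2*R + 2 := by
    rw [Real.volume_Icc, ENNReal.toReal_ofReal (by linarith)]; ring
  rw [heq]
  calc ∫ x in Set.Icc (-(R+1)) (R+1), |φ x - φ (x + s)| ≤ ε' * (2*R+2) := by rw [← hvol]; exact hle
  _ ≤ ε := by
      rw [hε', div_mul_eq_mul_div, div_le_iff₀ (by linarith)]
      nlinarith

end Aux

section Key

lemma key_cc {h : ℝ → ℝ} (hmeas : Measurable h) {C : ℝ} (hC : ∀ t, |h t| ≤ C)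
    (hper : Function.Periodic h 1) (hzero : ∫ t in (0:ℝ)..1, h t = 0)
    {φ : ℝ → ℝ} (hφc : Continuous φ) (hφs : HasCompactSupport φ) :
    Tendsto (fun n : ℕ => ∫ x, h ((n:ℝ) * x) * φ x) atTop (nhds 0) := by
  have hC0 : 0 ≤ C := (abs_nonneg _).trans (hC 0)
  have hφint : Integrable φ volume := hφc.integrable_of_hasCompactSupport hφs
  have hmul : ∀ (c : ℝ) (ψ : ℝ → ℝ), Integrable ψ volume →
      Integrable (fun x => h (c * x) * ψ x) volume := by
    intro c ψ hψ
    exact hψ.bdd_mul (hmeas.comp (measurable_id.const_mul c)).aestronglyMeasurable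
      (c := C) (Filter.Eventually.of_forall fun x => by simpa [Real.norm_eq_abs] using hC (c * x))
  rw [Metric.tendsto_atTop]
  intro ε hε
  have hε'0 : 0 < ε / (2*(C+1)) := by positivity
  obtain ⟨δ, hδ0, hδ⟩ := shift_L1_small hφc hφs hε'0
  obtain ⟨N0, hN0⟩ := exists_nat_gt (1/δ)
  refine ⟨max N0 1, fun n hn => ?_⟩
  have hn1 : 1 ≤ n := le_trans (le_max_right _ _) hn
  have hnn : (0:ℝ) < n := by exact_mod_cast hn1
  have hinv : 1 / (n:ℝ) ≤ δ := by
    have hNn : (N0:ℝ) ≤ n := by exact_mod_cast le_trans (le_max_left _ _) hn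
    rw [div_le_iff₀ hnn]
    have h1 : 1 < N0 * δ := by
      have := (div_lt_iff₀ hδ0).mp hN0
      linarith
    nlinarith
  set A : Set ℝ := Set.Ioc (0:ℝ) (1/(n:ℝ)) with hA
  haveI : IsFiniteMeasure (volume.restrict A) :=
    ⟨by rw [Measure.restrict_apply_univ]; exact measure_Ioc_lt_top⟩
  set F : ℝ × ℝ → ℝ := fun z => h ((n:ℝ) * z.2 - (n:ℝ) * z.1) * φ z.2 with hF
  have hFmeas : Measurable F :=
    (hmeas.comp ((measurable_snd.const_mul _).sub (measurable_fst.const_mul _))).mul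
      (hφc.measurable.comp measurable_snd)
  have hFint : Integrable F ((volume.restrict A).prod volume) := by
    have hdom : Integrable (fun z : ℝ × ℝ => C * |φ z.2|) ((volume.restrict A).prod volume) :=
      (integrable_const C).mul_prod hφint.abs
    refine hdom.mono' hFmeas.aestronglyMeasurable ?_
    refine Filter.Eventually.of_forall fun z => ?_
    rw [Real.norm_eq_abs, abs_mul]
    exact mul_le_mul_of_nonneg_right (hC _) (abs_nonneg _)
  set u : ℝ → ℝ := fun s => ∫ y, h ((n:ℝ) * y - (n:ℝ) * s) * φ y with hu
  have hswap : ∫ s in A, u s = ∫ y, (∫ s in A, h ((n:ℝ)*y - (n:ℝ)*s) * φ y) :=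
    integral_integral_swap (f := fun s y => h ((n:ℝ)*y - (n:ℝ)*s) * φ y) hFint
  have hinner : ∀ y : ℝ, (∫ s in A, h ((n:ℝ)*y - (n:ℝ)*s) * φ y) = 0 := by
    intro y
    rw [integral_mul_const, inner_zero hper hzero hn1 y, zero_mul]
  have hA0 : ∫ s in A, u s = 0 := by
    rw [hswap]; simp only [hinner, integral_zero]
  have huInt : Integrable u (volume.restrict A) := hFint.integral_prod_left
  have hu0 : u 0 = ∫ x, h ((n:ℝ)*x) * φ x := by simp [hu]
  have hut : ∀ s : ℝ, u s = ∫ x, h ((n:ℝ)*x) * φ (x + s) := by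
    intro s
    calc u s = ∫ x, (fun y => h ((n:ℝ)*y - (n:ℝ)*s) * φ y) (x + s) :=
          (integral_add_right_eq_self (fun y => h ((n:ℝ)*y - (n:ℝ)*s) * φ y) s).symm
      _ = ∫ x, h ((n:ℝ)*x) * φ (x + s) := by
          congr 1; funext x; simp only []; congr 2; ring
  have hbound : ∀ s ∈ A, ‖u 0 - u s‖ ≤ C * (ε/(2*(C+1))) := by
    intro s hsA
    have hs : |s| ≤ δ := by
      rcases hsA with ⟨hs1, hs2⟩
      rw [abs_of_pos hs1]; exact hs2.trans hinv
    rw [hu0, hut s]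
    have hint1 := hmul (n:ℝ) φ hφint
    have hint2 := hmul (n:ℝ) (fun x => φ (x + s)) (hφint.comp_add_right s)
    rw [← integral_sub hint1 hint2]
    have heq2 : ∀ x, h ((n:ℝ)*x) * φ x - h ((n:ℝ)*x) * φ (x+s)
        = h ((n:ℝ)*x) * (φ x - φ (x+s)) := fun x => by ring
    calc ‖∫ x, (h ((n:ℝ)*x) * φ x - h ((n:ℝ)*x) * φ (x+s))‖
        ≤ ∫ x, ‖h ((n:ℝ)*x) * φ x - h ((n:ℝ)*x) * φ (x+s)‖ := norm_integral_le_integral_norm _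
      _ = ∫ x, |h ((n:ℝ)*x)| * |φ x - φ (x+s)| := by
          congr 1; funext x; rw [heq2 x, Real.norm_eq_abs, abs_mul]
      _ ≤ ∫ x, C * |φ x - φ (x+s)| := by
          apply integral_mono_of_nonneg
          · exact Filter.Eventually.of_forall fun x => by positivity
          · exact ((hφint.sub (hφint.comp_add_right s)).abs.const_mul C)
          · exact Filter.Eventually.of_forall fun x =>
              mul_le_mul_of_nonneg_right (hC _) (abs_nonneg _)
      _ = C * ∫ x, |φ x - φ (x+s)| := integral_const_mul C _
      _ ≤ C * (ε/(2*(C+1))) := mul_le_mul_of_nonneg_left (hδ s hs) hC0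
  have hvA : (volume A).toReal = 1/(n:ℝ) := by
    rw [hA, Real.volume_Ioc, sub_zero, ENNReal.toReal_ofReal (by positivity)]
  have hdiff : ∫ s in A, (u 0 - u s) = (1/(n:ℝ)) * u 0 := by
    rw [integral_sub (integrable_const (u 0)) huInt, hA0, sub_zero, setIntegral_const,
      measureReal_def, hvA, smul_eq_mul]
  have hnorm : ‖∫ s in A, (u 0 - u s)‖ ≤ (C * (ε/(2*(C+1)))) * (volume A).toReal :=
    norm_setIntegral_le_of_norm_le_const measure_Ioc_lt_top hbound
  rw [hdiff, hvA] at hnorm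
  have hfinal : |u 0| ≤ C * (ε/(2*(C+1))) := by
    rw [Real.norm_eq_abs, abs_mul, abs_of_pos (by positivity : (0:ℝ) < 1/(n:ℝ)),
      mul_comm (C * (ε/(2*(C+1)))) (1/(n:ℝ))] at hnorm
    exact le_of_mul_le_mul_left hnorm (by positivity)
  rw [Real.dist_eq, sub_zero, ← hu0]
  calc |u 0| ≤ C * (ε/(2*(C+1))) := hfinal
    _ < ε := by
        rw [mul_div_assoc']
        rw [div_lt_iff₀ (by linarith)]
        nlinarith

lemma key_tendsto {h : ℝ → ℝ} (hmeas : Measurable h) {C : ℝ} (hC : ∀ t, |h t| ≤ C)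
    (hper : Function.Periodic h 1) (hzero : ∫ t in (0:ℝ)..1, h t = 0)
    {f : ℝ → ℝ} (hf : Integrable f volume) :
    Tendsto (fun n : ℕ => ∫ x, h ((n:ℝ) * x) * f x) atTop (nhds 0) := by
  have hC0 : 0 ≤ C := (abs_nonneg _).trans (hC 0)
  have hmul : ∀ (c : ℝ) (ψ : ℝ → ℝ), Integrable ψ volume →
      Integrable (fun x => h (c * x) * ψ x) volume := by
    intro c ψ hψ
    exact hψ.bdd_mul (hmeas.comp (measurable_id.const_mul c)).aestronglyMeasurable
      (c := C) (Filter.Eventually.of_forall fun x => by simpa [Real.norm_eq_abs] using hC (c * x))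
  rw [Metric.tendsto_atTop]
  intro ε hε
  have hε'0 : 0 < ε / (2*(C+1)) := by positivity
  obtain ⟨φ, hφs, hφnorm, hφc, hφmem⟩ :=
    (memLp_one_iff_integrable.mpr hf).exists_hasCompactSupport_eLpNorm_sub_le
      ENNReal.one_ne_top (ε := ENNReal.ofReal (ε / (2*(C+1))))
      (ENNReal.ofReal_pos.mpr hε'0).ne'
  have hφint : Integrable φ volume := hφc.integrable_of_hasCompactSupport hφs
  have hsubint : Integrable (fun x => f x - φ x) volume := hf.sub hφint
  have hL1 : ∫ x, |f x - φ x| ≤ ε / (2*(C+1)) := by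
    have hsubint' : Integrable (f - φ) volume := hf.sub hφint
    have h1 : ∫ x, |f x - φ x| = (eLpNorm (f - φ) 1 volume).toReal := by
      rw [eLpNorm_one_eq_lintegral_enorm,
        ← integral_norm_eq_lintegral_enorm hsubint'.aestronglyMeasurable]
      simp [Real.norm_eq_abs]
    rw [h1]
    calc (eLpNorm (f - φ) 1 volume).toReal
        ≤ (ENNReal.ofReal (ε / (2*(C+1)))).toReal :=
          ENNReal.toReal_mono ENNReal.ofReal_ne_top hφnorm
      _ = ε / (2*(C+1)) := ENNReal.toReal_ofReal hε'0.le
  obtain ⟨N, hN⟩ := Metric.tendsto_atTop.mp (key_cc hmeas hC hper hzero hφc hφs) (ε/2)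
    (by positivity)
  refine ⟨N, fun n hn => ?_⟩
  have hsplit : ∫ x, h ((n:ℝ)*x) * f x
      = (∫ x, h ((n:ℝ)*x) * (f x - φ x)) + ∫ x, h ((n:ℝ)*x) * φ x := by
    rw [← integral_add (hmul _ _ hsubint) (hmul _ _ hφint)]
    congr 1; funext x; ring
  have hb1 : |∫ x, h ((n:ℝ)*x) * (f x - φ x)| ≤ ε/2 := by
    calc |∫ x, h ((n:ℝ)*x) * (f x - φ x)| ≤ ∫ x, ‖h ((n:ℝ)*x) * (f x - φ x)‖ := by
          rw [← Real.norm_eq_abs]; exact norm_integral_le_integral_norm _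
      _ = ∫ x, |h ((n:ℝ)*x)| * |f x - φ x| := by
          congr 1; funext x; rw [Real.norm_eq_abs, abs_mul]
      _ ≤ ∫ x, C * |f x - φ x| := by
          apply integral_mono_of_nonneg
          · exact Filter.Eventually.of_forall fun x => by positivity
          · exact hsubint.abs.const_mul C
          · exact Filter.Eventually.of_forall fun x =>
              mul_le_mul_of_nonneg_right (hC _) (abs_nonneg _)
      _ = C * ∫ x, |f x - φ x| := integral_const_mul C _
      _ ≤ C * (ε / (2*(C+1))) := mul_le_mul_of_nonneg_left hL1 hC0
      _ ≤ ε/2 := by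
          rw [mul_div_assoc', div_le_iff₀ (by linarith)]
          nlinarith
  have hb2 : |∫ x, h ((n:ℝ)*x) * φ x| < ε/2 := by
    have := hN n hn
    rwa [Real.dist_eq, sub_zero] at this
  rw [Real.dist_eq, sub_zero, hsplit]
  calc |(∫ x, h ((n:ℝ)*x) * (f x - φ x)) + ∫ x, h ((n:ℝ)*x) * φ x|
      ≤ |∫ x, h ((n:ℝ)*x) * (f x - φ x)| + |∫ x, h ((n:ℝ)*x) * φ x| := abs_add_le _ _
    _ < ε := by linarith

end Key

/-- For `X` with a density and `Xₙ = ⌊nX⌋/n`: the pointwise bound `|X − Xₙ| ≤ 1/n`,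
almost sure convergence `Xₙ → X`, and `n(X − Xₙ) = {nX}` converges in distribution to
the uniform law on `[0,1]`. -/
theorem floor_approx_properties
    {Ω : Type*} [MeasurableSpace Ω] (P : Measure Ω) [IsProbabilityMeasure P]
    (X : Ω → ℝ) (hX : Measurable X) (hac : P.map X ≪ volume) :
    (∀ (n : ℕ), 0 < n → ∀ ω, |X ω - (⌊(n : ℝ) * X ω⌋ : ℝ) / n| ≤ 1 / n) ∧
    (∀ᵐ ω ∂P, Tendsto (fun n : ℕ => (⌊(n : ℝ) * X ω⌋ : ℝ) / n) atTop (nhds (X ω))) ∧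
    (∀ g : BoundedContinuousFunction ℝ ℝ,
      Tendsto (fun n : ℕ => ∫ ω, g (Int.fract ((n : ℝ) * X ω)) ∂P) atTop
        (nhds (∫ u in Set.Icc (0:ℝ) 1, g u))) := by
  have part1 : ∀ (n : ℕ), 0 < n → ∀ ω, |X ω - (⌊(n : ℝ) * X ω⌋ : ℝ) / n| ≤ 1 / n := by
    intro n hn ω
    have hn0 : (0:ℝ) < n := by exact_mod_cast hn
    have key : X ω - (⌊(n:ℝ) * X ω⌋ : ℝ) / n = Int.fract ((n:ℝ) * X ω) / n := by
      rw [← Int.self_sub_floor, sub_div, mul_div_cancel_left₀ _ hn0.ne']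
    rw [key, abs_of_nonneg (div_nonneg (Int.fract_nonneg _) hn0.le)]
    gcongr
    · exact (Int.fract_lt_one _).le
  refine ⟨part1, ?_, ?_⟩
  · refine Filter.Eventually.of_forall fun ω => ?_
    rw [tendsto_iff_dist_tendsto_zero]
    apply squeeze_zero' (f := fun n : ℕ => dist ((⌊(n:ℝ) * X ω⌋ : ℝ) / n) (X ω))
      (g := fun n : ℕ => 1 / (n:ℝ))
    · exact Filter.Eventually.of_forall fun n => dist_nonneg
    · filter_upwards [eventually_ge_atTop 1] with n hn
      rw [Real.dist_eq, abs_sub_comm]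
      exact part1 n hn ω
    · exact tendsto_one_div_atTop_nhds_zero_nat
  · intro g
    set μ : Measure ℝ := P.map X with hμ
    haveI : IsProbabilityMeasure μ := Measure.isProbabilityMeasure_map hX.aemeasurable
    set c : ℝ := ∫ u in Set.Icc (0:ℝ) 1, g u with hc
    set h : ℝ → ℝ := fun t => g (Int.fract t) - c with hh
    have hgm : Measurable fun t : ℝ => g (Int.fract t) :=
      g.continuous.measurable.comp measurable_fract
    have hmeas_h : Measurable h := hgm.sub measurable_const
    have hgb : ∀ t : ℝ, |g (Int.fract t)| ≤ ‖g‖ := fun t => by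
      rw [← Real.norm_eq_abs]; exact g.norm_coe_le_norm _
    have hCb : ∀ t, |h t| ≤ ‖g‖ + |c| := by
      intro t
      calc |h t| ≤ |g (Int.fract t)| + |c| := abs_sub _ _
        _ ≤ ‖g‖ + |c| := by have := hgb t; linarith
    have hper : Function.Periodic h 1 := by
      intro t; simp [hh, Int.fract_add_one]
    have hzero : ∫ t in (0:ℝ)..1, h t = 0 := by
      have hgi : IntervalIntegrable (fun t : ℝ => g (Int.fract t)) volume 0 1 :=
        bdd_meas_intervalIntegrable hgm hgb 0 1
      show ∫ t in (0:ℝ)..1, (g (Int.fract t) - c) = 0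
      rw [intervalIntegral.integral_sub hgi (intervalIntegrable_const)]
      have h1 : ∫ t in (0:ℝ)..1, g (Int.fract t) = ∫ t in (0:ℝ)..1, g t := by
        apply intervalIntegral.integral_congr_ae
        have hone : ∀ᵐ t : ℝ ∂volume, t ≠ 1 := by
          rw [ae_iff]
          have : {t : ℝ | ¬ t ≠ 1} = {1} := by ext t; simp
          rw [this]
          exact measure_singleton 1
        filter_upwards [hone] with t ht htm
        rw [Set.uIoc_of_le (zero_le_one), Set.mem_Ioc] at htm
        congr 1
        exact Int.fract_eq_self.mpr ⟨htm.1.le, lt_of_le_of_ne htm.2 ht⟩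
      rw [h1, intervalIntegral.integral_of_le zero_le_one, intervalIntegral.integral_const,
        sub_zero, one_smul, hc, MeasureTheory.integral_Icc_eq_integral_Ioc, sub_self]
    set ρ : ℝ → ℝ := fun x => (μ.rnDeriv volume x).toReal with hρ
    have hρint : Integrable ρ volume := Measure.integrable_toReal_rnDeriv
    have hρone : ∫ x, ρ x = 1 := by
      rw [hρ, Measure.integral_toReal_rnDeriv hac]
      simp
    have hcv : ∀ n : ℕ, ∫ ω, g (Int.fract ((n : ℝ) * X ω)) ∂P
        = (∫ x, h ((n:ℝ) * x) * ρ x) + c := by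
      intro n
      have hm1 : Measurable fun x : ℝ => g (Int.fract ((n:ℝ) * x)) :=
        hgm.comp (measurable_id.const_mul _)
      have step1 : ∫ ω, g (Int.fract ((n : ℝ) * X ω)) ∂P
          = ∫ x, g (Int.fract ((n:ℝ) * x)) ∂μ :=
        (integral_map hX.aemeasurable hm1.aestronglyMeasurable).symm
      have step2 : ∫ x, g (Int.fract ((n:ℝ) * x)) ∂μ
          = ∫ x, ρ x • g (Int.fract ((n:ℝ) * x)) ∂volume :=
        (MeasureTheory.integral_rnDeriv_smul hac).symm
      have hint1 : Integrable (fun x => h ((n:ℝ) * x) * ρ x) volume :=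
        hρint.bdd_mul (hmeas_h.comp (measurable_id.const_mul _)).aestronglyMeasurable
          (c := ‖g‖ + |c|) (Filter.Eventually.of_forall fun x => by simpa [Real.norm_eq_abs] using hCb ((n:ℝ)*x))
      have hint2 : Integrable (fun x => c * ρ x) volume := hρint.const_mul c
      have step3 : ∫ x, ρ x • g (Int.fract ((n:ℝ) * x)) ∂volume
          = (∫ x, h ((n:ℝ) * x) * ρ x) + ∫ x, c * ρ x := by
        rw [← integral_add hint1 hint2]
        congr 1; funext x
        simp only [hh, smul_eq_mul]
        ring
      rw [step1, step2, step3, integral_const_mul, hρone, mul_one]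
    have hkey := key_tendsto hmeas_h hCb hper hzero hρint
    have := hkey.add_const c
    rw [zero_add] at this
    exact Tendsto.congr (fun n => (hcv n).symm) this
end

section
/- Let f ∈ L¹(ℝ) with ∫ f = 1, f ≥ 0. Then for every interval [a,b] ⊆ [0,1], ∫_{x : {nx} ∈ [a,b]} f(x) dx → b − a as n → ∞. -/
open MeasureTheory Filter

set_option maxHeartbeats 1000000

namespace DFIT

open Set

lemma A_ae_eq {a b : ℝ} (ha : 0 ≤ a) (hb : b ≤ 1) {n : ℕ} (hn : 1 ≤ n) :
    {x : ℝ | Int.fract ((n : ℝ) * x) ∈ Set.Icc a b}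
      =ᵐ[volume] ⋃ k : ℤ, Icc (((k : ℝ) + a) / n) (((k : ℝ) + b) / n) := by
  have hn0 : (0:ℝ) < n := by exact_mod_cast Nat.pos_of_ne_zero (by omega)
  have hsub : {x : ℝ | Int.fract ((n : ℝ) * x) ∈ Set.Icc a b}
      ⊆ ⋃ k : ℤ, Icc (((k : ℝ) + a) / n) (((k : ℝ) + b) / n) := by
    intro x hx
    obtain ⟨h1, h2⟩ := hx
    have hf : Int.fract ((n:ℝ) * x) = (n:ℝ) * x - ⌊(n:ℝ)*x⌋ := rfl
    refine Set.mem_iUnion.2 ⟨⌊(n:ℝ)*x⌋, ?_, ?_⟩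
    · rw [div_le_iff₀ hn0]
      rw [hf] at h1; nlinarith [h1]
    · rw [le_div_iff₀ hn0]
      rw [hf] at h2; nlinarith [h2]
  rw [MeasureTheory.ae_eq_set]
  constructor
  · rw [Set.diff_eq_empty.2 hsub]; simp
  · refine measure_mono_null ?_ ((Set.countable_range (fun k : ℤ => ((k:ℝ)+1)/n)).measure_zero _)
    rintro x ⟨hxU, hxA⟩
    obtain ⟨k, hk1, hk2⟩ := Set.mem_iUnion.1 hxU
    rw [div_le_iff₀ hn0] at hk1
    rw [le_div_iff₀ hn0] at hk2
    by_cases h : (n:ℝ)*x < k+1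
    · exfalso
      apply hxA
      have hfl : ⌊(n:ℝ)*x⌋ = k := Int.floor_eq_iff.2 ⟨by nlinarith, by push_cast; nlinarith⟩
      have hf : Int.fract ((n:ℝ) * x) = (n:ℝ) * x - ⌊(n:ℝ)*x⌋ := rfl
      show Int.fract ((n:ℝ) * x) ∈ Icc a b
      rw [hf, hfl]
      constructor <;> nlinarith
    · have hx1 : (n:ℝ)*x = k+1 := le_antisymm (by nlinarith) (not_lt.1 h)
      refine ⟨k, ?_⟩
      field_simp
      linarith [hx1]

lemma est_gen {g : ℝ → ℝ} {s : Set ℝ} (hgi : IntegrableOn g s volume) {len p ε : ℝ}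
    (hvol : volume s = ENNReal.ofReal len) (hlen : 0 ≤ len)
    (hbd : ∀ x ∈ s, |g x - p| ≤ ε) :
    |(∫ x in s, g x) - len * p| ≤ len * ε := by
  have hμs : volume s < ⊤ := by rw [hvol]; exact ENNReal.ofReal_lt_top
  have h1 : (∫ x in s, g x) - len * p = ∫ x in s, (g x - p) := by
    rw [integral_sub hgi (integrableOn_const hμs.ne)]
    rw [setIntegral_const, measureReal_def, hvol, ENNReal.toReal_ofReal hlen, smul_eq_mul]
  rw [h1]
  have := norm_setIntegral_le_of_norm_le_const (μ := volume) (s := s) (C := ε) hμs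
    (fun x hx => by rw [Real.norm_eq_abs]; exact hbd x hx)
  rw [Real.norm_eq_abs, measureReal_def, hvol, ENNReal.toReal_ofReal hlen] at this
  linarith [this]

lemma cont_case {g : ℝ → ℝ} (hgc : Continuous g) (hgs : HasCompactSupport g)
    {a b : ℝ} (ha : 0 ≤ a) (hab : a ≤ b) (hb : b ≤ 1) (hba : b - a < 1) :
    Tendsto (fun n : ℕ => ∫ x in {x : ℝ | Int.fract ((n : ℝ) * x) ∈ Set.Icc a b}, g x)
      atTop (nhds ((b - a) * ∫ x, g x)) := by
  have hgi : Integrable g volume := hgc.integrable_of_hasCompactSupport hgs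
  obtain ⟨R, hR1, hR⟩ : ∃ R : ℝ, 1 ≤ R ∧ ∀ x, x ∉ Icc (-R) R → g x = 0 := by
    obtain ⟨R, hRb⟩ := hgs.isBounded.subset_closedBall 0
    refine ⟨max R 1, le_max_right _ _, fun x hx => ?_⟩
    apply image_eq_zero_of_notMem_tsupport
    intro hxs
    have := hRb hxs
    rw [Real.closedBall_eq_Icc, zero_sub, zero_add] at this
    exact hx ⟨le_trans (neg_le_neg (le_max_left R 1)) this.1, le_trans this.2 (le_max_left R 1)⟩
  set Q : ℕ := ⌈R + 1⌉₊ with hQdef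
  have hQR : R + 1 ≤ (Q : ℝ) := Nat.le_ceil _
  have hQ1 : (1:ℝ) ≤ (Q:ℝ) := by linarith
  rw [Metric.tendsto_atTop]
  intro ε hε
  set ε' : ℝ := ε / (4 * Q + 1) with hε'def
  have hε'pos : 0 < ε' := by positivity
  obtain ⟨δ, hδpos, hδ⟩ := Metric.uniformContinuous_iff.1
    (hgs.uniformContinuous_of_continuous hgc) ε' hε'pos
  refine ⟨max 1 (⌊1/δ⌋₊ + 1), fun n hn => ?_⟩
  have hn1 : 1 ≤ n := le_trans (le_max_left _ _) hn
  have hn0 : (0:ℝ) < n := by exact_mod_cast Nat.pos_of_ne_zero (by omega)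
  have hnδ : 1 / (n:ℝ) < δ := by
    have h1 : (⌊1/δ⌋₊ + 1 : ℕ) ≤ n := le_trans (le_max_right _ _) hn
    have h2 : 1/δ < (n:ℝ) := lt_of_lt_of_le (Nat.lt_floor_add_one _) (by exact_mod_cast h1)
    rw [div_lt_iff₀ hn0]
    rw [div_lt_iff₀ hδpos] at h2
    nlinarith
  set c : ℕ → ℤ := fun i => (i : ℤ) - (Q * n : ℕ) with hcdef
  set u : ℕ → ℝ := fun i => ((c i : ℝ)) / n with hudef
  set m : ℕ := 2 * (Q * n) with hmdef
  have hcast : ∀ i : ℕ, (c i : ℝ) = (i : ℝ) - (Q : ℝ) * n := by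
    intro i; simp only [hcdef]; push_cast; ring
  have huv : ∀ i : ℕ, u i = ((i:ℝ) - (Q:ℝ)*n)/n := fun i => by
    simp only [hudef, hcast]
  have hu_le : ∀ i : ℕ, u i ≤ u (i+1) := by
    intro i
    rw [huv, huv, div_le_div_iff₀ hn0 hn0]
    push_cast; nlinarith
  have hu0v : u 0 = -(Q:ℝ) := by rw [huv]; field_simp; simp
  have humv : u m = (Q:ℝ) := by
    rw [huv, hmdef]; push_cast; field_simp; ring
  -- Step 1: replace the fract-set by the union of intervals
  have E1 : ∫ x in {x : ℝ | Int.fract ((n : ℝ) * x) ∈ Set.Icc a b}, g x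
      = ∫ x in ⋃ k : ℤ, Icc (((k:ℝ)+a)/n) (((k:ℝ)+b)/n), g x :=
    setIntegral_congr_set (A_ae_eq ha hb hn1)
  -- Step 2: restrict to finitely many intervals
  have hmeasU : MeasurableSet (⋃ k : ℤ, Icc (((k:ℝ)+a)/n) (((k:ℝ)+b)/n)) :=
    MeasurableSet.iUnion fun k => measurableSet_Icc
  have E2 : ∫ x in ⋃ k : ℤ, Icc (((k:ℝ)+a)/n) (((k:ℝ)+b)/n), g x
      = ∫ x in ⋃ i ∈ Finset.range m, Icc (((c i:ℝ)+a)/n) (((c i:ℝ)+b)/n), g x := by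
    apply setIntegral_eq_of_subset_of_forall_diff_eq_zero hmeasU
    · exact Set.iUnion₂_subset fun i _ =>
        Set.subset_iUnion (fun k : ℤ => Icc (((k:ℝ)+a)/n) (((k:ℝ)+b)/n)) (c i)
    · rintro x ⟨hxU, hxS⟩
      obtain ⟨k, hk⟩ := Set.mem_iUnion.1 hxU
      by_cases hkr : -((Q*n : ℕ) : ℤ) ≤ k ∧ k < ((Q*n : ℕ) : ℤ)
      · exfalso
        set i : ℕ := (k + ((Q*n : ℕ) : ℤ)).toNat with hidef
        have hiz : (i : ℤ) = k + ((Q*n : ℕ) : ℤ) := Int.toNat_of_nonneg (by omega)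
        have him : i < m := by
          have : (m : ℤ) = 2 * ((Q*n : ℕ) : ℤ) := by rw [hmdef]; push_cast; ring
          omega
        have hci : c i = k := by simp only [hcdef]; omega
        refine hxS (Set.mem_biUnion (Finset.mem_range.2 him) ?_)
        rw [hci]; exact hk
      · apply hR
        intro hmem
        rcases le_or_gt (-((Q*n : ℕ) : ℤ)) k with hk2 | hk2
        · have hk3 : ((Q*n : ℕ) : ℤ) ≤ k := by omega
          have h1 : ((Q:ℝ)*n) ≤ (k:ℝ) := by
            calc ((Q:ℝ)*n) = (((Q*n:ℕ):ℤ):ℝ) := by push_cast; ring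
              _ ≤ k := by exact_mod_cast hk3
          have h2 : ((k:ℝ)+a)/n ≤ x := hk.1
          have h3 : (Q:ℝ) ≤ ((k:ℝ)+a)/n := by rw [le_div_iff₀ hn0]; nlinarith
          have h4 : x ≤ R := hmem.2
          nlinarith
        · -- k < -(Qn) so k ≤ -Qn - 1
          have h1 : (k:ℝ) ≤ -((Q:ℝ)*n) - 1 := by
            have : k ≤ -((Q*n : ℕ) : ℤ) - 1 := by omega
            calc (k:ℝ) ≤ ((-((Q*n : ℕ) : ℤ) - 1 : ℤ) : ℝ) := by exact_mod_cast this
              _ = -((Q:ℝ)*n) - 1 := by push_cast; ring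
          have h2 : x ≤ ((k:ℝ)+b)/n := hk.2
          have h3 : ((k:ℝ)+b)/n ≤ -(Q:ℝ) := by rw [div_le_iff₀ hn0]; nlinarith
          have h4 : -R ≤ x := hmem.1
          nlinarith
  -- Step 3: integral over finite disjoint union is a sum
  have hdisj : (↑(Finset.range m) : Set ℕ).Pairwise
      (Function.onFun Disjoint fun i => Icc (((c i:ℝ)+a)/n) (((c i:ℝ)+b)/n)) := by
    intro i _ j _ hij
    simp only [Function.onFun]
    refine Set.disjoint_left.2 fun x hxi hxj => hij ?_
    have h1 : (c i:ℝ) + a ≤ x * n := (div_le_iff₀ hn0).1 hxi.1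
    have h2 : x * n ≤ (c i:ℝ) + b := (le_div_iff₀ hn0).1 hxi.2
    have h3 : (c j:ℝ) + a ≤ x * n := (div_le_iff₀ hn0).1 hxj.1
    have h4 : x * n ≤ (c j:ℝ) + b := (le_div_iff₀ hn0).1 hxj.2
    have h5 : |((c i - c j : ℤ) : ℝ)| < 1 := by
      push_cast; rw [abs_lt]; constructor <;> linarith
    have h6 : c i = c j := by
      have h7 : |c i - c j| < 1 := by exact_mod_cast (by rwa [← Int.cast_abs] at h5 : ((|c i - c j| : ℤ) : ℝ) < 1)
      rw [abs_lt] at h7; omega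
    simp only [hcdef] at h6; omega
  have E3 : ∫ x in ⋃ i ∈ Finset.range m, Icc (((c i:ℝ)+a)/n) (((c i:ℝ)+b)/n), g x
      = ∑ i ∈ Finset.range m, ∫ x in Icc (((c i:ℝ)+a)/n) (((c i:ℝ)+b)/n), g x :=
    integral_biUnion_finset _ (fun i _ => measurableSet_Icc) hdisj (fun i _ => hgi.integrableOn)
  -- Step 4: total integral as a sum over adjacent intervals
  have E4 : ∫ x, g x = ∑ i ∈ Finset.range m, ∫ x in Ioc (u i) (u (i+1)), g x := by
    have h0 : ∫ x in Ioc (u 0) (u m), g x = ∫ x, g x := by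
      apply setIntegral_eq_integral_of_forall_compl_eq_zero
      intro x hx
      apply hR
      intro hmem
      rw [Set.mem_Ioc] at hx; push_neg at hx
      rcases le_or_gt x (u 0) with h | h
      · rw [hu0v] at h; have := hmem.1; nlinarith
      · have := hx h; rw [humv] at this; have := hmem.2; nlinarith [hx h]
    have h1 : ∀ k < m, IntervalIntegrable g volume (u k) (u (k+1)) :=
      fun k _ => hgi.intervalIntegrable
    have h2 := intervalIntegral.sum_integral_adjacent_intervals (μ := volume) (a := u) h1
    have h0m : u 0 ≤ u m := by rw [hu0v, humv]; linarith
    rw [← h0, ← intervalIntegral.integral_of_le h0m, ← h2]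
    exact Finset.sum_congr rfl fun i _ => intervalIntegral.integral_of_le (hu_le i)
  -- per-interval estimate
  have key : ∀ i ∈ Finset.range m,
      |(∫ x in Icc (((c i:ℝ)+a)/n) (((c i:ℝ)+b)/n), g x)
        - (b-a) * ∫ x in Ioc (u i) (u (i+1)), g x| ≤ 2 * ε' / n := by
    intro i _
    have hclose : ∀ x : ℝ, u i ≤ x → x ≤ u i + 1/n → |g x - g (u i)| ≤ ε' := by
      intro x h1 h2
      have h1n : (0:ℝ) < 1/n := by positivity
      have hd : dist x (u i) < δ := by
        rw [Real.dist_eq]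
        calc |x - u i| ≤ 1/n := by rw [abs_le]; constructor <;> [linarith; linarith]
          _ < δ := hnδ
      have h3 := hδ hd
      rw [Real.dist_eq] at h3
      exact h3.le
    have hui : u i = (c i : ℝ)/n := by rw [hudef]
    have hu1 : u (i+1) = u i + 1/n := by
      rw [huv, huv]; push_cast; field_simp; ring
    have est1 : |(∫ x in Icc (((c i:ℝ)+a)/n) (((c i:ℝ)+b)/n), g x) - ((b-a)/n) * g (u i)|
        ≤ ((b-a)/n) * ε' := by
      apply est_gen hgi.integrableOn
      · rw [Real.volume_Icc]; congr 1; ring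
      · have hba0 : (0:ℝ) ≤ b - a := by linarith
        positivity
      · intro x hx
        refine hclose x ?_ ?_
        · rw [hui]; calc (c i : ℝ)/n ≤ ((c i:ℝ)+a)/n := by gcongr <;> linarith
            _ ≤ x := hx.1
        · rw [hui]; calc x ≤ ((c i:ℝ)+b)/n := hx.2
            _ ≤ (c i:ℝ)/n + 1/n := by rw [← add_div]; gcongr <;> linarith
    have est2 : |(∫ x in Ioc (u i) (u (i+1)), g x) - (1/n) * g (u i)| ≤ (1/n) * ε' := by
      apply est_gen hgi.integrableOn
      · rw [Real.volume_Ioc, hu1]; congr 1; ring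
      · positivity
      · intro x hx
        exact hclose x hx.1.le (by rw [← hu1]; exact hx.2)
    have hident : (∫ x in Icc (((c i:ℝ)+a)/n) (((c i:ℝ)+b)/n), g x)
          - (b-a) * ∫ x in Ioc (u i) (u (i+1)), g x
        = ((∫ x in Icc (((c i:ℝ)+a)/n) (((c i:ℝ)+b)/n), g x) - ((b-a)/n) * g (u i))
          - (b-a) * ((∫ x in Ioc (u i) (u (i+1)), g x) - (1/n) * g (u i)) := by
      field_simp; ring
    rw [hident]
    have hba0 : (0:ℝ) ≤ b - a := by linarith
    calc |((∫ x in Icc (((c i:ℝ)+a)/n) (((c i:ℝ)+b)/n), g x) - ((b-a)/n) * g (u i))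
          - (b-a) * ((∫ x in Ioc (u i) (u (i+1)), g x) - (1/n) * g (u i))|
        ≤ |(∫ x in Icc (((c i:ℝ)+a)/n) (((c i:ℝ)+b)/n), g x) - ((b-a)/n) * g (u i)|
          + |(b-a) * ((∫ x in Ioc (u i) (u (i+1)), g x) - (1/n) * g (u i))| := abs_sub _ _
      _ = |(∫ x in Icc (((c i:ℝ)+a)/n) (((c i:ℝ)+b)/n), g x) - ((b-a)/n) * g (u i)|
          + (b-a) * |(∫ x in Ioc (u i) (u (i+1)), g x) - (1/n) * g (u i)| := by
            rw [abs_mul, abs_of_nonneg hba0]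
      _ ≤ ((b-a)/n) * ε' + (b-a) * ((1/n) * ε') :=
            add_le_add est1 (mul_le_mul_of_nonneg_left est2 hba0)
      _ ≤ (1/n) * ε' + 1 * ((1/n) * ε') := by gcongr <;> linarith
      _ = 2 * ε' / n := by ring
  -- total estimate
  have habs : |(∫ x in {x : ℝ | Int.fract ((n : ℝ) * x) ∈ Set.Icc a b}, g x)
      - (b-a) * ∫ x, g x| ≤ 4 * Q * ε' := by
    rw [E1, E2, E3, E4, Finset.mul_sum, ← Finset.sum_sub_distrib]
    calc |∑ i ∈ Finset.range m, ((∫ x in Icc (((c i:ℝ)+a)/n) (((c i:ℝ)+b)/n), g x)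
            - (b-a) * ∫ x in Ioc (u i) (u (i+1)), g x)|
        ≤ ∑ i ∈ Finset.range m, |(∫ x in Icc (((c i:ℝ)+a)/n) (((c i:ℝ)+b)/n), g x)
            - (b-a) * ∫ x in Ioc (u i) (u (i+1)), g x| := Finset.abs_sum_le_sum_abs _ _
      _ ≤ ∑ _i ∈ Finset.range m, 2 * ε' / n := Finset.sum_le_sum key
      _ = m * (2 * ε' / n) := by rw [Finset.sum_const, Finset.card_range, nsmul_eq_mul]
      _ = 4 * Q * ε' := by rw [hmdef]; push_cast; field_simp; ring
  rw [Real.dist_eq]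
  calc |(∫ x in {x : ℝ | Int.fract ((n : ℝ) * x) ∈ Set.Icc a b}, g x)
      - (b-a) * ∫ x, g x| ≤ 4 * Q * ε' := habs
    _ = (4*Q/(4*Q+1)) * ε := by rw [hε'def]; ring
    _ < 1 * ε := by
        apply mul_lt_mul_of_pos_right _ hε
        rw [div_lt_one (by positivity)]; linarith
    _ = ε := one_mul ε

end DFIT

open DFIT Set in
/-- Measure-theoretic core of the arbitrary functions principle: for a probability
density `f` on `ℝ` and `[a,b] ⊆ [0,1]`, `∫_{ {nx} ∈ [a,b] } f(x) dx → b − a`. -/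
theorem density_fract_interval_tendsto
    (f : ℝ → ℝ) (hfm : Measurable f) (hf0 : ∀ x, 0 ≤ f x)
    (hf1 : ∫ x, f x = 1) (hfi : Integrable f volume)
    (a b : ℝ) (ha : 0 ≤ a) (hab : a ≤ b) (hb : b ≤ 1) :
    Tendsto
      (fun n : ℕ => ∫ x in {x : ℝ | Int.fract ((n : ℝ) * x) ∈ Set.Icc a b}, f x)
      atTop (nhds (b - a)) := by
  by_cases hcase : a = 0 ∧ b = 1
  · obtain ⟨rfl, rfl⟩ := hcase
    have huniv : ∀ n : ℕ, {x : ℝ | Int.fract ((n:ℝ)*x) ∈ Set.Icc (0:ℝ) 1} = Set.univ :=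
      fun n => Set.eq_univ_of_forall fun x => ⟨Int.fract_nonneg _, (Int.fract_lt_one _).le⟩
    simp only [huniv, Measure.restrict_univ, hf1]
    simpa using tendsto_const_nhds
  · have hba : b - a < 1 := by
      rcases lt_or_eq_of_le (by linarith : b - a ≤ 1) with h | h
      · exact h
      · exact absurd ⟨by linarith, by linarith⟩ hcase
    rw [Metric.tendsto_atTop]
    intro ε hε
    have hε4 : (ENNReal.ofReal (ε/4)) ≠ 0 := by
      simp only [ne_eq, ENNReal.ofReal_eq_zero, not_le]
      linarith
    obtain ⟨g, hgs, hgnorm, hgc, hgmem⟩ :=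
      MeasureTheory.MemLp.exists_hasCompactSupport_eLpNorm_sub_le (p := 1) (μ := volume)
        ENNReal.one_ne_top (memLp_one_iff_integrable.2 hfi) hε4
    have hgint : Integrable g volume := memLp_one_iff_integrable.1 hgmem
    have hfg : ∫ x, |f x - g x| ≤ ε/4 := by
      have h1 : eLpNorm (f - g) 1 volume = ENNReal.ofReal (∫ x, |f x - g x|) := by
        rw [eLpNorm_one_eq_lintegral_enorm,
          ← ofReal_integral_norm_eq_lintegral_enorm (hfi.sub hgint)]
        simp [Real.norm_eq_abs]
      rw [h1] at hgnorm
      have h2 := (ENNReal.ofReal_le_ofReal_iff (by linarith)).1 hgnorm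
      exact h2
    have hgtendsto := cont_case hgc hgs ha hab hb hba
    rw [Metric.tendsto_atTop] at hgtendsto
    obtain ⟨N, hN⟩ := hgtendsto (ε/4) (by linarith)
    refine ⟨N, fun n hn => ?_⟩
    have h2 := hN n hn
    rw [Real.dist_eq] at h2 ⊢
    set S := {x : ℝ | Int.fract ((n:ℝ)*x) ∈ Set.Icc a b} with hS
    have p1 : |(∫ x in S, f x) - (∫ x in S, g x)| ≤ ε/4 := by
      rw [← integral_sub hfi.integrableOn hgint.integrableOn]
      calc |∫ x in S, (f x - g x)| ≤ ∫ x in S, |f x - g x| := by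
            simpa [Real.norm_eq_abs] using
              norm_integral_le_integral_norm (μ := volume.restrict S) (fun x => f x - g x)
        _ ≤ ∫ x, |f x - g x| :=
            setIntegral_le_integral (hfi.sub hgint).abs
              (Filter.Eventually.of_forall fun x => abs_nonneg _)
        _ ≤ ε/4 := hfg
    have p3 : |(b-a) * (∫ x, g x) - (b-a)| ≤ ε/4 := by
      have h3 : |(∫ x, g x) - 1| ≤ ε/4 := by
        rw [← hf1, ← integral_sub hgint hfi]
        calc |∫ x, (g x - f x)| ≤ ∫ x, |g x - f x| := by
              simpa [Real.norm_eq_abs] using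
                norm_integral_le_integral_norm (μ := volume) (fun x => g x - f x)
          _ = ∫ x, |f x - g x| := by simp [abs_sub_comm]
          _ ≤ ε/4 := hfg
      have hrw : (b-a) * (∫ x, g x) - (b-a) = (b-a) * ((∫ x, g x) - 1) := by ring
      calc |(b-a) * (∫ x, g x) - (b-a)| = (b-a) * |(∫ x, g x) - 1| := by
            rw [hrw, abs_mul, abs_of_nonneg (by linarith : (0:ℝ) ≤ b - a)]
        _ ≤ 1 * (ε/4) := by
            apply mul_le_mul (by linarith) h3 (abs_nonneg _) (by norm_num)
        _ = ε/4 := one_mul _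
    calc |(∫ x in S, f x) - (b-a)|
        ≤ |(∫ x in S, f x) - (b-a) * (∫ x, g x)| + |(b-a) * (∫ x, g x) - (b-a)| :=
          abs_sub_le _ _ _
      _ ≤ (|(∫ x in S, f x) - (∫ x in S, g x)| + |(∫ x in S, g x) - (b-a) * (∫ x, g x)|)
          + |(b-a) * (∫ x, g x) - (b-a)| := by
            gcongr
            exact abs_sub_le _ _ _
      _ < ε := by linarith
end
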